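/- arXiv:1212.4298 — 3 statements merged into one kernel-verified Lean document; each statement's English description precedes it below -/
import Mathlib

section
/- Let G be a finite simple graph that is 3K₁-free and K₄-free. Then the chromatic number of G satisfies χ(G) ≤ 4. -/
namespace ChromK4

open SimpleGraph

variable {V : Type*} {G : SimpleGraph V}

lemma no_tri (h3 : Gᶜ.CliqueFree 3) {u v w : V} (h1 : Gᶜ.Adj u v) (h2 : Gᶜ.Adj u w)
    (h12 : Gᶜ.Adj v w) : False := by
  classical
  exact h3 {u, v, w} (SimpleGraph.is3Clique_triple_iff.mpr ⟨h1, h2, h12⟩)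

lemma no_indep4 (h4 : G.CliqueFree 4) {p q r s : V}
    (npq : p ≠ q) (npr : p ≠ r) (nps : p ≠ s) (nqr : q ≠ r) (nqs : q ≠ s) (nrs : r ≠ s)
    (hpq : ¬Gᶜ.Adj p q) (hpr : ¬Gᶜ.Adj p r) (hps : ¬Gᶜ.Adj p s)
    (hqr : ¬Gᶜ.Adj q r) (hqs : ¬Gᶜ.Adj q s) (hrs : ¬Gᶜ.Adj r s) : False := by
  classical
  have adj : ∀ a b : V, a ≠ b → ¬Gᶜ.Adj a b → G.Adj a b := by
    intro a b hne hn
    by_contra hna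
    exact hn ((SimpleGraph.compl_adj G a b).mpr ⟨hne, hna⟩)
  have apq := adj p q npq hpq
  have apr := adj p r npr hpr
  have aps := adj p s nps hps
  have aqr := adj q r nqr hqr
  have aqs := adj q s nqs hqs
  have ars := adj r s nrs hrs
  apply h4 {p, q, r, s}
  rw [SimpleGraph.isNClique_iff]
  constructor
  · intro z hz z' hz' hzz'
    simp only [Finset.coe_insert, Set.mem_insert_iff, Finset.coe_singleton,
      Set.mem_singleton_iff] at hz hz'
    rcases hz with rfl | rfl | rfl | rfl <;> rcases hz' with rfl | rfl | rfl | rfl <;>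
      first
        | exact absurd rfl hzz'
        | exact apq | exact apq.symm | exact apr | exact apr.symm
        | exact aps | exact aps.symm | exact aqr | exact aqr.symm
        | exact aqs | exact aqs.symm | exact ars | exact ars.symm
  · rw [Finset.card_insert_of_notMem (by simp [npq, npr, nps]),
      Finset.card_insert_of_notMem (by simp [nqr, nqs]),
      Finset.card_insert_of_notMem (by simp [nrs]), Finset.card_singleton]

lemma three_of_card {s : Finset V} (h : 3 ≤ s.card) :
    ∃ u1 u2 u3 : V, u1 ∈ s ∧ u2 ∈ s ∧ u3 ∈ s ∧ u1 ≠ u2 ∧ u1 ≠ u3 ∧ u2 ≠ u3 := by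
  classical
  obtain ⟨t, hts, htc⟩ := Finset.exists_subset_card_eq h
  obtain ⟨x, y, z, hxy, hxz, hyz, rfl⟩ := Finset.card_eq_three.mp htc
  exact ⟨x, y, z, hts (by simp), hts (by simp), hts (by simp), hxy, hxz, hyz⟩

lemma R33 (h3 : Gᶜ.CliqueFree 3) (s : Finset V) (hs : 6 ≤ s.card) :
    ∃ u v w : V, u ∈ s ∧ v ∈ s ∧ w ∈ s ∧ u ≠ v ∧ u ≠ w ∧ v ≠ w ∧
      ¬Gᶜ.Adj u v ∧ ¬Gᶜ.Adj u w ∧ ¬Gᶜ.Adj v w := by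
  classical
  have hpos : 0 < s.card := by omega
  obtain ⟨v0, hv0⟩ := Finset.card_pos.mp hpos
  set t := s.erase v0 with ht
  have htc : 5 ≤ t.card := by
    rw [ht, Finset.card_erase_of_mem hv0]; omega
  have hsplit := Finset.card_filter_add_card_filter_not (s := t) (fun z => Gᶜ.Adj v0 z)
  rcases le_or_gt 3 ((t.filter (fun z => Gᶜ.Adj v0 z)).card) with hA | hA
  · obtain ⟨u1, u2, u3, h1, h2, h3m, n12, n13, n23⟩ := three_of_card hA
    simp only [Finset.mem_filter] at h1 h2 h3m
    refine ⟨u1, u2, u3, (Finset.erase_subset _ _) h1.1, (Finset.erase_subset _ _) h2.1,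
      (Finset.erase_subset _ _) h3m.1, n12, n13, n23, ?_, ?_, ?_⟩
    · exact fun h => no_tri h3 h1.2 h2.2 h
    · exact fun h => no_tri h3 h1.2 h3m.2 h
    · exact fun h => no_tri h3 h2.2 h3m.2 h
  · have hB : 3 ≤ ((t.filter (fun z => ¬Gᶜ.Adj v0 z)).card) := by omega
    obtain ⟨u1, u2, u3, h1, h2, h3m, n12, n13, n23⟩ := three_of_card hB
    simp only [Finset.mem_filter] at h1 h2 h3m
    have hv01 : v0 ≠ u1 := fun h => (Finset.mem_erase.mp h1.1).1 h.symm
    have hv02 : v0 ≠ u2 := fun h => (Finset.mem_erase.mp h2.1).1 h.symm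
    have hv03 : v0 ≠ u3 := fun h => (Finset.mem_erase.mp h3m.1).1 h.symm
    by_cases h12 : Gᶜ.Adj u1 u2
    · by_cases h13 : Gᶜ.Adj u1 u3
      · by_cases h23 : Gᶜ.Adj u2 u3
        · exact absurd h23 (fun h => no_tri h3 h12 h13 h)
        · exact ⟨v0, u2, u3, hv0, (Finset.erase_subset _ _) h2.1,
            (Finset.erase_subset _ _) h3m.1, hv02, hv03, n23, h2.2, h3m.2, h23⟩
      · exact ⟨v0, u1, u3, hv0, (Finset.erase_subset _ _) h1.1,
          (Finset.erase_subset _ _) h3m.1, hv01, hv03, n13, h1.2, h3m.2, h13⟩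
    · exact ⟨v0, u1, u2, hv0, (Finset.erase_subset _ _) h1.1,
        (Finset.erase_subset _ _) h2.1, hv01, hv02, n12, h1.2, h2.2, h12⟩

lemma colorable_of_pairs (a b c d e f x y : V)
    (hcov : ∀ v : V, v = a ∨ v = b ∨ v = c ∨ v = d ∨ v = e ∨ v = f ∨ v = x ∨ v = y)
    (h1 : ¬G.Adj a b) (h2 : ¬G.Adj c d) (h3 : ¬G.Adj e f) (h4 : ¬G.Adj x y) :
    G.Colorable 4 := by
  classical
  refine ⟨SimpleGraph.Coloring.mk
    (fun v => if v = a ∨ v = b then (0 : Fin 4) else if v = c ∨ v = d then 1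
      else if v = e ∨ v = f then 2 else 3) ?_⟩
  intro u w huw
  have hne : u ≠ w := G.ne_of_adj huw
  have key : ∀ p q : V, G.Adj p q → (p = a ∨ p = b) → (q = a ∨ q = b) → False := by
    rintro p q hpq (rfl | rfl) (rfl | rfl)
    · exact G.irrefl hpq
    · exact h1 hpq
    · exact h1 hpq.symm
    · exact G.irrefl hpq
  have key2 : ∀ p q : V, G.Adj p q → (p = c ∨ p = d) → (q = c ∨ q = d) → False := by
    rintro p q hpq (rfl | rfl) (rfl | rfl)
    · exact G.irrefl hpq
    · exact h2 hpq
    · exact h2 hpq.symm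
    · exact G.irrefl hpq
  have key3 : ∀ p q : V, G.Adj p q → (p = e ∨ p = f) → (q = e ∨ q = f) → False := by
    rintro p q hpq (rfl | rfl) (rfl | rfl)
    · exact G.irrefl hpq
    · exact h3 hpq
    · exact h3 hpq.symm
    · exact G.irrefl hpq
  have key4 : ∀ p q : V, G.Adj p q → (p = x ∨ p = y) → (q = x ∨ q = y) → False := by
    rintro p q hpq (rfl | rfl) (rfl | rfl)
    · exact G.irrefl hpq
    · exact h4 hpq
    · exact h4 hpq.symm
    · exact G.irrefl hpq
  split_ifs with hu1 hw1 hw2 hw3 hu2 hw1 hw2 hw3 hu3 hw1 hw2 hw3 hw1 hw2 hw3 <;>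
    first
      | decide
      | (exact absurd (key u w huw hu1 hw1) id)
      | (exact absurd (key2 u w huw hu2 hw2) id)
      | (exact absurd (key3 u w huw hu3 hw3) id)
      | (intro _
         exact key4 u w huw (by have := hcov u; tauto) (by have := hcov w; tauto))

lemma two_disjoint_aux (h3 : Gᶜ.CliqueFree 3) (h4 : G.CliqueFree 4) (a b c d e : V)
    (nab : a ≠ b) (nac : a ≠ c) (nad : a ≠ d) (nae : a ≠ e) (nbc : b ≠ c) (nbd : b ≠ d)
    (nbe : b ≠ e) (ncd : c ≠ d) (nce : c ≠ e) (nde : d ≠ e)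
    (hab : Gᶜ.Adj a b) :
    ∃ r1 r2 r3 r4 r5 : V, Gᶜ.Adj r1 r2 ∧ Gᶜ.Adj r3 r4 ∧
      (r1 ≠ r2 ∧ r1 ≠ r3 ∧ r1 ≠ r4 ∧ r1 ≠ r5 ∧ r2 ≠ r3 ∧ r2 ≠ r4 ∧ r2 ≠ r5 ∧
       r3 ≠ r4 ∧ r3 ≠ r5 ∧ r4 ≠ r5) ∧
      ∀ w : V, (w = r1 ∨ w = r2 ∨ w = r3 ∨ w = r4 ∨ w = r5) ↔
        (w = a ∨ w = b ∨ w = c ∨ w = d ∨ w = e) := by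
  by_cases hcd : Gᶜ.Adj c d
  · exact ⟨a, b, c, d, e, hab, hcd, ⟨nab, nac, nad, nae, nbc, nbd, nbe, ncd, nce, nde⟩, fun w => by constructor <;> rintro (rfl | rfl | rfl | rfl | rfl) <;> simp⟩
  by_cases hce : Gᶜ.Adj c e
  · exact ⟨a, b, c, e, d, hab, hce, ⟨nab, nac, nae, nad, nbc, nbe, nbd, nce, ncd, nde.symm⟩, fun w => by constructor <;> rintro (rfl | rfl | rfl | rfl | rfl) <;> simp⟩
  by_cases hde : Gᶜ.Adj d e
  · exact ⟨a, b, d, e, c, hab, hde, ⟨nab, nad, nae, nac, nbd, nbe, nbc, nde, ncd.symm, nce.symm⟩, fun w => by constructor <;> rintro (rfl | rfl | rfl | rfl | rfl) <;> simp⟩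
  have hca : Gᶜ.Adj a c ∨ Gᶜ.Adj a d ∨ Gᶜ.Adj a e := by
    by_contra hc
    push_neg at hc
    exact no_indep4 h4 nac nad nae ncd nce nde hc.1 hc.2.1 hc.2.2 hcd hce hde
  have hcb : Gᶜ.Adj b c ∨ Gᶜ.Adj b d ∨ Gᶜ.Adj b e := by
    by_contra hc
    push_neg at hc
    exact no_indep4 h4 nbc nbd nbe ncd nce nde hc.1 hc.2.1 hc.2.2 hcd hce hde
  rcases hca with h | h | h <;> rcases hcb with g | g | g
  · exact (no_tri h3 hab h g).elim
  · exact ⟨a, c, b, d, e, h, g, ⟨nac, nab, nad, nae, nbc.symm, ncd, nce, nbd, nbe, nde⟩, fun w => by constructor <;> rintro (rfl | rfl | rfl | rfl | rfl) <;> simp⟩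
  · exact ⟨a, c, b, e, d, h, g, ⟨nac, nab, nae, nad, nbc.symm, nce, ncd, nbe, nbd, nde.symm⟩, fun w => by constructor <;> rintro (rfl | rfl | rfl | rfl | rfl) <;> simp⟩
  · exact ⟨a, d, b, c, e, h, g, ⟨nad, nab, nac, nae, nbd.symm, ncd.symm, nde, nbc, nbe, nce⟩, fun w => by constructor <;> rintro (rfl | rfl | rfl | rfl | rfl) <;> simp⟩
  · exact (no_tri h3 hab h g).elim
  · exact ⟨a, d, b, e, c, h, g, ⟨nad, nab, nae, nac, nbd.symm, nde, ncd.symm, nbe, nbc, nce.symm⟩, fun w => by constructor <;> rintro (rfl | rfl | rfl | rfl | rfl) <;> simp⟩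
  · exact ⟨a, e, b, c, d, h, g, ⟨nae, nab, nac, nad, nbe.symm, nce.symm, nde.symm, nbc, nbd, ncd⟩, fun w => by constructor <;> rintro (rfl | rfl | rfl | rfl | rfl) <;> simp⟩
  · exact ⟨a, e, b, d, c, h, g, ⟨nae, nab, nad, nac, nbe.symm, nde.symm, nce.symm, nbd, nbc, ncd.symm⟩, fun w => by constructor <;> rintro (rfl | rfl | rfl | rfl | rfl) <;> simp⟩
  · exact (no_tri h3 hab h g).elim

lemma two_disjoint (h3 : Gᶜ.CliqueFree 3) (h4 : G.CliqueFree 4) (v1 v2 v3 v4 v5 : V)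
    (n12 : v1 ≠ v2) (n13 : v1 ≠ v3) (n14 : v1 ≠ v4) (n15 : v1 ≠ v5) (n23 : v2 ≠ v3)
    (n24 : v2 ≠ v4) (n25 : v2 ≠ v5) (n34 : v3 ≠ v4) (n35 : v3 ≠ v5) (n45 : v4 ≠ v5) :
    ∃ r1 r2 r3 r4 r5 : V, Gᶜ.Adj r1 r2 ∧ Gᶜ.Adj r3 r4 ∧
      (r1 ≠ r2 ∧ r1 ≠ r3 ∧ r1 ≠ r4 ∧ r1 ≠ r5 ∧ r2 ≠ r3 ∧ r2 ≠ r4 ∧ r2 ≠ r5 ∧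
       r3 ≠ r4 ∧ r3 ≠ r5 ∧ r4 ≠ r5) ∧
      ∀ w : V, (w = r1 ∨ w = r2 ∨ w = r3 ∨ w = r4 ∨ w = r5) ↔
        (w = v1 ∨ w = v2 ∨ w = v3 ∨ w = v4 ∨ w = v5) := by
  by_cases h12 : Gᶜ.Adj v1 v2
  · obtain ⟨r1, r2, r3, r4, r5, e1, e2, dc, hiff⟩ := two_disjoint_aux h3 h4 v1 v2 v3 v4 v5 n12 n13 n14 n15 n23 n24 n25 n34 n35 n45 h12
    exact ⟨r1, r2, r3, r4, r5, e1, e2, dc, fun w => by rw [hiff w]; try (constructor <;> rintro (rfl | rfl | rfl | rfl | rfl) <;> simp)⟩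
  by_cases h13 : Gᶜ.Adj v1 v3
  · obtain ⟨r1, r2, r3, r4, r5, e1, e2, dc, hiff⟩ := two_disjoint_aux h3 h4 v1 v3 v2 v4 v5 n13 n12 n14 n15 n23.symm n34 n35 n24 n25 n45 h13
    exact ⟨r1, r2, r3, r4, r5, e1, e2, dc, fun w => by rw [hiff w]; try (constructor <;> rintro (rfl | rfl | rfl | rfl | rfl) <;> simp)⟩
  by_cases h14 : Gᶜ.Adj v1 v4
  · obtain ⟨r1, r2, r3, r4, r5, e1, e2, dc, hiff⟩ := two_disjoint_aux h3 h4 v1 v4 v2 v3 v5 n14 n12 n13 n15 n24.symm n34.symm n45 n23 n25 n35 h14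
    exact ⟨r1, r2, r3, r4, r5, e1, e2, dc, fun w => by rw [hiff w]; try (constructor <;> rintro (rfl | rfl | rfl | rfl | rfl) <;> simp)⟩
  by_cases h23 : Gᶜ.Adj v2 v3
  · obtain ⟨r1, r2, r3, r4, r5, e1, e2, dc, hiff⟩ := two_disjoint_aux h3 h4 v2 v3 v1 v4 v5 n23 n12.symm n24 n25 n13.symm n34 n35 n14 n15 n45 h23
    exact ⟨r1, r2, r3, r4, r5, e1, e2, dc, fun w => by rw [hiff w]; try (constructor <;> rintro (rfl | rfl | rfl | rfl | rfl) <;> simp)⟩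
  by_cases h24 : Gᶜ.Adj v2 v4
  · obtain ⟨r1, r2, r3, r4, r5, e1, e2, dc, hiff⟩ := two_disjoint_aux h3 h4 v2 v4 v1 v3 v5 n24 n12.symm n23 n25 n14.symm n34.symm n45 n13 n15 n35 h24
    exact ⟨r1, r2, r3, r4, r5, e1, e2, dc, fun w => by rw [hiff w]; try (constructor <;> rintro (rfl | rfl | rfl | rfl | rfl) <;> simp)⟩
  by_cases h34 : Gᶜ.Adj v3 v4
  · obtain ⟨r1, r2, r3, r4, r5, e1, e2, dc, hiff⟩ := two_disjoint_aux h3 h4 v3 v4 v1 v2 v5 n34 n13.symm n23.symm n35 n14.symm n24.symm n45 n12 n15 n25 h34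
    exact ⟨r1, r2, r3, r4, r5, e1, e2, dc, fun w => by rw [hiff w]; try (constructor <;> rintro (rfl | rfl | rfl | rfl | rfl) <;> simp)⟩
  exact (no_indep4 h4 n12 n13 n14 n23 n24 n34 h12 h13 h14 h23 h24 h34).elim


lemma nodup_of_card [DecidableEq V] (l : List V) (h : l.toFinset.card = l.length) : l.Nodup := by
  induction l with
  | nil => exact List.nodup_nil
  | cons a l ih =>
      by_cases ha : a ∈ l
      · exfalso
        have h1 : (a :: l).toFinset = l.toFinset := by
          simp [List.toFinset_cons, Finset.insert_eq_self.mpr (List.mem_toFinset.mpr ha)]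
        have h2 := List.toFinset_card_le l
        rw [h1] at h
        simp at h
        omega
      · have h1 : (a :: l).toFinset.card = l.toFinset.card + 1 := by
          simp [List.toFinset_cons,
            Finset.card_insert_of_notMem (fun hc => ha (List.mem_toFinset.mp hc))]
        rw [h1] at h
        simp at h
        exact List.nodup_cons.mpr ⟨ha, ih h⟩

lemma six_le_card [DecidableEq V] {p1 p2 p3 p4 p5 p6 : V}
    (h : ([p1, p2, p3, p4, p5, p6] : List V).Nodup) :
    6 ≤ ({p1, p2, p3, p4, p5, p6} : Finset V).card := by
  have h2 : ([p1, p2, p3, p4, p5, p6] : List V).toFinset = {p1, p2, p3, p4, p5, p6} := by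
    simp [List.toFinset_cons]
  have h3 := List.toFinset_card_of_nodup h
  rw [h2] at h3
  simp at h3
  omega


lemma inner [DecidableEq V] (h3 : Gᶜ.CliqueFree 3) (h4 : G.CliqueFree 4) (a b c d e f x y : V)
    (hcov : ∀ v : V, v = a ∨ v = b ∨ v = c ∨ v = d ∨ v = e ∨ v = f ∨ v = x ∨ v = y)
    (hcard : ({a, b, c, d, e, f, x, y} : Finset V).card = 8)
    (hab : Gᶜ.Adj a b) (hcd : Gᶜ.Adj c d) (hef : Gᶜ.Adj e f)
    (hnxy : ¬Gᶜ.Adj x y) (hxa : Gᶜ.Adj x a) (hxc : Gᶜ.Adj x c) : G.Colorable 4 := by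
  have nGadj : ∀ u w : V, Gᶜ.Adj u w → ¬G.Adj u w :=
    fun u w h => ((SimpleGraph.compl_adj G u w).mp h).2
  have hnyx : ¬Gᶜ.Adj y x := fun h => hnxy h.symm
  have hl := nodup_of_card ([a, b, c, d, e, f, x, y] : List V) (by simpa using hcard)
  simp only [List.nodup_cons, List.mem_cons, List.not_mem_nil, or_false, not_or,
    List.nodup_nil, and_true, List.mem_singleton] at hl
  obtain ⟨⟨nab, nac, nad, nae, naf, nax, nay⟩, ⟨nbc, nbd, nbe, nbf, nbx, nby⟩,
    ⟨ncd', nce, ncf, ncx, ncy⟩, ⟨nde, ndf, ndx, ndy⟩, ⟨nef', nex, ney⟩, ⟨nfx, nfy⟩, nxy, -⟩ := hl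
  have hxb : ¬Gᶜ.Adj x b := fun h => no_tri h3 hxa h hab
  have hxd : ¬Gᶜ.Adj x d := fun h => no_tri h3 hxc h hcd
  by_cases hyb : Gᶜ.Adj y b
  · exact colorable_of_pairs x a y b c d e f
      (fun v => by rcases hcov v with rfl | rfl | rfl | rfl | rfl | rfl | rfl | rfl <;> simp)
      (nGadj _ _ hxa) (nGadj _ _ hyb) (nGadj _ _ hcd) (nGadj _ _ hef)
  by_cases hyd : Gᶜ.Adj y d
  · exact colorable_of_pairs x c y d a b e f
      (fun v => by rcases hcov v with rfl | rfl | rfl | rfl | rfl | rfl | rfl | rfl <;> simp)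
      (nGadj _ _ hxc) (nGadj _ _ hyd) (nGadj _ _ hab) (nGadj _ _ hef)
  have hbd : Gᶜ.Adj b d := by
    by_contra hc
    exact no_indep4 h4 nxy (Ne.symm nbx) (Ne.symm ndx) (Ne.symm nby) (Ne.symm ndy) nbd hnxy hxb hxd hyb hyd hc
  by_cases hye : Gᶜ.Adj y e
  · by_cases hxf : Gᶜ.Adj x f
    · exact colorable_of_pairs x f y e a b c d
        (fun v => by rcases hcov v with rfl | rfl | rfl | rfl | rfl | rfl | rfl | rfl <;> simp)
        (nGadj _ _ hxf) (nGadj _ _ hye) (nGadj _ _ hab) (nGadj _ _ hcd)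
    · exfalso
      have hyf : ¬Gᶜ.Adj y f := fun h => no_tri h3 hye h hef
      have hbf : Gᶜ.Adj b f := by
        by_contra hc
        exact no_indep4 h4 nxy (Ne.symm nbx) (Ne.symm nfx) (Ne.symm nby) (Ne.symm nfy) nbf hnxy hxb hxf hyb hyf hc
      have hdf : Gᶜ.Adj d f := by
        by_contra hc
        exact no_indep4 h4 nxy (Ne.symm ndx) (Ne.symm nfx) (Ne.symm ndy) (Ne.symm nfy) ndf hnxy hxd hxf hyd hyf hc
      exact no_tri h3 hbd hbf hdf
  by_cases hyf : Gᶜ.Adj y f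
  · by_cases hxe : Gᶜ.Adj x e
    · exact colorable_of_pairs x e y f a b c d
        (fun v => by rcases hcov v with rfl | rfl | rfl | rfl | rfl | rfl | rfl | rfl <;> simp)
        (nGadj _ _ hxe) (nGadj _ _ hyf) (nGadj _ _ hab) (nGadj _ _ hcd)
    · exfalso
      have hbe : Gᶜ.Adj b e := by
        by_contra hc
        exact no_indep4 h4 nxy (Ne.symm nbx) (Ne.symm nex) (Ne.symm nby) (Ne.symm ney) nbe hnxy hxb hxe hyb hye hc
      have hde : Gᶜ.Adj d e := by
        by_contra hc
        exact no_indep4 h4 nxy (Ne.symm ndx) (Ne.symm nex) (Ne.symm ndy) (Ne.symm ney) nde hnxy hxd hxe hyd hye hc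
      exact no_tri h3 hbd hbe hde
  have hya : Gᶜ.Adj y a := by
    by_contra hc
    obtain ⟨u, v, w, hu, hv, hw, nuv, nuw, nvw, auv, auw, avw⟩ :=
      R33 h3 ({a, b, d, e, f, x} : Finset V)
        (six_le_card (by
          simp [nab, nad, nae, naf, nax, nbd, nbe, nbf, nbx, nde, ndf, ndx, nef', nex, nfx]))
    have key : ∀ z : V, z ∈ ({a, b, d, e, f, x} : Finset V) → ¬Gᶜ.Adj y z ∧ y ≠ z := by
      intro z hz
      simp only [Finset.mem_insert, Finset.mem_singleton] at hz
      rcases hz with rfl | rfl | rfl | rfl | rfl | rfl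
      · exact ⟨hc, (Ne.symm nay)⟩
      · exact ⟨hyb, (Ne.symm nby)⟩
      · exact ⟨hyd, (Ne.symm ndy)⟩
      · exact ⟨hye, (Ne.symm ney)⟩
      · exact ⟨hyf, (Ne.symm nfy)⟩
      · exact ⟨hnyx, (Ne.symm nxy)⟩
    obtain ⟨h1, n1⟩ := key u hu
    obtain ⟨h2, n2⟩ := key v hv
    obtain ⟨h3', n3⟩ := key w hw
    exact no_indep4 h4 n1 n2 n3 nuv nuw nvw h1 h2 h3' auv auw avw
  have hyc : Gᶜ.Adj y c := by
    by_contra hc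
    obtain ⟨u, v, w, hu, hv, hw, nuv, nuw, nvw, auv, auw, avw⟩ :=
      R33 h3 ({b, c, d, e, f, x} : Finset V)
        (six_le_card (by
          simp [nbc, nbd, nbe, nbf, nbx, ncd', nce, ncf, ncx, nde, ndf, ndx, nef', nex, nfx]))
    have key : ∀ z : V, z ∈ ({b, c, d, e, f, x} : Finset V) → ¬Gᶜ.Adj y z ∧ y ≠ z := by
      intro z hz
      simp only [Finset.mem_insert, Finset.mem_singleton] at hz
      rcases hz with rfl | rfl | rfl | rfl | rfl | rfl
      · exact ⟨hyb, (Ne.symm nby)⟩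
      · exact ⟨hc, (Ne.symm ncy)⟩
      · exact ⟨hyd, (Ne.symm ndy)⟩
      · exact ⟨hye, (Ne.symm ney)⟩
      · exact ⟨hyf, (Ne.symm nfy)⟩
      · exact ⟨hnyx, (Ne.symm nxy)⟩
    obtain ⟨h1, n1⟩ := key u hu
    obtain ⟨h2, n2⟩ := key v hv
    obtain ⟨h3', n3⟩ := key w hw
    exact no_indep4 h4 n1 n2 n3 nuv nuw nvw h1 h2 h3' auv auw avw
  exact colorable_of_pairs y a x c b d e f
    (fun v => by rcases hcov v with rfl | rfl | rfl | rfl | rfl | rfl | rfl | rfl <;> simp)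
    (nGadj _ _ hya) (nGadj _ _ hxc) (nGadj _ _ hbd) (nGadj _ _ hef)

lemma dead [DecidableEq V] (h3 : Gᶜ.CliqueFree 3) (h4 : G.CliqueFree 4)
    (x p1 p2 p3 p4 p5 p6 : V)
    (hnd : ([p1, p2, p3, p4, p5, p6] : List V).Nodup)
    (hx1 : x ≠ p1) (hx2 : x ≠ p2) (hx3 : x ≠ p3) (hx4 : x ≠ p4) (hx5 : x ≠ p5) (hx6 : x ≠ p6)
    (ha1 : ¬Gᶜ.Adj x p1) (ha2 : ¬Gᶜ.Adj x p2) (ha3 : ¬Gᶜ.Adj x p3) (ha4 : ¬Gᶜ.Adj x p4)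
    (ha5 : ¬Gᶜ.Adj x p5) (ha6 : ¬Gᶜ.Adj x p6) : False := by
  obtain ⟨u, v, w, hu, hv, hw, nuv, nuw, nvw, auv, auw, avw⟩ :=
    R33 h3 ({p1, p2, p3, p4, p5, p6} : Finset V) (six_le_card hnd)
  have key : ∀ z : V, z ∈ ({p1, p2, p3, p4, p5, p6} : Finset V) → ¬Gᶜ.Adj x z ∧ x ≠ z := by
    intro z hz
    simp only [Finset.mem_insert, Finset.mem_singleton] at hz
    rcases hz with rfl | rfl | rfl | rfl | rfl | rfl
    · exact ⟨ha1, hx1⟩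
    · exact ⟨ha2, hx2⟩
    · exact ⟨ha3, hx3⟩
    · exact ⟨ha4, hx4⟩
    · exact ⟨ha5, hx5⟩
    · exact ⟨ha6, hx6⟩
  obtain ⟨g1, m1⟩ := key u hu
  obtain ⟨g2, m2⟩ := key v hv
  obtain ⟨g3, m3⟩ := key w hw
  exact no_indep4 h4 m1 m2 m3 nuv nuw nvw g1 g2 g3 auv auw avw

lemma stage2 [DecidableEq V] (h3 : Gᶜ.CliqueFree 3) (h4 : G.CliqueFree 4) (a b c d e f x y : V)
    (hcov : ∀ v : V, v = a ∨ v = b ∨ v = c ∨ v = d ∨ v = e ∨ v = f ∨ v = x ∨ v = y)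
    (hcard : ({a, b, c, d, e, f, x, y} : Finset V).card = 8)
    (hab : Gᶜ.Adj a b) (hcd : Gᶜ.Adj c d) (hef : Gᶜ.Adj e f)
    (hnxy : ¬Gᶜ.Adj x y) : G.Colorable 4 := by
  have hl := nodup_of_card ([a, b, c, d, e, f, x, y] : List V) (by simpa using hcard)
  simp only [List.nodup_cons, List.mem_cons, List.not_mem_nil, or_false, not_or,
    List.nodup_nil, and_true, List.mem_singleton] at hl
  obtain ⟨⟨nab, nac, nad, nae, naf, nax, nay⟩, ⟨nbc, nbd, nbe, nbf, nbx, nby⟩,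
    ⟨ncd', nce, ncf, ncx, ncy⟩, ⟨nde, ndf, ndx, ndy⟩, ⟨nef', nex, ney⟩, ⟨nfx, nfy⟩, nxy, -⟩ := hl
  by_cases q1 : Gᶜ.Adj x a ∨ Gᶜ.Adj x b
  · by_cases q2 : Gᶜ.Adj x c ∨ Gᶜ.Adj x d
    rcases q1 with hx1 | hx1 <;> rcases q2 with hx2 | hx2
    · exact inner h3 h4 a b c d e f x y
        hcov hcard hab hcd hef hnxy hx1 hx2
    · exact inner h3 h4 a b d c e f x y
        (fun v => by rcases hcov v with rfl | rfl | rfl | rfl | rfl | rfl | rfl | rfl <;> simp)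
        (by rw [show ({a, b, d, c, e, f, x, y} : Finset V) = ({a, b, c, d, e, f, x, y} : Finset V) from by
              ext z
              simp only [Finset.mem_insert, Finset.mem_singleton]
              constructor <;> rintro (rfl | rfl | rfl | rfl | rfl | rfl | rfl | rfl) <;> simp]
            exact hcard)
        hab hcd.symm hef hnxy hx1 hx2
    · exact inner h3 h4 b a c d e f x y
        (fun v => by rcases hcov v with rfl | rfl | rfl | rfl | rfl | rfl | rfl | rfl <;> simp)
        (by rw [show ({b, a, c, d, e, f, x, y} : Finset V) = ({a, b, c, d, e, f, x, y} : Finset V) from by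
              ext z
              simp only [Finset.mem_insert, Finset.mem_singleton]
              constructor <;> rintro (rfl | rfl | rfl | rfl | rfl | rfl | rfl | rfl) <;> simp]
            exact hcard)
        hab.symm hcd hef hnxy hx1 hx2
    · exact inner h3 h4 b a d c e f x y
        (fun v => by rcases hcov v with rfl | rfl | rfl | rfl | rfl | rfl | rfl | rfl <;> simp)
        (by rw [show ({b, a, d, c, e, f, x, y} : Finset V) = ({a, b, c, d, e, f, x, y} : Finset V) from by
              ext z
              simp only [Finset.mem_insert, Finset.mem_singleton]
              constructor <;> rintro (rfl | rfl | rfl | rfl | rfl | rfl | rfl | rfl) <;> simp]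
            exact hcard)
        hab.symm hcd.symm hef hnxy hx1 hx2
    by_cases q3 : Gᶜ.Adj x e ∨ Gᶜ.Adj x f
    rcases q1 with hx1 | hx1 <;> rcases q3 with hx2 | hx2
    · exact inner h3 h4 a b e f c d x y
        (fun v => by rcases hcov v with rfl | rfl | rfl | rfl | rfl | rfl | rfl | rfl <;> simp)
        (by rw [show ({a, b, e, f, c, d, x, y} : Finset V) = ({a, b, c, d, e, f, x, y} : Finset V) from by
              ext z
              simp only [Finset.mem_insert, Finset.mem_singleton]
              constructor <;> rintro (rfl | rfl | rfl | rfl | rfl | rfl | rfl | rfl) <;> simp]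
            exact hcard)
        hab hef hcd hnxy hx1 hx2
    · exact inner h3 h4 a b f e c d x y
        (fun v => by rcases hcov v with rfl | rfl | rfl | rfl | rfl | rfl | rfl | rfl <;> simp)
        (by rw [show ({a, b, f, e, c, d, x, y} : Finset V) = ({a, b, c, d, e, f, x, y} : Finset V) from by
              ext z
              simp only [Finset.mem_insert, Finset.mem_singleton]
              constructor <;> rintro (rfl | rfl | rfl | rfl | rfl | rfl | rfl | rfl) <;> simp]
            exact hcard)
        hab hef.symm hcd hnxy hx1 hx2
    · exact inner h3 h4 b a e f c d x y
        (fun v => by rcases hcov v with rfl | rfl | rfl | rfl | rfl | rfl | rfl | rfl <;> simp)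
        (by rw [show ({b, a, e, f, c, d, x, y} : Finset V) = ({a, b, c, d, e, f, x, y} : Finset V) from by
              ext z
              simp only [Finset.mem_insert, Finset.mem_singleton]
              constructor <;> rintro (rfl | rfl | rfl | rfl | rfl | rfl | rfl | rfl) <;> simp]
            exact hcard)
        hab.symm hef hcd hnxy hx1 hx2
    · exact inner h3 h4 b a f e c d x y
        (fun v => by rcases hcov v with rfl | rfl | rfl | rfl | rfl | rfl | rfl | rfl <;> simp)
        (by rw [show ({b, a, f, e, c, d, x, y} : Finset V) = ({a, b, c, d, e, f, x, y} : Finset V) from by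
              ext z
              simp only [Finset.mem_insert, Finset.mem_singleton]
              constructor <;> rintro (rfl | rfl | rfl | rfl | rfl | rfl | rfl | rfl) <;> simp]
            exact hcard)
        hab.symm hef.symm hcd hnxy hx1 hx2
    -- only edge 1 hit
    exfalso
    push_neg at q2 q3
    rcases q1 with hx1 | hx1
    · exact dead h3 h4 x b c d e f y (by simp [nbc, nbd, nbe, nbf, nby, ncd', nce, ncf, ncy, nde, ndf, ndy, nef', ney, nfy]) (Ne.symm nbx) (Ne.symm ncx) (Ne.symm ndx) (Ne.symm nex) (Ne.symm nfx) nxy (fun g => no_tri h3 hx1 g hab) q2.1 q2.2 q3.1 q3.2 hnxy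
    · exact dead h3 h4 x a c d e f y (by simp [nac, nad, nae, naf, nay, ncd', nce, ncf, ncy, nde, ndf, ndy, nef', ney, nfy]) (Ne.symm nax) (Ne.symm ncx) (Ne.symm ndx) (Ne.symm nex) (Ne.symm nfx) nxy (fun g => no_tri h3 hx1 g hab.symm) q2.1 q2.2 q3.1 q3.2 hnxy
  by_cases q2 : Gᶜ.Adj x c ∨ Gᶜ.Adj x d
  · by_cases q3 : Gᶜ.Adj x e ∨ Gᶜ.Adj x f
    rcases q2 with hx1 | hx1 <;> rcases q3 with hx2 | hx2
    · exact inner h3 h4 c d e f a b x y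
        (fun v => by rcases hcov v with rfl | rfl | rfl | rfl | rfl | rfl | rfl | rfl <;> simp)
        (by rw [show ({c, d, e, f, a, b, x, y} : Finset V) = ({a, b, c, d, e, f, x, y} : Finset V) from by
              ext z
              simp only [Finset.mem_insert, Finset.mem_singleton]
              constructor <;> rintro (rfl | rfl | rfl | rfl | rfl | rfl | rfl | rfl) <;> simp]
            exact hcard)
        hcd hef hab hnxy hx1 hx2
    · exact inner h3 h4 c d f e a b x y
        (fun v => by rcases hcov v with rfl | rfl | rfl | rfl | rfl | rfl | rfl | rfl <;> simp)
        (by rw [show ({c, d, f, e, a, b, x, y} : Finset V) = ({a, b, c, d, e, f, x, y} : Finset V) from by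
              ext z
              simp only [Finset.mem_insert, Finset.mem_singleton]
              constructor <;> rintro (rfl | rfl | rfl | rfl | rfl | rfl | rfl | rfl) <;> simp]
            exact hcard)
        hcd hef.symm hab hnxy hx1 hx2
    · exact inner h3 h4 d c e f a b x y
        (fun v => by rcases hcov v with rfl | rfl | rfl | rfl | rfl | rfl | rfl | rfl <;> simp)
        (by rw [show ({d, c, e, f, a, b, x, y} : Finset V) = ({a, b, c, d, e, f, x, y} : Finset V) from by
              ext z
              simp only [Finset.mem_insert, Finset.mem_singleton]
              constructor <;> rintro (rfl | rfl | rfl | rfl | rfl | rfl | rfl | rfl) <;> simp]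
            exact hcard)
        hcd.symm hef hab hnxy hx1 hx2
    · exact inner h3 h4 d c f e a b x y
        (fun v => by rcases hcov v with rfl | rfl | rfl | rfl | rfl | rfl | rfl | rfl <;> simp)
        (by rw [show ({d, c, f, e, a, b, x, y} : Finset V) = ({a, b, c, d, e, f, x, y} : Finset V) from by
              ext z
              simp only [Finset.mem_insert, Finset.mem_singleton]
              constructor <;> rintro (rfl | rfl | rfl | rfl | rfl | rfl | rfl | rfl) <;> simp]
            exact hcard)
        hcd.symm hef.symm hab hnxy hx1 hx2
    exfalso
    push_neg at q1 q3
    rcases q2 with hx1 | hx1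
    · exact dead h3 h4 x a b d e f y (by simp [nab, nad, nae, naf, nay, nbd, nbe, nbf, nby, nde, ndf, ndy, nef', ney, nfy]) (Ne.symm nax) (Ne.symm nbx) (Ne.symm ndx) (Ne.symm nex) (Ne.symm nfx) nxy q1.1 q1.2 (fun g => no_tri h3 hx1 g hcd) q3.1 q3.2 hnxy
    · exact dead h3 h4 x a b c e f y (by simp [nab, nac, nae, naf, nay, nbc, nbe, nbf, nby, nce, ncf, ncy, nef', ney, nfy]) (Ne.symm nax) (Ne.symm nbx) (Ne.symm ncx) (Ne.symm nex) (Ne.symm nfx) nxy q1.1 q1.2 (fun g => no_tri h3 hx1 g hcd.symm) q3.1 q3.2 hnxy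
  exfalso
  push_neg at q1 q2
  by_cases q3 : Gᶜ.Adj x e ∨ Gᶜ.Adj x f
  · rcases q3 with hx1 | hx1
    · exact dead h3 h4 x a b c d f y (by simp [nab, nac, nad, naf, nay, nbc, nbd, nbf, nby, ncd', ncf, ncy, ndf, ndy, nfy]) (Ne.symm nax) (Ne.symm nbx) (Ne.symm ncx) (Ne.symm ndx) (Ne.symm nfx) nxy q1.1 q1.2 q2.1 q2.2 (fun g => no_tri h3 hx1 g hef) hnxy
    · exact dead h3 h4 x a b c d e y (by simp [nab, nac, nad, nae, nay, nbc, nbd, nbe, nby, ncd', nce, ncy, nde, ndy, ney]) (Ne.symm nax) (Ne.symm nbx) (Ne.symm ncx) (Ne.symm ndx) (Ne.symm nex) nxy q1.1 q1.2 q2.1 q2.2 (fun g => no_tri h3 hx1 g hef.symm) hnxy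
  · push_neg at q3
    exact dead h3 h4 x a b c d e f (by simp [nab, nac, nad, nae, naf, nbc, nbd, nbe, nbf, ncd', nce, ncf, nde, ndf, nef']) (Ne.symm nax) (Ne.symm nbx) (Ne.symm ncx) (Ne.symm ndx) (Ne.symm nex) (Ne.symm nfx) q1.1 q1.2 q2.1 q2.2 q3.1 q3.2

lemma deg_le_three [Fintype V] [DecidableEq V] [DecidableRel Gᶜ.Adj]
    (h3 : Gᶜ.CliqueFree 3) (h4 : G.CliqueFree 4) (v : V) : Gᶜ.degree v ≤ 3 := by
  by_contra hgt
  push_neg at hgt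
  have hc : 4 ≤ (Gᶜ.neighborFinset v).card := by
    rw [SimpleGraph.card_neighborFinset_eq_degree]; omega
  obtain ⟨t, hts, htc⟩ := Finset.exists_subset_card_eq hc
  obtain ⟨u1, hu1⟩ := Finset.card_pos.mp (by omega : 0 < t.card)
  have htc' : (t.erase u1).card = 3 := by rw [Finset.card_erase_of_mem hu1, htc]
  obtain ⟨u2, u3, u4, m23, m24, m34, hteq⟩ := Finset.card_eq_three.mp htc'
  have adjv : ∀ u ∈ t, Gᶜ.Adj v u := fun u hu =>
    (SimpleGraph.mem_neighborFinset _ _ _).mp (hts hu)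
  have hu2 : u2 ∈ t.erase u1 := by rw [hteq]; simp
  have hu3 : u3 ∈ t.erase u1 := by rw [hteq]; simp
  have hu4 : u4 ∈ t.erase u1 := by rw [hteq]; simp
  have n12 : u1 ≠ u2 := fun h => (Finset.mem_erase.mp hu2).1 h.symm
  have n13 : u1 ≠ u3 := fun h => (Finset.mem_erase.mp hu3).1 h.symm
  have n14 : u1 ≠ u4 := fun h => (Finset.mem_erase.mp hu4).1 h.symm
  have a1 := adjv u1 hu1
  have a2 := adjv u2 (Finset.mem_of_mem_erase hu2)
  have a3 := adjv u3 (Finset.mem_of_mem_erase hu3)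
  have a4 := adjv u4 (Finset.mem_of_mem_erase hu4)
  exact no_indep4 h4 n12 n13 n14 m23 m24 m34
    (fun h => no_tri h3 a1 a2 h) (fun h => no_tri h3 a1 a3 h) (fun h => no_tri h3 a1 a4 h)
    (fun h => no_tri h3 a2 a3 h) (fun h => no_tri h3 a2 a4 h) (fun h => no_tri h3 a3 a4 h)

lemma nonnbrs_big [Fintype V] [DecidableEq V] [DecidableRel Gᶜ.Adj]
    (h3 : Gᶜ.CliqueFree 3) (h4 : G.CliqueFree 4) (v : V)
    (h : 6 ≤ ((Finset.univ.erase v) \ Gᶜ.neighborFinset v).card) : False := by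
  obtain ⟨u1, u2, u3, hu1, hu2, hu3, n12, n13, n23, a12, a13, a23⟩ := R33 h3 _ h
  have key : ∀ z : V, z ∈ (Finset.univ.erase v) \ Gᶜ.neighborFinset v →
      v ≠ z ∧ ¬Gᶜ.Adj v z := by
    intro z hz
    rw [Finset.mem_sdiff] at hz
    exact ⟨fun hh => (Finset.mem_erase.mp hz.1).1 hh.symm,
      fun hh => hz.2 ((SimpleGraph.mem_neighborFinset _ _ _).mpr hh)⟩
  obtain ⟨m1, g1⟩ := key u1 hu1
  obtain ⟨m2, g2⟩ := key u2 hu2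
  obtain ⟨m3, g3⟩ := key u3 hu3
  exact no_indep4 h4 m1 m2 m3 n12 n13 n23 g1 g2 g3 a12 a13 a23

lemma card_nine [Fintype V] (h3 : Gᶜ.CliqueFree 3) (h4 : G.CliqueFree 4)
    (hm : Fintype.card V = 9) : False := by
  classical
  have hdeg3 : ∀ v : V, Gᶜ.degree v = 3 := by
    intro v
    have hle := deg_le_three h3 h4 v
    have hge : 3 ≤ Gᶜ.degree v := by
      by_contra hlt
      push_neg at hlt
      apply nonnbrs_big h3 h4 v
      have h1 := Finset.le_card_sdiff (Gᶜ.neighborFinset v) (Finset.univ.erase v)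
      have h2 : (Finset.univ.erase v).card = 8 := by
        rw [Finset.card_erase_of_mem (Finset.mem_univ v), Finset.card_univ, hm]
      have h3' : (Gᶜ.neighborFinset v).card ≤ 2 := by
        rw [SimpleGraph.card_neighborFinset_eq_degree]; omega
      omega
    omega
  have hsum := SimpleGraph.sum_degrees_eq_twice_card_edges Gᶜ
  rw [Finset.sum_congr rfl (fun v _ => hdeg3 v)] at hsum
  rw [Finset.sum_const, Finset.card_univ, hm] at hsum
  simp at hsum
  omega

lemma card_big [Fintype V] (h3 : Gᶜ.CliqueFree 3) (h4 : G.CliqueFree 4)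
    (hm : 10 ≤ Fintype.card V) : False := by
  classical
  have hne : Nonempty V := Fintype.card_pos_iff.mp (by omega)
  obtain ⟨v⟩ := hne
  apply nonnbrs_big h3 h4 v
  have h1 := Finset.le_card_sdiff (Gᶜ.neighborFinset v) (Finset.univ.erase v)
  have h2 : 9 ≤ (Finset.univ.erase v).card := by
    rw [Finset.card_erase_of_mem (Finset.mem_univ v), Finset.card_univ]; omega
  have h3' := deg_le_three h3 h4 v
  rw [← SimpleGraph.card_neighborFinset_eq_degree] at h3'
  omega

lemma compl_nadj {u w : V} (h : Gᶜ.Adj u w) : ¬G.Adj u w :=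
  ((SimpleGraph.compl_adj G u w).mp h).2

lemma card_eight_of_nodup [DecidableEq V] {p1 p2 p3 p4 p5 p6 p7 p8 : V}
    (h : ([p1, p2, p3, p4, p5, p6, p7, p8] : List V).Nodup) :
    ({p1, p2, p3, p4, p5, p6, p7, p8} : Finset V).card = 8 := by
  have h2 : ([p1, p2, p3, p4, p5, p6, p7, p8] : List V).toFinset
      = {p1, p2, p3, p4, p5, p6, p7, p8} := by
    simp [List.toFinset_cons]
  have h3 := List.toFinset_card_of_nodup h
  rw [h2] at h3
  simpa using h3

lemma case5 [Fintype V] [DecidableEq V] (h3 : Gᶜ.CliqueFree 3) (h4 : G.CliqueFree 4)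
    (hm : Fintype.card V = 5) : G.Colorable 4 := by
  have h0 : (Finset.univ : Finset V).card = 5 := by rw [Finset.card_univ, hm]
  obtain ⟨v1, hv1⟩ := Finset.card_pos.mp (by omega : 0 < (Finset.univ : Finset V).card)
  have hc1 : (Finset.univ.erase v1).card = 4 := by rw [Finset.card_erase_of_mem hv1, h0]
  obtain ⟨v2, hv2⟩ := Finset.card_pos.mp (by omega : 0 < (Finset.univ.erase v1).card)
  have hc2 : ((Finset.univ.erase v1).erase v2).card = 3 := by rw [Finset.card_erase_of_mem hv2, hc1]
  have t2_1 := hv2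
  have n12 : v1 ≠ v2 := Ne.symm (Finset.mem_erase.mp t2_1).1
  obtain ⟨v3, hv3⟩ := Finset.card_pos.mp (by omega : 0 < ((Finset.univ.erase v1).erase v2).card)
  have hc3 : (((Finset.univ.erase v1).erase v2).erase v3).card = 2 := by rw [Finset.card_erase_of_mem hv3, hc2]
  have t3_2 := hv3
  have n23 : v2 ≠ v3 := Ne.symm (Finset.mem_erase.mp t3_2).1
  have t3_1 := (Finset.mem_erase.mp t3_2).2
  have n13 : v1 ≠ v3 := Ne.symm (Finset.mem_erase.mp t3_1).1
  obtain ⟨v4, hv4⟩ := Finset.card_pos.mp (by omega : 0 < (((Finset.univ.erase v1).erase v2).erase v3).card)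
  have hc4 : ((((Finset.univ.erase v1).erase v2).erase v3).erase v4).card = 1 := by rw [Finset.card_erase_of_mem hv4, hc3]
  have t4_3 := hv4
  have n34 : v3 ≠ v4 := Ne.symm (Finset.mem_erase.mp t4_3).1
  have t4_2 := (Finset.mem_erase.mp t4_3).2
  have n24 : v2 ≠ v4 := Ne.symm (Finset.mem_erase.mp t4_2).1
  have t4_1 := (Finset.mem_erase.mp t4_2).2
  have n14 : v1 ≠ v4 := Ne.symm (Finset.mem_erase.mp t4_1).1
  obtain ⟨v5, hv5⟩ := Finset.card_pos.mp (by omega : 0 < ((((Finset.univ.erase v1).erase v2).erase v3).erase v4).card)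
  have hc5 : (((((Finset.univ.erase v1).erase v2).erase v3).erase v4).erase v5).card = 0 := by rw [Finset.card_erase_of_mem hv5, hc4]
  have t5_4 := hv5
  have n45 : v4 ≠ v5 := Ne.symm (Finset.mem_erase.mp t5_4).1
  have t5_3 := (Finset.mem_erase.mp t5_4).2
  have n35 : v3 ≠ v5 := Ne.symm (Finset.mem_erase.mp t5_3).1
  have t5_2 := (Finset.mem_erase.mp t5_3).2
  have n25 : v2 ≠ v5 := Ne.symm (Finset.mem_erase.mp t5_2).1
  have t5_1 := (Finset.mem_erase.mp t5_2).2
  have n15 : v1 ≠ v5 := Ne.symm (Finset.mem_erase.mp t5_1).1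
  have hcov : ∀ v : V, v = v1 ∨ v = v2 ∨ v = v3 ∨ v = v4 ∨ v = v5 := by
    intro v
    by_cases w1 : v = v1
    · exact Or.inl w1
    have u1 : v ∈ (Finset.univ.erase v1) := Finset.mem_erase.mpr ⟨w1, Finset.mem_univ v⟩
    by_cases w2 : v = v2
    · exact Or.inr (Or.inl w2)
    have u2 : v ∈ ((Finset.univ.erase v1).erase v2) := Finset.mem_erase.mpr ⟨w2, u1⟩
    by_cases w3 : v = v3
    · exact Or.inr (Or.inr (Or.inl w3))
    have u3 : v ∈ (((Finset.univ.erase v1).erase v2).erase v3) := Finset.mem_erase.mpr ⟨w3, u2⟩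
    by_cases w4 : v = v4
    · exact Or.inr (Or.inr (Or.inr (Or.inl w4)))
    have u4 : v ∈ ((((Finset.univ.erase v1).erase v2).erase v3).erase v4) := Finset.mem_erase.mpr ⟨w4, u3⟩
    by_cases w5 : v = v5
    · exact Or.inr (Or.inr (Or.inr (Or.inr (w5))))
    have u5 : v ∈ (((((Finset.univ.erase v1).erase v2).erase v3).erase v4).erase v5) := Finset.mem_erase.mpr ⟨w5, u4⟩
    exfalso
    rw [Finset.card_eq_zero] at hc5
    rw [hc5] at u5
    exact absurd u5 (Finset.notMem_empty v)
  obtain ⟨r1, r2, r3, r4, r5, e1, e2, ⟨d12, d13, d14, d15, d23, d24, d25, d34, d35, d45⟩, hiff⟩ :=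
    two_disjoint h3 h4 v1 v2 v3 v4 v5 n12 n13 n14 n15 n23 n24 n25 n34 n35 n45
  have hcovr : ∀ v : V, v = r1 ∨ v = r2 ∨ v = r3 ∨ v = r4 ∨ v = r5 := by
    intro v
    rcases hcov v with rfl | rfl | rfl | rfl | rfl <;> exact (hiff v).mpr (by simp)
  exact colorable_of_pairs r1 r2 r3 r4 r5 r5 r5 r5
    (fun v => by rcases hcovr v with rfl | rfl | rfl | rfl | rfl <;> simp)
    (compl_nadj e1) (compl_nadj e2) (G.loopless.irrefl r5) (G.loopless.irrefl r5)

lemma case6 [Fintype V] [DecidableEq V] (h3 : Gᶜ.CliqueFree 3) (h4 : G.CliqueFree 4)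
    (hm : Fintype.card V = 6) : G.Colorable 4 := by
  have h0 : (Finset.univ : Finset V).card = 6 := by rw [Finset.card_univ, hm]
  obtain ⟨v1, hv1⟩ := Finset.card_pos.mp (by omega : 0 < (Finset.univ : Finset V).card)
  have hc1 : (Finset.univ.erase v1).card = 5 := by rw [Finset.card_erase_of_mem hv1, h0]
  obtain ⟨v2, hv2⟩ := Finset.card_pos.mp (by omega : 0 < (Finset.univ.erase v1).card)
  have hc2 : ((Finset.univ.erase v1).erase v2).card = 4 := by rw [Finset.card_erase_of_mem hv2, hc1]
  have t2_1 := hv2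
  have n12 : v1 ≠ v2 := Ne.symm (Finset.mem_erase.mp t2_1).1
  obtain ⟨v3, hv3⟩ := Finset.card_pos.mp (by omega : 0 < ((Finset.univ.erase v1).erase v2).card)
  have hc3 : (((Finset.univ.erase v1).erase v2).erase v3).card = 3 := by rw [Finset.card_erase_of_mem hv3, hc2]
  have t3_2 := hv3
  have n23 : v2 ≠ v3 := Ne.symm (Finset.mem_erase.mp t3_2).1
  have t3_1 := (Finset.mem_erase.mp t3_2).2
  have n13 : v1 ≠ v3 := Ne.symm (Finset.mem_erase.mp t3_1).1
  obtain ⟨v4, hv4⟩ := Finset.card_pos.mp (by omega : 0 < (((Finset.univ.erase v1).erase v2).erase v3).card)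
  have hc4 : ((((Finset.univ.erase v1).erase v2).erase v3).erase v4).card = 2 := by rw [Finset.card_erase_of_mem hv4, hc3]
  have t4_3 := hv4
  have n34 : v3 ≠ v4 := Ne.symm (Finset.mem_erase.mp t4_3).1
  have t4_2 := (Finset.mem_erase.mp t4_3).2
  have n24 : v2 ≠ v4 := Ne.symm (Finset.mem_erase.mp t4_2).1
  have t4_1 := (Finset.mem_erase.mp t4_2).2
  have n14 : v1 ≠ v4 := Ne.symm (Finset.mem_erase.mp t4_1).1
  obtain ⟨v5, hv5⟩ := Finset.card_pos.mp (by omega : 0 < ((((Finset.univ.erase v1).erase v2).erase v3).erase v4).card)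
  have hc5 : (((((Finset.univ.erase v1).erase v2).erase v3).erase v4).erase v5).card = 1 := by rw [Finset.card_erase_of_mem hv5, hc4]
  have t5_4 := hv5
  have n45 : v4 ≠ v5 := Ne.symm (Finset.mem_erase.mp t5_4).1
  have t5_3 := (Finset.mem_erase.mp t5_4).2
  have n35 : v3 ≠ v5 := Ne.symm (Finset.mem_erase.mp t5_3).1
  have t5_2 := (Finset.mem_erase.mp t5_3).2
  have n25 : v2 ≠ v5 := Ne.symm (Finset.mem_erase.mp t5_2).1
  have t5_1 := (Finset.mem_erase.mp t5_2).2
  have n15 : v1 ≠ v5 := Ne.symm (Finset.mem_erase.mp t5_1).1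
  obtain ⟨v6, hv6⟩ := Finset.card_pos.mp (by omega : 0 < (((((Finset.univ.erase v1).erase v2).erase v3).erase v4).erase v5).card)
  have hc6 : ((((((Finset.univ.erase v1).erase v2).erase v3).erase v4).erase v5).erase v6).card = 0 := by rw [Finset.card_erase_of_mem hv6, hc5]
  have t6_5 := hv6
  have n56 : v5 ≠ v6 := Ne.symm (Finset.mem_erase.mp t6_5).1
  have t6_4 := (Finset.mem_erase.mp t6_5).2
  have n46 : v4 ≠ v6 := Ne.symm (Finset.mem_erase.mp t6_4).1
  have t6_3 := (Finset.mem_erase.mp t6_4).2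
  have n36 : v3 ≠ v6 := Ne.symm (Finset.mem_erase.mp t6_3).1
  have t6_2 := (Finset.mem_erase.mp t6_3).2
  have n26 : v2 ≠ v6 := Ne.symm (Finset.mem_erase.mp t6_2).1
  have t6_1 := (Finset.mem_erase.mp t6_2).2
  have n16 : v1 ≠ v6 := Ne.symm (Finset.mem_erase.mp t6_1).1
  have hcov : ∀ v : V, v = v1 ∨ v = v2 ∨ v = v3 ∨ v = v4 ∨ v = v5 ∨ v = v6 := by
    intro v
    by_cases w1 : v = v1
    · exact Or.inl w1
    have u1 : v ∈ (Finset.univ.erase v1) := Finset.mem_erase.mpr ⟨w1, Finset.mem_univ v⟩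
    by_cases w2 : v = v2
    · exact Or.inr (Or.inl w2)
    have u2 : v ∈ ((Finset.univ.erase v1).erase v2) := Finset.mem_erase.mpr ⟨w2, u1⟩
    by_cases w3 : v = v3
    · exact Or.inr (Or.inr (Or.inl w3))
    have u3 : v ∈ (((Finset.univ.erase v1).erase v2).erase v3) := Finset.mem_erase.mpr ⟨w3, u2⟩
    by_cases w4 : v = v4
    · exact Or.inr (Or.inr (Or.inr (Or.inl w4)))
    have u4 : v ∈ ((((Finset.univ.erase v1).erase v2).erase v3).erase v4) := Finset.mem_erase.mpr ⟨w4, u3⟩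
    by_cases w5 : v = v5
    · exact Or.inr (Or.inr (Or.inr (Or.inr (Or.inl w5))))
    have u5 : v ∈ (((((Finset.univ.erase v1).erase v2).erase v3).erase v4).erase v5) := Finset.mem_erase.mpr ⟨w5, u4⟩
    by_cases w6 : v = v6
    · exact Or.inr (Or.inr (Or.inr (Or.inr (Or.inr (w6)))))
    have u6 : v ∈ ((((((Finset.univ.erase v1).erase v2).erase v3).erase v4).erase v5).erase v6) := Finset.mem_erase.mpr ⟨w6, u5⟩
    exfalso
    rw [Finset.card_eq_zero] at hc6
    rw [hc6] at u6
    exact absurd u6 (Finset.notMem_empty v)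
  obtain ⟨r1, r2, r3, r4, r5, e1, e2, ⟨d12, d13, d14, d15, d23, d24, d25, d34, d35, d45⟩, hiff⟩ :=
    two_disjoint h3 h4 v1 v2 v3 v4 v5 n12 n13 n14 n15 n23 n24 n25 n34 n35 n45
  have hcovr : ∀ v : V, v = r1 ∨ v = r2 ∨ v = r3 ∨ v = r4 ∨ v = r5 ∨ v = v6 := by
    intro v
    rcases hcov v with rfl | rfl | rfl | rfl | rfl | rfl
    · have hh := (hiff v).mpr (by simp)
      rcases hh with rfl | rfl | rfl | rfl | rfl <;> simp
    · have hh := (hiff v).mpr (by simp)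
      rcases hh with rfl | rfl | rfl | rfl | rfl <;> simp
    · have hh := (hiff v).mpr (by simp)
      rcases hh with rfl | rfl | rfl | rfl | rfl <;> simp
    · have hh := (hiff v).mpr (by simp)
      rcases hh with rfl | rfl | rfl | rfl | rfl <;> simp
    · have hh := (hiff v).mpr (by simp)
      rcases hh with rfl | rfl | rfl | rfl | rfl <;> simp
    · simp
  exact colorable_of_pairs r1 r2 r3 r4 r5 r5 v6 v6
    (fun v => by rcases hcovr v with rfl | rfl | rfl | rfl | rfl | rfl <;> simp)
    (compl_nadj e1) (compl_nadj e2) (G.loopless.irrefl r5) (G.loopless.irrefl v6)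

lemma case7 [Fintype V] [DecidableEq V] (h3 : Gᶜ.CliqueFree 3) (h4 : G.CliqueFree 4)
    (hm : Fintype.card V = 7) : G.Colorable 4 := by
  have h0 : (Finset.univ : Finset V).card = 7 := by rw [Finset.card_univ, hm]
  obtain ⟨v1, hv1⟩ := Finset.card_pos.mp (by omega : 0 < (Finset.univ : Finset V).card)
  have hc1 : (Finset.univ.erase v1).card = 6 := by rw [Finset.card_erase_of_mem hv1, h0]
  obtain ⟨v2, hv2⟩ := Finset.card_pos.mp (by omega : 0 < (Finset.univ.erase v1).card)
  have hc2 : ((Finset.univ.erase v1).erase v2).card = 5 := by rw [Finset.card_erase_of_mem hv2, hc1]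
  have t2_1 := hv2
  have n12 : v1 ≠ v2 := Ne.symm (Finset.mem_erase.mp t2_1).1
  obtain ⟨v3, hv3⟩ := Finset.card_pos.mp (by omega : 0 < ((Finset.univ.erase v1).erase v2).card)
  have hc3 : (((Finset.univ.erase v1).erase v2).erase v3).card = 4 := by rw [Finset.card_erase_of_mem hv3, hc2]
  have t3_2 := hv3
  have n23 : v2 ≠ v3 := Ne.symm (Finset.mem_erase.mp t3_2).1
  have t3_1 := (Finset.mem_erase.mp t3_2).2
  have n13 : v1 ≠ v3 := Ne.symm (Finset.mem_erase.mp t3_1).1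
  obtain ⟨v4, hv4⟩ := Finset.card_pos.mp (by omega : 0 < (((Finset.univ.erase v1).erase v2).erase v3).card)
  have hc4 : ((((Finset.univ.erase v1).erase v2).erase v3).erase v4).card = 3 := by rw [Finset.card_erase_of_mem hv4, hc3]
  have t4_3 := hv4
  have n34 : v3 ≠ v4 := Ne.symm (Finset.mem_erase.mp t4_3).1
  have t4_2 := (Finset.mem_erase.mp t4_3).2
  have n24 : v2 ≠ v4 := Ne.symm (Finset.mem_erase.mp t4_2).1
  have t4_1 := (Finset.mem_erase.mp t4_2).2
  have n14 : v1 ≠ v4 := Ne.symm (Finset.mem_erase.mp t4_1).1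
  obtain ⟨v5, hv5⟩ := Finset.card_pos.mp (by omega : 0 < ((((Finset.univ.erase v1).erase v2).erase v3).erase v4).card)
  have hc5 : (((((Finset.univ.erase v1).erase v2).erase v3).erase v4).erase v5).card = 2 := by rw [Finset.card_erase_of_mem hv5, hc4]
  have t5_4 := hv5
  have n45 : v4 ≠ v5 := Ne.symm (Finset.mem_erase.mp t5_4).1
  have t5_3 := (Finset.mem_erase.mp t5_4).2
  have n35 : v3 ≠ v5 := Ne.symm (Finset.mem_erase.mp t5_3).1
  have t5_2 := (Finset.mem_erase.mp t5_3).2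
  have n25 : v2 ≠ v5 := Ne.symm (Finset.mem_erase.mp t5_2).1
  have t5_1 := (Finset.mem_erase.mp t5_2).2
  have n15 : v1 ≠ v5 := Ne.symm (Finset.mem_erase.mp t5_1).1
  obtain ⟨v6, hv6⟩ := Finset.card_pos.mp (by omega : 0 < (((((Finset.univ.erase v1).erase v2).erase v3).erase v4).erase v5).card)
  have hc6 : ((((((Finset.univ.erase v1).erase v2).erase v3).erase v4).erase v5).erase v6).card = 1 := by rw [Finset.card_erase_of_mem hv6, hc5]
  have t6_5 := hv6
  have n56 : v5 ≠ v6 := Ne.symm (Finset.mem_erase.mp t6_5).1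
  have t6_4 := (Finset.mem_erase.mp t6_5).2
  have n46 : v4 ≠ v6 := Ne.symm (Finset.mem_erase.mp t6_4).1
  have t6_3 := (Finset.mem_erase.mp t6_4).2
  have n36 : v3 ≠ v6 := Ne.symm (Finset.mem_erase.mp t6_3).1
  have t6_2 := (Finset.mem_erase.mp t6_3).2
  have n26 : v2 ≠ v6 := Ne.symm (Finset.mem_erase.mp t6_2).1
  have t6_1 := (Finset.mem_erase.mp t6_2).2
  have n16 : v1 ≠ v6 := Ne.symm (Finset.mem_erase.mp t6_1).1
  obtain ⟨v7, hv7⟩ := Finset.card_pos.mp (by omega : 0 < ((((((Finset.univ.erase v1).erase v2).erase v3).erase v4).erase v5).erase v6).card)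
  have hc7 : (((((((Finset.univ.erase v1).erase v2).erase v3).erase v4).erase v5).erase v6).erase v7).card = 0 := by rw [Finset.card_erase_of_mem hv7, hc6]
  have t7_6 := hv7
  have n67 : v6 ≠ v7 := Ne.symm (Finset.mem_erase.mp t7_6).1
  have t7_5 := (Finset.mem_erase.mp t7_6).2
  have n57 : v5 ≠ v7 := Ne.symm (Finset.mem_erase.mp t7_5).1
  have t7_4 := (Finset.mem_erase.mp t7_5).2
  have n47 : v4 ≠ v7 := Ne.symm (Finset.mem_erase.mp t7_4).1
  have t7_3 := (Finset.mem_erase.mp t7_4).2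
  have n37 : v3 ≠ v7 := Ne.symm (Finset.mem_erase.mp t7_3).1
  have t7_2 := (Finset.mem_erase.mp t7_3).2
  have n27 : v2 ≠ v7 := Ne.symm (Finset.mem_erase.mp t7_2).1
  have t7_1 := (Finset.mem_erase.mp t7_2).2
  have n17 : v1 ≠ v7 := Ne.symm (Finset.mem_erase.mp t7_1).1
  have hcov : ∀ v : V, v = v1 ∨ v = v2 ∨ v = v3 ∨ v = v4 ∨ v = v5 ∨ v = v6 ∨ v = v7 := by
    intro v
    by_cases w1 : v = v1
    · exact Or.inl w1
    have u1 : v ∈ (Finset.univ.erase v1) := Finset.mem_erase.mpr ⟨w1, Finset.mem_univ v⟩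
    by_cases w2 : v = v2
    · exact Or.inr (Or.inl w2)
    have u2 : v ∈ ((Finset.univ.erase v1).erase v2) := Finset.mem_erase.mpr ⟨w2, u1⟩
    by_cases w3 : v = v3
    · exact Or.inr (Or.inr (Or.inl w3))
    have u3 : v ∈ (((Finset.univ.erase v1).erase v2).erase v3) := Finset.mem_erase.mpr ⟨w3, u2⟩
    by_cases w4 : v = v4
    · exact Or.inr (Or.inr (Or.inr (Or.inl w4)))
    have u4 : v ∈ ((((Finset.univ.erase v1).erase v2).erase v3).erase v4) := Finset.mem_erase.mpr ⟨w4, u3⟩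
    by_cases w5 : v = v5
    · exact Or.inr (Or.inr (Or.inr (Or.inr (Or.inl w5))))
    have u5 : v ∈ (((((Finset.univ.erase v1).erase v2).erase v3).erase v4).erase v5) := Finset.mem_erase.mpr ⟨w5, u4⟩
    by_cases w6 : v = v6
    · exact Or.inr (Or.inr (Or.inr (Or.inr (Or.inr (Or.inl w6)))))
    have u6 : v ∈ ((((((Finset.univ.erase v1).erase v2).erase v3).erase v4).erase v5).erase v6) := Finset.mem_erase.mpr ⟨w6, u5⟩
    by_cases w7 : v = v7
    · exact Or.inr (Or.inr (Or.inr (Or.inr (Or.inr (Or.inr (w7))))))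
    have u7 : v ∈ (((((((Finset.univ.erase v1).erase v2).erase v3).erase v4).erase v5).erase v6).erase v7) := Finset.mem_erase.mpr ⟨w7, u6⟩
    exfalso
    rw [Finset.card_eq_zero] at hc7
    rw [hc7] at u7
    exact absurd u7 (Finset.notMem_empty v)
  obtain ⟨r1, r2, r3, r4, r5, e1, e2, ⟨d12, d13, d14, d15, d23, d24, d25, d34, d35, d45⟩, hiff⟩ :=
    two_disjoint h3 h4 v1 v2 v3 v4 v5 n12 n13 n14 n15 n23 n24 n25 n34 n35 n45
  have hr1 : r1 = v1 ∨ r1 = v2 ∨ r1 = v3 ∨ r1 = v4 ∨ r1 = v5 := (hiff r1).mp (by simp)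
  have m16 : r1 ≠ v6 := by
    rcases hr1 with rfl | rfl | rfl | rfl | rfl
    exacts [n16, n26, n36, n46, n56]
  have m17 : r1 ≠ v7 := by
    rcases hr1 with rfl | rfl | rfl | rfl | rfl
    exacts [n17, n27, n37, n47, n57]
  have hr2 : r2 = v1 ∨ r2 = v2 ∨ r2 = v3 ∨ r2 = v4 ∨ r2 = v5 := (hiff r2).mp (by simp)
  have m26 : r2 ≠ v6 := by
    rcases hr2 with rfl | rfl | rfl | rfl | rfl
    exacts [n16, n26, n36, n46, n56]
  have m27 : r2 ≠ v7 := by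
    rcases hr2 with rfl | rfl | rfl | rfl | rfl
    exacts [n17, n27, n37, n47, n57]
  have hr5 : r5 = v1 ∨ r5 = v2 ∨ r5 = v3 ∨ r5 = v4 ∨ r5 = v5 := (hiff r5).mp (by simp)
  have m56 : r5 ≠ v6 := by
    rcases hr5 with rfl | rfl | rfl | rfl | rfl
    exacts [n16, n26, n36, n46, n56]
  have m57 : r5 ≠ v7 := by
    rcases hr5 with rfl | rfl | rfl | rfl | rfl
    exacts [n17, n27, n37, n47, n57]
  have hcovr : ∀ v : V, v = r1 ∨ v = r2 ∨ v = r3 ∨ v = r4 ∨ v = r5 ∨ v = v6 ∨ v = v7 := by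
    intro v
    rcases hcov v with rfl | rfl | rfl | rfl | rfl | rfl | rfl
    · have hh := (hiff v).mpr (by simp)
      rcases hh with rfl | rfl | rfl | rfl | rfl <;> simp
    · have hh := (hiff v).mpr (by simp)
      rcases hh with rfl | rfl | rfl | rfl | rfl <;> simp
    · have hh := (hiff v).mpr (by simp)
      rcases hh with rfl | rfl | rfl | rfl | rfl <;> simp
    · have hh := (hiff v).mpr (by simp)
      rcases hh with rfl | rfl | rfl | rfl | rfl <;> simp
    · have hh := (hiff v).mpr (by simp)
      rcases hh with rfl | rfl | rfl | rfl | rfl <;> simp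
    · simp
    · simp
  by_cases t1 : Gᶜ.Adj r5 v6
  · exact colorable_of_pairs r1 r2 r3 r4 r5 v6 v7 v7
      (fun v => by rcases hcovr v with rfl | rfl | rfl | rfl | rfl | rfl | rfl <;> simp)
      (compl_nadj e1) (compl_nadj e2) (compl_nadj t1) (G.loopless.irrefl v7)
  by_cases t2 : Gᶜ.Adj r5 v7
  · exact colorable_of_pairs r1 r2 r3 r4 r5 v7 v6 v6
      (fun v => by rcases hcovr v with rfl | rfl | rfl | rfl | rfl | rfl | rfl <;> simp)
      (compl_nadj e1) (compl_nadj e2) (compl_nadj t2) (G.loopless.irrefl v6)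
  by_cases t3 : Gᶜ.Adj v6 v7
  · exact colorable_of_pairs r1 r2 r3 r4 v6 v7 r5 r5
      (fun v => by rcases hcovr v with rfl | rfl | rfl | rfl | rfl | rfl | rfl <;> simp)
      (compl_nadj e1) (compl_nadj e2) (compl_nadj t3) (G.loopless.irrefl r5)
  have ha : Gᶜ.Adj r1 r5 ∨ Gᶜ.Adj r1 v6 ∨ Gᶜ.Adj r1 v7 := by
    by_contra hcon
    push_neg at hcon
    exact no_indep4 h4 d15 m16 m17 m56 m57 n67 hcon.1 hcon.2.1 hcon.2.2 t1 t2 t3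
  have hb : Gᶜ.Adj r2 r5 ∨ Gᶜ.Adj r2 v6 ∨ Gᶜ.Adj r2 v7 := by
    by_contra hcon
    push_neg at hcon
    exact no_indep4 h4 d25 m26 m27 m56 m57 n67 hcon.1 hcon.2.1 hcon.2.2 t1 t2 t3
  rcases ha with h | h | h <;> rcases hb with g | g | g
  · exact (no_tri h3 e1 h g).elim
  · exact colorable_of_pairs r1 r5 r2 v6 r3 r4 v7 v7
      (fun v => by rcases hcovr v with rfl | rfl | rfl | rfl | rfl | rfl | rfl <;> simp)
      (compl_nadj h) (compl_nadj g) (compl_nadj e2) (G.loopless.irrefl v7)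
  · exact colorable_of_pairs r1 r5 r2 v7 r3 r4 v6 v6
      (fun v => by rcases hcovr v with rfl | rfl | rfl | rfl | rfl | rfl | rfl <;> simp)
      (compl_nadj h) (compl_nadj g) (compl_nadj e2) (G.loopless.irrefl v6)
  · exact colorable_of_pairs r1 v6 r2 r5 r3 r4 v7 v7
      (fun v => by rcases hcovr v with rfl | rfl | rfl | rfl | rfl | rfl | rfl <;> simp)
      (compl_nadj h) (compl_nadj g) (compl_nadj e2) (G.loopless.irrefl v7)
  · exact (no_tri h3 e1 h g).elim
  · exact colorable_of_pairs r1 v6 r2 v7 r3 r4 r5 r5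
      (fun v => by rcases hcovr v with rfl | rfl | rfl | rfl | rfl | rfl | rfl <;> simp)
      (compl_nadj h) (compl_nadj g) (compl_nadj e2) (G.loopless.irrefl r5)
  · exact colorable_of_pairs r1 v7 r2 r5 r3 r4 v6 v6
      (fun v => by rcases hcovr v with rfl | rfl | rfl | rfl | rfl | rfl | rfl <;> simp)
      (compl_nadj h) (compl_nadj g) (compl_nadj e2) (G.loopless.irrefl v6)
  · exact colorable_of_pairs r1 v7 r2 v6 r3 r4 r5 r5
      (fun v => by rcases hcovr v with rfl | rfl | rfl | rfl | rfl | rfl | rfl <;> simp)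
      (compl_nadj h) (compl_nadj g) (compl_nadj e2) (G.loopless.irrefl r5)
  · exact (no_tri h3 e1 h g).elim

lemma case8 [Fintype V] [DecidableEq V] (h3 : Gᶜ.CliqueFree 3) (h4 : G.CliqueFree 4)
    (hm : Fintype.card V = 8) : G.Colorable 4 := by
  have h0 : (Finset.univ : Finset V).card = 8 := by rw [Finset.card_univ, hm]
  obtain ⟨v1, hv1⟩ := Finset.card_pos.mp (by omega : 0 < (Finset.univ : Finset V).card)
  have hc1 : (Finset.univ.erase v1).card = 7 := by rw [Finset.card_erase_of_mem hv1, h0]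
  obtain ⟨v2, hv2⟩ := Finset.card_pos.mp (by omega : 0 < (Finset.univ.erase v1).card)
  have hc2 : ((Finset.univ.erase v1).erase v2).card = 6 := by rw [Finset.card_erase_of_mem hv2, hc1]
  have t2_1 := hv2
  have n12 : v1 ≠ v2 := Ne.symm (Finset.mem_erase.mp t2_1).1
  obtain ⟨v3, hv3⟩ := Finset.card_pos.mp (by omega : 0 < ((Finset.univ.erase v1).erase v2).card)
  have hc3 : (((Finset.univ.erase v1).erase v2).erase v3).card = 5 := by rw [Finset.card_erase_of_mem hv3, hc2]
  have t3_2 := hv3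
  have n23 : v2 ≠ v3 := Ne.symm (Finset.mem_erase.mp t3_2).1
  have t3_1 := (Finset.mem_erase.mp t3_2).2
  have n13 : v1 ≠ v3 := Ne.symm (Finset.mem_erase.mp t3_1).1
  obtain ⟨v4, hv4⟩ := Finset.card_pos.mp (by omega : 0 < (((Finset.univ.erase v1).erase v2).erase v3).card)
  have hc4 : ((((Finset.univ.erase v1).erase v2).erase v3).erase v4).card = 4 := by rw [Finset.card_erase_of_mem hv4, hc3]
  have t4_3 := hv4
  have n34 : v3 ≠ v4 := Ne.symm (Finset.mem_erase.mp t4_3).1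
  have t4_2 := (Finset.mem_erase.mp t4_3).2
  have n24 : v2 ≠ v4 := Ne.symm (Finset.mem_erase.mp t4_2).1
  have t4_1 := (Finset.mem_erase.mp t4_2).2
  have n14 : v1 ≠ v4 := Ne.symm (Finset.mem_erase.mp t4_1).1
  obtain ⟨v5, hv5⟩ := Finset.card_pos.mp (by omega : 0 < ((((Finset.univ.erase v1).erase v2).erase v3).erase v4).card)
  have hc5 : (((((Finset.univ.erase v1).erase v2).erase v3).erase v4).erase v5).card = 3 := by rw [Finset.card_erase_of_mem hv5, hc4]
  have t5_4 := hv5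
  have n45 : v4 ≠ v5 := Ne.symm (Finset.mem_erase.mp t5_4).1
  have t5_3 := (Finset.mem_erase.mp t5_4).2
  have n35 : v3 ≠ v5 := Ne.symm (Finset.mem_erase.mp t5_3).1
  have t5_2 := (Finset.mem_erase.mp t5_3).2
  have n25 : v2 ≠ v5 := Ne.symm (Finset.mem_erase.mp t5_2).1
  have t5_1 := (Finset.mem_erase.mp t5_2).2
  have n15 : v1 ≠ v5 := Ne.symm (Finset.mem_erase.mp t5_1).1
  obtain ⟨v6, hv6⟩ := Finset.card_pos.mp (by omega : 0 < (((((Finset.univ.erase v1).erase v2).erase v3).erase v4).erase v5).card)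
  have hc6 : ((((((Finset.univ.erase v1).erase v2).erase v3).erase v4).erase v5).erase v6).card = 2 := by rw [Finset.card_erase_of_mem hv6, hc5]
  have t6_5 := hv6
  have n56 : v5 ≠ v6 := Ne.symm (Finset.mem_erase.mp t6_5).1
  have t6_4 := (Finset.mem_erase.mp t6_5).2
  have n46 : v4 ≠ v6 := Ne.symm (Finset.mem_erase.mp t6_4).1
  have t6_3 := (Finset.mem_erase.mp t6_4).2
  have n36 : v3 ≠ v6 := Ne.symm (Finset.mem_erase.mp t6_3).1
  have t6_2 := (Finset.mem_erase.mp t6_3).2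
  have n26 : v2 ≠ v6 := Ne.symm (Finset.mem_erase.mp t6_2).1
  have t6_1 := (Finset.mem_erase.mp t6_2).2
  have n16 : v1 ≠ v6 := Ne.symm (Finset.mem_erase.mp t6_1).1
  obtain ⟨v7, hv7⟩ := Finset.card_pos.mp (by omega : 0 < ((((((Finset.univ.erase v1).erase v2).erase v3).erase v4).erase v5).erase v6).card)
  have hc7 : (((((((Finset.univ.erase v1).erase v2).erase v3).erase v4).erase v5).erase v6).erase v7).card = 1 := by rw [Finset.card_erase_of_mem hv7, hc6]
  have t7_6 := hv7
  have n67 : v6 ≠ v7 := Ne.symm (Finset.mem_erase.mp t7_6).1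
  have t7_5 := (Finset.mem_erase.mp t7_6).2
  have n57 : v5 ≠ v7 := Ne.symm (Finset.mem_erase.mp t7_5).1
  have t7_4 := (Finset.mem_erase.mp t7_5).2
  have n47 : v4 ≠ v7 := Ne.symm (Finset.mem_erase.mp t7_4).1
  have t7_3 := (Finset.mem_erase.mp t7_4).2
  have n37 : v3 ≠ v7 := Ne.symm (Finset.mem_erase.mp t7_3).1
  have t7_2 := (Finset.mem_erase.mp t7_3).2
  have n27 : v2 ≠ v7 := Ne.symm (Finset.mem_erase.mp t7_2).1
  have t7_1 := (Finset.mem_erase.mp t7_2).2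
  have n17 : v1 ≠ v7 := Ne.symm (Finset.mem_erase.mp t7_1).1
  obtain ⟨v8, hv8⟩ := Finset.card_pos.mp (by omega : 0 < (((((((Finset.univ.erase v1).erase v2).erase v3).erase v4).erase v5).erase v6).erase v7).card)
  have hc8 : ((((((((Finset.univ.erase v1).erase v2).erase v3).erase v4).erase v5).erase v6).erase v7).erase v8).card = 0 := by rw [Finset.card_erase_of_mem hv8, hc7]
  have t8_7 := hv8
  have n78 : v7 ≠ v8 := Ne.symm (Finset.mem_erase.mp t8_7).1
  have t8_6 := (Finset.mem_erase.mp t8_7).2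
  have n68 : v6 ≠ v8 := Ne.symm (Finset.mem_erase.mp t8_6).1
  have t8_5 := (Finset.mem_erase.mp t8_6).2
  have n58 : v5 ≠ v8 := Ne.symm (Finset.mem_erase.mp t8_5).1
  have t8_4 := (Finset.mem_erase.mp t8_5).2
  have n48 : v4 ≠ v8 := Ne.symm (Finset.mem_erase.mp t8_4).1
  have t8_3 := (Finset.mem_erase.mp t8_4).2
  have n38 : v3 ≠ v8 := Ne.symm (Finset.mem_erase.mp t8_3).1
  have t8_2 := (Finset.mem_erase.mp t8_3).2
  have n28 : v2 ≠ v8 := Ne.symm (Finset.mem_erase.mp t8_2).1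
  have t8_1 := (Finset.mem_erase.mp t8_2).2
  have n18 : v1 ≠ v8 := Ne.symm (Finset.mem_erase.mp t8_1).1
  have hcov : ∀ v : V, v = v1 ∨ v = v2 ∨ v = v3 ∨ v = v4 ∨ v = v5 ∨ v = v6 ∨ v = v7 ∨ v = v8 := by
    intro v
    by_cases w1 : v = v1
    · exact Or.inl w1
    have u1 : v ∈ (Finset.univ.erase v1) := Finset.mem_erase.mpr ⟨w1, Finset.mem_univ v⟩
    by_cases w2 : v = v2
    · exact Or.inr (Or.inl w2)
    have u2 : v ∈ ((Finset.univ.erase v1).erase v2) := Finset.mem_erase.mpr ⟨w2, u1⟩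
    by_cases w3 : v = v3
    · exact Or.inr (Or.inr (Or.inl w3))
    have u3 : v ∈ (((Finset.univ.erase v1).erase v2).erase v3) := Finset.mem_erase.mpr ⟨w3, u2⟩
    by_cases w4 : v = v4
    · exact Or.inr (Or.inr (Or.inr (Or.inl w4)))
    have u4 : v ∈ ((((Finset.univ.erase v1).erase v2).erase v3).erase v4) := Finset.mem_erase.mpr ⟨w4, u3⟩
    by_cases w5 : v = v5
    · exact Or.inr (Or.inr (Or.inr (Or.inr (Or.inl w5))))
    have u5 : v ∈ (((((Finset.univ.erase v1).erase v2).erase v3).erase v4).erase v5) := Finset.mem_erase.mpr ⟨w5, u4⟩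
    by_cases w6 : v = v6
    · exact Or.inr (Or.inr (Or.inr (Or.inr (Or.inr (Or.inl w6)))))
    have u6 : v ∈ ((((((Finset.univ.erase v1).erase v2).erase v3).erase v4).erase v5).erase v6) := Finset.mem_erase.mpr ⟨w6, u5⟩
    by_cases w7 : v = v7
    · exact Or.inr (Or.inr (Or.inr (Or.inr (Or.inr (Or.inr (Or.inl w7))))))
    have u7 : v ∈ (((((((Finset.univ.erase v1).erase v2).erase v3).erase v4).erase v5).erase v6).erase v7) := Finset.mem_erase.mpr ⟨w7, u6⟩
    by_cases w8 : v = v8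
    · exact Or.inr (Or.inr (Or.inr (Or.inr (Or.inr (Or.inr (Or.inr (w8)))))))
    have u8 : v ∈ ((((((((Finset.univ.erase v1).erase v2).erase v3).erase v4).erase v5).erase v6).erase v7).erase v8) := Finset.mem_erase.mpr ⟨w8, u7⟩
    exfalso
    rw [Finset.card_eq_zero] at hc8
    rw [hc8] at u8
    exact absurd u8 (Finset.notMem_empty v)
  obtain ⟨r1, r2, r3, r4, r5, e1, e2, ⟨d12, d13, d14, d15, d23, d24, d25, d34, d35, d45⟩, hiff⟩ :=
    two_disjoint h3 h4 v1 v2 v3 v4 v5 n12 n13 n14 n15 n23 n24 n25 n34 n35 n45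
  have hr1 : r1 = v1 ∨ r1 = v2 ∨ r1 = v3 ∨ r1 = v4 ∨ r1 = v5 := (hiff r1).mp (by simp)
  have m16 : r1 ≠ v6 := by
    rcases hr1 with rfl | rfl | rfl | rfl | rfl
    exacts [n16, n26, n36, n46, n56]
  have m17 : r1 ≠ v7 := by
    rcases hr1 with rfl | rfl | rfl | rfl | rfl
    exacts [n17, n27, n37, n47, n57]
  have m18 : r1 ≠ v8 := by
    rcases hr1 with rfl | rfl | rfl | rfl | rfl
    exacts [n18, n28, n38, n48, n58]
  have hr2 : r2 = v1 ∨ r2 = v2 ∨ r2 = v3 ∨ r2 = v4 ∨ r2 = v5 := (hiff r2).mp (by simp)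
  have m26 : r2 ≠ v6 := by
    rcases hr2 with rfl | rfl | rfl | rfl | rfl
    exacts [n16, n26, n36, n46, n56]
  have m27 : r2 ≠ v7 := by
    rcases hr2 with rfl | rfl | rfl | rfl | rfl
    exacts [n17, n27, n37, n47, n57]
  have m28 : r2 ≠ v8 := by
    rcases hr2 with rfl | rfl | rfl | rfl | rfl
    exacts [n18, n28, n38, n48, n58]
  have hr3 : r3 = v1 ∨ r3 = v2 ∨ r3 = v3 ∨ r3 = v4 ∨ r3 = v5 := (hiff r3).mp (by simp)
  have m36 : r3 ≠ v6 := by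
    rcases hr3 with rfl | rfl | rfl | rfl | rfl
    exacts [n16, n26, n36, n46, n56]
  have m37 : r3 ≠ v7 := by
    rcases hr3 with rfl | rfl | rfl | rfl | rfl
    exacts [n17, n27, n37, n47, n57]
  have m38 : r3 ≠ v8 := by
    rcases hr3 with rfl | rfl | rfl | rfl | rfl
    exacts [n18, n28, n38, n48, n58]
  have hr4 : r4 = v1 ∨ r4 = v2 ∨ r4 = v3 ∨ r4 = v4 ∨ r4 = v5 := (hiff r4).mp (by simp)
  have m46 : r4 ≠ v6 := by
    rcases hr4 with rfl | rfl | rfl | rfl | rfl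
    exacts [n16, n26, n36, n46, n56]
  have m47 : r4 ≠ v7 := by
    rcases hr4 with rfl | rfl | rfl | rfl | rfl
    exacts [n17, n27, n37, n47, n57]
  have m48 : r4 ≠ v8 := by
    rcases hr4 with rfl | rfl | rfl | rfl | rfl
    exacts [n18, n28, n38, n48, n58]
  have hr5 : r5 = v1 ∨ r5 = v2 ∨ r5 = v3 ∨ r5 = v4 ∨ r5 = v5 := (hiff r5).mp (by simp)
  have m56 : r5 ≠ v6 := by
    rcases hr5 with rfl | rfl | rfl | rfl | rfl
    exacts [n16, n26, n36, n46, n56]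
  have m57 : r5 ≠ v7 := by
    rcases hr5 with rfl | rfl | rfl | rfl | rfl
    exacts [n17, n27, n37, n47, n57]
  have m58 : r5 ≠ v8 := by
    rcases hr5 with rfl | rfl | rfl | rfl | rfl
    exacts [n18, n28, n38, n48, n58]
  have hcovr : ∀ v : V, v = r1 ∨ v = r2 ∨ v = r3 ∨ v = r4 ∨ v = r5 ∨ v = v6 ∨ v = v7 ∨ v = v8 := by
    intro v
    rcases hcov v with rfl | rfl | rfl | rfl | rfl | rfl | rfl | rfl
    · have hh := (hiff v).mpr (by simp)
      rcases hh with rfl | rfl | rfl | rfl | rfl <;> simp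
    · have hh := (hiff v).mpr (by simp)
      rcases hh with rfl | rfl | rfl | rfl | rfl <;> simp
    · have hh := (hiff v).mpr (by simp)
      rcases hh with rfl | rfl | rfl | rfl | rfl <;> simp
    · have hh := (hiff v).mpr (by simp)
      rcases hh with rfl | rfl | rfl | rfl | rfl <;> simp
    · have hh := (hiff v).mpr (by simp)
      rcases hh with rfl | rfl | rfl | rfl | rfl <;> simp
    · simp
    · simp
    · simp
  have hndr : ([r1, r2, r3, r4, r5, v6, v7, v8] : List V).Nodup := by
    simp [d12, d13, d14, d15, d23, d24, d25, d34, d35, d45, m16, m17, m18, m26, m27, m28,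
      m36, m37, m38, m46, m47, m48, m56, m57, m58, n67, n68, n78]
  have hcardr : ({r1, r2, r3, r4, r5, v6, v7, v8} : Finset V).card = 8 :=
    card_eight_of_nodup hndr
  by_cases p1 : Gᶜ.Adj r5 v6
  · by_cases pxy : Gᶜ.Adj v7 v8
    · exact colorable_of_pairs r1 r2 r3 r4 r5 v6 v7 v8
        (fun v => by rcases hcovr v with rfl | rfl | rfl | rfl | rfl | rfl | rfl | rfl <;> simp)
        (compl_nadj e1) (compl_nadj e2) (compl_nadj p1) (compl_nadj pxy)
    · exact stage2 h3 h4 r1 r2 r3 r4 r5 v6 v7 v8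
        (fun v => by rcases hcovr v with rfl | rfl | rfl | rfl | rfl | rfl | rfl | rfl <;> simp)
        hcardr
        e1 e2 p1 pxy
  by_cases p2 : Gᶜ.Adj r5 v7
  · by_cases pxy : Gᶜ.Adj v6 v8
    · exact colorable_of_pairs r1 r2 r3 r4 r5 v7 v6 v8
        (fun v => by rcases hcovr v with rfl | rfl | rfl | rfl | rfl | rfl | rfl | rfl <;> simp)
        (compl_nadj e1) (compl_nadj e2) (compl_nadj p2) (compl_nadj pxy)
    · exact stage2 h3 h4 r1 r2 r3 r4 r5 v7 v6 v8
        (fun v => by rcases hcovr v with rfl | rfl | rfl | rfl | rfl | rfl | rfl | rfl <;> simp)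
        (by rw [show ({r1, r2, r3, r4, r5, v7, v6, v8} : Finset V) = ({r1, r2, r3, r4, r5, v6, v7, v8} : Finset V) from by
              ext z
              simp only [Finset.mem_insert, Finset.mem_singleton]
              constructor <;> rintro (rfl | rfl | rfl | rfl | rfl | rfl | rfl | rfl) <;> simp]
            exact hcardr)
        e1 e2 p2 pxy
  by_cases p3 : Gᶜ.Adj r5 v8
  · by_cases pxy : Gᶜ.Adj v6 v7
    · exact colorable_of_pairs r1 r2 r3 r4 r5 v8 v6 v7
        (fun v => by rcases hcovr v with rfl | rfl | rfl | rfl | rfl | rfl | rfl | rfl <;> simp)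
        (compl_nadj e1) (compl_nadj e2) (compl_nadj p3) (compl_nadj pxy)
    · exact stage2 h3 h4 r1 r2 r3 r4 r5 v8 v6 v7
        (fun v => by rcases hcovr v with rfl | rfl | rfl | rfl | rfl | rfl | rfl | rfl <;> simp)
        (by rw [show ({r1, r2, r3, r4, r5, v8, v6, v7} : Finset V) = ({r1, r2, r3, r4, r5, v6, v7, v8} : Finset V) from by
              ext z
              simp only [Finset.mem_insert, Finset.mem_singleton]
              constructor <;> rintro (rfl | rfl | rfl | rfl | rfl | rfl | rfl | rfl) <;> simp]
            exact hcardr)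
        e1 e2 p3 pxy
  by_cases p4 : Gᶜ.Adj v6 v7
  · by_cases pxy : Gᶜ.Adj r5 v8
    · exact colorable_of_pairs r1 r2 r3 r4 v6 v7 r5 v8
        (fun v => by rcases hcovr v with rfl | rfl | rfl | rfl | rfl | rfl | rfl | rfl <;> simp)
        (compl_nadj e1) (compl_nadj e2) (compl_nadj p4) (compl_nadj pxy)
    · exact stage2 h3 h4 r1 r2 r3 r4 v6 v7 r5 v8
        (fun v => by rcases hcovr v with rfl | rfl | rfl | rfl | rfl | rfl | rfl | rfl <;> simp)
        (by rw [show ({r1, r2, r3, r4, v6, v7, r5, v8} : Finset V) = ({r1, r2, r3, r4, r5, v6, v7, v8} : Finset V) from by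
              ext z
              simp only [Finset.mem_insert, Finset.mem_singleton]
              constructor <;> rintro (rfl | rfl | rfl | rfl | rfl | rfl | rfl | rfl) <;> simp]
            exact hcardr)
        e1 e2 p4 pxy
  by_cases p5 : Gᶜ.Adj v6 v8
  · by_cases pxy : Gᶜ.Adj r5 v7
    · exact colorable_of_pairs r1 r2 r3 r4 v6 v8 r5 v7
        (fun v => by rcases hcovr v with rfl | rfl | rfl | rfl | rfl | rfl | rfl | rfl <;> simp)
        (compl_nadj e1) (compl_nadj e2) (compl_nadj p5) (compl_nadj pxy)
    · exact stage2 h3 h4 r1 r2 r3 r4 v6 v8 r5 v7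
        (fun v => by rcases hcovr v with rfl | rfl | rfl | rfl | rfl | rfl | rfl | rfl <;> simp)
        (by rw [show ({r1, r2, r3, r4, v6, v8, r5, v7} : Finset V) = ({r1, r2, r3, r4, r5, v6, v7, v8} : Finset V) from by
              ext z
              simp only [Finset.mem_insert, Finset.mem_singleton]
              constructor <;> rintro (rfl | rfl | rfl | rfl | rfl | rfl | rfl | rfl) <;> simp]
            exact hcardr)
        e1 e2 p5 pxy
  by_cases p6 : Gᶜ.Adj v7 v8
  · by_cases pxy : Gᶜ.Adj r5 v6
    · exact colorable_of_pairs r1 r2 r3 r4 v7 v8 r5 v6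
        (fun v => by rcases hcovr v with rfl | rfl | rfl | rfl | rfl | rfl | rfl | rfl <;> simp)
        (compl_nadj e1) (compl_nadj e2) (compl_nadj p6) (compl_nadj pxy)
    · exact stage2 h3 h4 r1 r2 r3 r4 v7 v8 r5 v6
        (fun v => by rcases hcovr v with rfl | rfl | rfl | rfl | rfl | rfl | rfl | rfl <;> simp)
        (by rw [show ({r1, r2, r3, r4, v7, v8, r5, v6} : Finset V) = ({r1, r2, r3, r4, r5, v6, v7, v8} : Finset V) from by
              ext z
              simp only [Finset.mem_insert, Finset.mem_singleton]
              constructor <;> rintro (rfl | rfl | rfl | rfl | rfl | rfl | rfl | rfl) <;> simp]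
            exact hcardr)
        e1 e2 p6 pxy
  exact (no_indep4 h4 m56 m57 m58 n67 n68 n78 p1 p2 p3 p4 p5 p6).elim

lemma main_colorable [Fintype V] (h3 : Gᶜ.CliqueFree 3) (h4 : G.CliqueFree 4) :
    G.Colorable 4 := by
  classical
  rcases le_or_gt (Fintype.card V) 4 with hle | hgt
  · exact (SimpleGraph.colorable_of_fintype G).mono hle
  by_cases hm5 : Fintype.card V = 5
  · exact case5 h3 h4 hm5
  by_cases hm6 : Fintype.card V = 6
  · exact case6 h3 h4 hm6
  by_cases hm7 : Fintype.card V = 7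
  · exact case7 h3 h4 hm7
  by_cases hm8 : Fintype.card V = 8
  · exact case8 h3 h4 hm8
  by_cases hm9 : Fintype.card V = 9
  · exact (card_nine h3 h4 hm9).elim
  exact (card_big h3 h4 (by omega)).elim

end ChromK4

/-- If `G` is a finite simple graph that is `3K₁`-free (no independent set
of size 3, i.e. its complement is triangle-free) and `K_4`-free, then
`χ(G) ≤ 4`. -/
theorem chromatic_bound_K4 (V : Type*) [Fintype V] (G : SimpleGraph V)
    (h3K1 : Gᶜ.CliqueFree 3) (hKfree : G.CliqueFree 4) :
    G.chromaticNumber ≤ 4 := by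
  classical
  have hc : G.Colorable 4 := ChromK4.main_colorable h3K1 hKfree
  exact_mod_cast hc.chromaticNumber_le
end

section
/- Let G be a finite simple graph that is 3K₁-free and K₅-free. Then the chromatic number of G satisfies χ(G) ≤ 7. -/
open Finset
namespace ChromB
variable {V : Type*}

lemma adj_of_not_compl {G : SimpleGraph V} {u v : V} (hne : u ≠ v) (h : ¬Gᶜ.Adj u v) :
    G.Adj u v := by
  simp only [SimpleGraph.compl_adj] at h; tauto

lemma elim3 [DecidableEq V] {G : SimpleGraph V} (h : G.CliqueFree 3) {a b c : V}
    (hab : G.Adj a b) (hac : G.Adj a c) (hbc : G.Adj b c) : False := by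
  have h1 : G.IsNClique 1 {c} := SimpleGraph.isNClique_singleton.mpr rfl
  have h2 : G.IsNClique 2 (insert b {c}) := h1.insert (by simpa using hbc)
  refine h (insert a (insert b {c})) (h2.insert ?_)
  intro x hx
  simp only [mem_insert, mem_singleton] at hx
  rcases hx with rfl | rfl <;> assumption

lemma compl_induce (G : SimpleGraph V) (s : Set V) : (G.induce s)ᶜ = Gᶜ.induce s := by
  ext a b
  simp only [SimpleGraph.compl_adj, SimpleGraph.comap_adj, Function.Embedding.coe_subtype,
    ne_eq, Subtype.ext_iff]

lemma cliqueFree_induce {G : SimpleGraph V} {n : ℕ} (h : G.CliqueFree n) (s : Set V) :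
    (G.induce s).CliqueFree n :=
  h.comap (SimpleGraph.Embedding.induce s).isContained

lemma ramsey : ∀ (t : ℕ) {W : Type*} [Fintype W] (G : SimpleGraph W),
    Gᶜ.CliqueFree 3 → G.CliqueFree t → 2 * Fintype.card W + 2 ≤ t * (t + 1) := by
  intro t
  induction t with
  | zero =>
    intro W _ G _ h2
    exact absurd (SimpleGraph.isNClique_empty.mpr rfl) (h2 ∅)
  | succ t ih =>
    intro W _ G h1 h2
    classical
    by_contra hn
    push_neg at hn
    have hcard : 2 ≤ (t + 1) * (t + 1 + 1) := by nlinarith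
    have hpos : 0 < Fintype.card W := by omega
    obtain ⟨v⟩ := Fintype.card_pos_iff.mp hpos
    set red : Finset W := univ.filter (fun w => Gᶜ.Adj v w) with hred
    set blue : Finset W := univ.filter (fun w => G.Adj v w) with hblue
    have hsplit : red.card + blue.card + 1 = Fintype.card W := by
      have hdisj : Disjoint red blue := by
        simp only [disjoint_left, hred, hblue, mem_filter, mem_univ, true_and]
        intro a ha hb
        exact ha.2 hb
      have hunion : red ∪ blue = univ.erase v := by
        ext w
        simp only [mem_union, hred, hblue, mem_filter, mem_univ, true_and, mem_erase,
          SimpleGraph.compl_adj]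
        constructor
        · rintro (⟨h, _⟩ | h)
          · exact ⟨fun hw => h hw.symm, trivial⟩
          · exact ⟨fun hw => G.irrefl (hw ▸ h), trivial⟩
        · rintro ⟨h, -⟩
          by_cases hg : G.Adj v w
          · exact Or.inr hg
          · exact Or.inl ⟨fun he => h he.symm, hg⟩
      have := card_union_of_disjoint hdisj
      rw [hunion, card_erase_of_mem (mem_univ v), card_univ] at this
      omega
    by_cases hr : t + 1 ≤ red.card
    · obtain ⟨s, hs, hscard⟩ := exists_subset_card_eq hr
      refine h2 s ⟨?_, hscard⟩
      intro a ha b hb hab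
      have hva : Gᶜ.Adj v a := by
        have := hs ha; simp only [hred, mem_filter] at this; exact this.2
      have hvb : Gᶜ.Adj v b := by
        have := hs hb; simp only [hred, mem_filter] at this; exact this.2
      by_contra hg
      exact elim3 h1 hva hvb (by simp only [SimpleGraph.compl_adj]; exact ⟨hab, hg⟩)
    · push_neg at hr
      set s : Set W := ↑blue with hsdef
      have hadjblue : ∀ x : s, G.Adj v ↑x := by
        rintro ⟨x, hx⟩
        simp only [hsdef, mem_coe, hblue, mem_filter] at hx
        exact hx.2
      have hI1 : (G.induce s)ᶜ.CliqueFree 3 := by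
        rw [compl_induce]; exact cliqueFree_induce h1 s
      have hI2 : (G.induce s).CliqueFree t := by
        intro u hu
        have himg : G.IsNClique t (u.image Subtype.val) := by
          constructor
          · intro a ha b hb hab
            simp only [coe_image, Set.mem_image, mem_coe] at ha hb
            obtain ⟨a', ha', rfl⟩ := ha
            obtain ⟨b', hb', rfl⟩ := hb
            have hne : a' ≠ b' := fun h => hab (by rw [h])
            exact hu.1 ha' hb' hne
          · rw [card_image_of_injective _ Subtype.val_injective, hu.2]
        refine h2 (insert v (u.image Subtype.val)) (himg.insert ?_)
        intro b hb
        simp only [mem_image] at hb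
        obtain ⟨b', -, rfl⟩ := hb
        exact hadjblue b'
      have hIH := ih (G.induce s) hI1 hI2
      have hcards : Fintype.card s = blue.card := by
        simp [hsdef]
      rw [hcards] at hIH
      have hexp : (t + 1) * (t + 1 + 1) = t * (t + 1) + 2 * t + 2 := by ring
      rw [hexp] at hn
      omega

lemma colorable_of_cover [Fintype V] (G : SimpleGraph V) {C : Finset (Finset V)} {n : ℕ}
    (hcard : C.card ≤ n)
    (hcov : ∀ v : V, ∃ c ∈ C, v ∈ c)
    (hind : ∀ c ∈ C, ∀ u ∈ c, ∀ w ∈ c, ¬G.Adj u w) :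
    G.Colorable n := by
  classical
  obtain ⟨emb⟩ : Nonempty (↥C ↪ Fin n) :=
    Function.Embedding.nonempty_of_card_le (by simpa [Fintype.card_coe] using hcard)
  choose f hfC hfm using hcov
  refine ⟨SimpleGraph.Coloring.mk (fun v => emb ⟨f v, hfC v⟩) ?_⟩
  intro u w hadj heq
  have h2 : f u = f w := congrArg Subtype.val (emb.injective heq)
  exact hind (f u) (hfC u) u (hfm u) w (h2 ▸ hfm w) hadj

end ChromB

open ChromB Finset

/-- If `G` is a finite simple graph that is `3K₁`-free (no independent set
of size 3, i.e. its complement is triangle-free) and `K_5`-free, then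
`χ(G) ≤ 7`. -/
theorem chromatic_bound_K5 (V : Type*) [Fintype V] (G : SimpleGraph V)
    (h3K1 : Gᶜ.CliqueFree 3) (hKfree : G.CliqueFree 5) :
    G.chromaticNumber ≤ 7 := by
  classical
  -- a maximum "matching" in the complement, as a family of disjoint pairs
  obtain ⟨P, hPgood, hPmax⟩ :
      ∃ P : Finset (Finset V),
        ((∀ e ∈ P, ∃ u v, Gᶜ.Adj u v ∧ e = {u, v}) ∧
          ∀ e ∈ P, ∀ f ∈ P, e ≠ f → Disjoint e f) ∧
        ∀ Q : Finset (Finset V),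
          ((∀ e ∈ Q, ∃ u v, Gᶜ.Adj u v ∧ e = {u, v}) ∧
            ∀ e ∈ Q, ∀ f ∈ Q, e ≠ f → Disjoint e f) → Q.card ≤ P.card := by
    obtain ⟨P, hPmem, hmax⟩ := Finset.exists_max_image
      (univ.filter (fun P : Finset (Finset V) =>
        (∀ e ∈ P, ∃ u v, Gᶜ.Adj u v ∧ e = {u, v}) ∧
          ∀ e ∈ P, ∀ f ∈ P, e ≠ f → Disjoint e f)) Finset.card
      ⟨∅, by simp⟩
    rw [mem_filter] at hPmem
    exact ⟨P, hPmem.2, fun Q hQ => hmax Q (by simp only [mem_filter, mem_univ, true_and]; exact hQ)⟩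
  set M : Finset V := P.biUnion (fun e => e) with hM
  set D : Finset V := univ \ M with hDdef
  have hDnot : ∀ x ∈ D, ∀ e ∈ P, x ∉ e := by
    intro x hx e he hxe
    rw [hDdef, mem_sdiff] at hx
    exact hx.2 (mem_biUnion.mpr ⟨e, he, hxe⟩)
  have hMD : ∀ e ∈ P, ∀ x ∈ e, x ∉ D := fun e he x hx hxD => hDnot x hxD e he hx
  -- counting
  have hMcard : M.card = 2 * P.card := by
    have hsum : ∀ e ∈ P, e.card = 2 := by
      intro e he
      obtain ⟨u, v, huv, rfl⟩ := hPgood.1 e he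
      exact card_pair huv.ne
    rw [hM, card_biUnion (fun e he f hf hef => hPgood.2 e he f hf hef),
      Finset.sum_congr rfl hsum, sum_const, smul_eq_mul, mul_comm]
  have hVcard : Fintype.card V = 2 * P.card + D.card := by
    have h1 : D.card = Fintype.card V - M.card := by
      rw [hDdef, card_sdiff_of_subset (subset_univ M), card_univ]
    have h2 : M.card ≤ Fintype.card V := by
      rw [← card_univ]; exact card_le_univ M
    omega
  -- D is a clique in G
  have hDadj : ∀ u ∈ D, ∀ w ∈ D, u ≠ w → G.Adj u w := by
    intro u hu w hw hne
    by_contra hg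
    have hcadj : Gᶜ.Adj u w := ⟨hne, hg⟩
    have hnotmem : ({u, w} : Finset V) ∉ P := fun hmem => hDnot u hu _ hmem (by simp)
    have hQ2 : ∀ e ∈ insert {u, w} P, ∀ f ∈ insert {u, w} P, e ≠ f → Disjoint e f := by
      have hdisj : ∀ f ∈ P, Disjoint ({u, w} : Finset V) f := by
        intro f hfP
        rw [disjoint_left]
        intro x hx
        rw [mem_insert, mem_singleton] at hx
        rcases hx with rfl | rfl
        · exact hDnot x hu f hfP
        · exact hDnot x hw f hfP
      intro e he f hf hef
      rw [mem_insert] at he hf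
      rcases he with rfl | he <;> rcases hf with rfl | hf
      · exact absurd rfl hef
      · exact hdisj f hf
      · exact (hdisj e he).symm
      · exact hPgood.2 e he f hf hef
    have hQ1 : ∀ e ∈ insert {u, w} P, ∃ a b, Gᶜ.Adj a b ∧ e = {a, b} := by
      intro e he
      rw [mem_insert] at he
      rcases he with rfl | he
      · exact ⟨u, w, hcadj, rfl⟩
      · exact hPgood.1 e he
    have := hPmax _ ⟨hQ1, hQ2⟩
    rw [card_insert_of_notMem hnotmem] at this
    omega
  -- every matched pair has a "full" endpoint adjacent (in G) to everything in D
  have hfull : ∀ e ∈ P, ∃ x ∈ e, ∀ w ∈ D, G.Adj x w := by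
    intro e he
    obtain ⟨x, y, hxy, rfl⟩ := hPgood.1 e he
    by_contra hcon
    push_neg at hcon
    obtain ⟨a, ha, hxa⟩ := hcon x (by simp)
    obtain ⟨b, hb, hyb⟩ := hcon y (by simp)
    have hxD : x ∉ D := hMD _ he x (by simp)
    have hyD : y ∉ D := hMD _ he y (by simp)
    have hxa' : Gᶜ.Adj x a := ⟨fun h => hxD (h ▸ ha), hxa⟩
    have hyb' : Gᶜ.Adj y b := ⟨fun h => hyD (h ▸ hb), hyb⟩
    by_cases hab : a = b
    · subst hab
      exact elim3 h3K1 hxy hxa' hyb'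
    · have hxnotf : ∀ f ∈ P, f ≠ {x, y} → x ∉ f := fun f hf hne hxf =>
        disjoint_left.mp (hPgood.2 f hf _ he hne) hxf (by simp)
      have hynotf : ∀ f ∈ P, f ≠ {x, y} → y ∉ f := fun f hf hne hyf =>
        disjoint_left.mp (hPgood.2 f hf _ he hne) hyf (by simp)
      have hanotf : ∀ f ∈ P, a ∉ f := fun f hf => hDnot a ha f hf
      have hbnotf : ∀ f ∈ P, b ∉ f := fun f hf => hDnot b hb f hf
      have hxy' : x ≠ y := hxy.ne
      have hxane : x ≠ a := hxa'.ne
      have hybne : y ≠ b := hyb'.ne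
      have hxb : x ≠ b := fun h => hxD (h ▸ hb)
      have hya : y ≠ a := fun h => hyD (h ▸ ha)
      set Q : Finset (Finset V) := insert {x, a} (insert {y, b} (P.erase {x, y})) with hQdef
      have hd1 : ∀ f ∈ P.erase {x, y}, Disjoint ({x, a} : Finset V) f := by
        intro f hf
        rw [mem_erase] at hf
        rw [disjoint_left]
        intro z hz
        rw [mem_insert, mem_singleton] at hz
        rcases hz with rfl | rfl
        · exact hxnotf f hf.2 hf.1
        · exact hanotf f hf.2
      have hd2 : ∀ f ∈ P.erase {x, y}, Disjoint ({y, b} : Finset V) f := by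
        intro f hf
        rw [mem_erase] at hf
        rw [disjoint_left]
        intro z hz
        rw [mem_insert, mem_singleton] at hz
        rcases hz with rfl | rfl
        · exact hynotf f hf.2 hf.1
        · exact hbnotf f hf.2
      have hd12 : Disjoint ({x, a} : Finset V) ({y, b} : Finset V) := by
        rw [disjoint_left]
        intro z hz hz2
        rw [mem_insert, mem_singleton] at hz hz2
        rcases hz with rfl | rfl <;> rcases hz2 with rfl | rfl
        · exact hxy' rfl
        · exact hxb rfl
        · exact hya rfl
        · exact hab rfl
      have hQ1 : ∀ e' ∈ Q, ∃ u v, Gᶜ.Adj u v ∧ e' = {u, v} := by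
        intro e' he'
        rw [hQdef, mem_insert, mem_insert] at he'
        rcases he' with rfl | rfl | he'
        · exact ⟨x, a, hxa', rfl⟩
        · exact ⟨y, b, hyb', rfl⟩
        · exact hPgood.1 e' (mem_erase.mp he').2
      have hQ2 : ∀ e' ∈ Q, ∀ f ∈ Q, e' ≠ f → Disjoint e' f := by
        intro e' he' f hf hef
        rw [hQdef, mem_insert, mem_insert] at he' hf
        rcases he' with rfl | rfl | he' <;> rcases hf with rfl | rfl | hf
        · exact absurd rfl hef
        · exact hd12
        · exact hd1 f hf
        · exact hd12.symm
        · exact absurd rfl hef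
        · exact hd2 f hf
        · exact (hd1 _ he').symm
        · exact (hd2 _ he').symm
        · exact hPgood.2 _ (mem_erase.mp he').2 _ (mem_erase.mp hf).2 hef
      have hm1 : ({y, b} : Finset V) ∉ P.erase {x, y} := fun h =>
        hbnotf _ (mem_erase.mp h).2 (by simp)
      have hm2 : ({x, a} : Finset V) ∉ insert {y, b} (P.erase {x, y}) := by
        rw [mem_insert]
        rintro (h | h)
        · have hx2 : x ∈ ({y, b} : Finset V) := h ▸ (by simp : x ∈ ({x, a} : Finset V))
          rw [mem_insert, mem_singleton] at hx2
          rcases hx2 with rfl | rfl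
          · exact hxy' rfl
          · exact hxb rfl
        · exact hanotf _ (mem_erase.mp h).2 (by simp)
      have hPpos : 0 < P.card := card_pos.mpr ⟨_, he⟩
      have hQcard : Q.card = P.card + 1 := by
        rw [hQdef, card_insert_of_notMem hm2, card_insert_of_notMem hm1,
          card_erase_of_mem he]
        omega
      have := hPmax Q ⟨hQ1, hQ2⟩
      omega
  -- D has at most 4 vertices
  have hD4 : D.card ≤ 4 := by
    by_contra h
    push_neg at h
    obtain ⟨s, hsD, hscard⟩ := exists_subset_card_eq (show 5 ≤ D.card by omega)
    refine hKfree s ⟨?_, hscard⟩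
    intro a ha b hb hne
    exact hDadj a (hsD (mem_coe.mp ha)) b (hsD (mem_coe.mp hb)) hne
  -- main counting bound
  have hram5 := ramsey 5 G h3K1 hKfree
  have hbound : P.card + D.card ≤ 7 := by
    rcases show D.card = 0 ∨ D.card = 1 ∨ D.card = 2 ∨ D.card = 3 ∨ D.card = 4 by omega with
      h0 | h1 | h2 | h3 | h4
    · omega
    · omega
    · -- D.card = 2 : P.card ≤ 5 via Ramsey R(3,3)
      have hP5 : P.card ≤ 5 := by
        choose g hg1 hg2 using hfull
        set F : Finset V := P.attach.image (fun e => g e.1 e.2) with hF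
        have hFcard : F.card = P.card := by
          rw [hF, card_image_of_injOn, card_attach]
          intro e1 he1 e2 he2 heq
          by_contra hne
          have hne' : (e1 : Finset V) ≠ (e2 : Finset V) := fun h => hne (Subtype.ext h)
          have heq' : g e1.1 e1.2 = g e2.1 e2.2 := heq
          exact disjoint_left.mp (hPgood.2 e1 e1.2 e2 e2.2 hne')
            (hg1 e1.1 e1.2) (heq' ▸ hg1 e2.1 e2.2)
        have hFmem : ∀ x ∈ F, (∀ w ∈ D, G.Adj x w) ∧ x ∉ D := by
          intro x hx
          rw [hF, mem_image] at hx
          obtain ⟨e, he, rfl⟩ := hx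
          exact ⟨hg2 e.1 e.2, hMD e.1 e.2 _ (hg1 e.1 e.2)⟩
        obtain ⟨p, q, hpq, hDeq⟩ := card_eq_two.mp h2
        have hpD : p ∈ D := by rw [hDeq]; simp
        have hqD : q ∈ D := by rw [hDeq]; simp
        have hI2 : (G.induce (↑F : Set V)).CliqueFree 3 := by
          intro s hs
          obtain ⟨a, b, c, hab, hac, hbc, rfl⟩ := card_eq_three.mp hs.2
          have hab' : G.Adj ↑a ↑b := hs.1 (by simp) (by simp) hab
          have hac' : G.Adj ↑a ↑c := hs.1 (by simp) (by simp) hac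
          have hbc' : G.Adj ↑b ↑c := hs.1 (by simp) (by simp) hbc
          have hcF : ∀ (x : ↥(↑F : Set V)), ∀ w ∈ (insert p {q} : Finset V), G.Adj ↑x w := by
            intro x w hw
            have hx : (↑x : V) ∈ F := mem_coe.mp x.2
            rw [mem_insert, mem_singleton] at hw
            rcases hw with rfl | rfl
            · exact (hFmem _ hx).1 w hpD
            · exact (hFmem _ hx).1 w hqD
          have c1 : G.IsNClique 1 {q} := SimpleGraph.isNClique_singleton.mpr rfl
          have c2 : G.IsNClique 2 (insert p {q}) := c1.insert (by
            intro z hz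
            rw [mem_singleton] at hz
            subst hz
            exact hDadj p hpD z hqD hpq)
          have c3 : G.IsNClique 3 (insert ↑c (insert p {q})) := c2.insert (hcF c)
          have c4 : G.IsNClique 4 (insert ↑b (insert ↑c (insert p {q}))) := c3.insert (by
            intro z hz
            rw [mem_insert] at hz
            rcases hz with rfl | hz
            · exact hbc'
            · exact hcF b z hz)
          refine hKfree (insert ↑a (insert ↑b (insert ↑c (insert p {q})))) (c4.insert ?_)
          intro z hz
          rw [mem_insert, mem_insert] at hz
          rcases hz with rfl | rfl | hz
          · exact hab'
          · exact hac'
          · exact hcF a z hz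
        have hram := ramsey 3 (G.induce (↑F : Set V))
          (by rw [compl_induce]; exact cliqueFree_induce h3K1 _) hI2
        have hcards : Fintype.card ↥(↑F : Set V) = F.card := by simp
        rw [hcards, hFcard] at hram
        omega
      omega
    · -- D.card = 3 : P.card ≤ 2
      have hDclique : G.IsNClique 3 D :=
        ⟨fun a ha b hb hne => hDadj a (mem_coe.mp ha) b (mem_coe.mp hb) hne, h3⟩
      have key : ∀ u v : V, u ∉ D → v ∉ D → u ≠ v → (∀ w ∈ D, G.Adj u w) →
          (∀ w ∈ D, G.Adj v w) → Gᶜ.Adj u v := by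
        intro u v huD hvD hne hu hv
        by_contra hc
        have huv : G.Adj u v := adj_of_not_compl hne hc
        have h4c : G.IsNClique 4 (insert v D) := hDclique.insert (fun w hw => hv w hw)
        refine hKfree (insert u (insert v D)) (h4c.insert ?_)
        intro w hw
        rw [mem_insert] at hw
        rcases hw with rfl | hw
        · exact huv
        · exact hu w hw
      have hP2 : P.card ≤ 2 := by
        by_contra hP
        push_neg at hP
        obtain ⟨s, hsP, hscard⟩ := exists_subset_card_eq (show 3 ≤ P.card by omega)
        obtain ⟨e1, e2, e3, h12, h13, h23, rfl⟩ := card_eq_three.mp hscard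
        have he1 : e1 ∈ P := hsP (by simp)
        have he2 : e2 ∈ P := hsP (by simp)
        have he3 : e3 ∈ P := hsP (by simp)
        obtain ⟨x1, hx1, ha1⟩ := hfull e1 he1
        obtain ⟨x2, hx2, ha2⟩ := hfull e2 he2
        obtain ⟨x3, hx3, ha3⟩ := hfull e3 he3
        have hne12 : x1 ≠ x2 := fun h =>
          disjoint_left.mp (hPgood.2 e1 he1 e2 he2 h12) hx1 (h ▸ hx2)
        have hne13 : x1 ≠ x3 := fun h =>
          disjoint_left.mp (hPgood.2 e1 he1 e3 he3 h13) hx1 (h ▸ hx3)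
        have hne23 : x2 ≠ x3 := fun h =>
          disjoint_left.mp (hPgood.2 e2 he2 e3 he3 h23) hx2 (h ▸ hx3)
        have hD1 : x1 ∉ D := hMD e1 he1 x1 hx1
        have hD2 : x2 ∉ D := hMD e2 he2 x2 hx2
        have hD3 : x3 ∉ D := hMD e3 he3 x3 hx3
        exact elim3 h3K1 (key x1 x2 hD1 hD2 hne12 ha1 ha2)
          (key x1 x3 hD1 hD3 hne13 ha1 ha3) (key x2 x3 hD2 hD3 hne23 ha2 ha3)
      omega
    · -- D.card = 4 : P = ∅
      have hP0 : P.card = 0 := by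
        by_contra hP
        obtain ⟨e, he⟩ := card_pos.mp (Nat.pos_of_ne_zero hP)
        obtain ⟨x, hxe, hxadj⟩ := hfull e he
        have hDclique : G.IsNClique 4 D :=
          ⟨fun a ha b hb hne => hDadj a (mem_coe.mp ha) b (mem_coe.mp hb) hne, h4⟩
        exact hKfree (insert x D) (hDclique.insert (fun b hb => hxadj b hb))
      omega
  -- build the coloring from P together with singletons of D
  set C : Finset (Finset V) := P ∪ D.image (fun v => {v}) with hC
  have hcov : ∀ v : V, ∃ c ∈ C, v ∈ c := by
    intro v
    by_cases hv : v ∈ D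
    · exact ⟨{v}, by rw [hC]; exact mem_union_right _ (mem_image_of_mem _ hv), by simp⟩
    · have hvM : v ∈ M := by
        rw [hDdef, mem_sdiff] at hv
        push_neg at hv
        exact hv (mem_univ v)
      rw [hM, mem_biUnion] at hvM
      obtain ⟨e, he, hve⟩ := hvM
      exact ⟨e, by rw [hC]; exact mem_union_left _ he, hve⟩
  have hind : ∀ c ∈ C, ∀ u ∈ c, ∀ w ∈ c, ¬G.Adj u w := by
    intro c hc u hu w hw hadj
    rw [hC, mem_union] at hc
    rcases hc with hc | hc
    · obtain ⟨x, y, hxy, rfl⟩ := hPgood.1 c hc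
      have hnadj : ¬G.Adj x y := hxy.2
      rw [mem_insert, mem_singleton] at hu hw
      rcases hu with rfl | rfl <;> rcases hw with rfl | rfl
      · exact hadj.ne rfl
      · exact hnadj hadj
      · exact hnadj hadj.symm
      · exact hadj.ne rfl
    · rw [mem_image] at hc
      obtain ⟨v, hv, rfl⟩ := hc
      rw [mem_singleton] at hu hw
      subst hu; subst hw
      exact hadj.ne rfl
  have hcC : C.card ≤ 7 := by
    have h1 := card_union_le P (D.image (fun v => ({v} : Finset V)))
    have h2 := card_image_le (f := fun v => ({v} : Finset V)) (s := D)
    rw [← hC] at h1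
    omega
  have hcol := colorable_of_cover G hcC hcov hind
  have h7 := hcol.chromaticNumber_le
  exact_mod_cast h7
end

section
/- Let G be a finite simple graph that is 3K₁-free and K₇-free. Then the chromatic number of G satisfies χ(G) ≤ 12. -/
open Finset
open scoped Classical
set_option linter.unusedSectionVars false

namespace ChromK7

variable {V : Type*} [Fintype V]

section Basics
variable (H : SimpleGraph V)

/-- `t` is an independent set of `H`. -/
def Ind (t : Finset V) : Prop := ∀ a ∈ t, ∀ b ∈ t, a ≠ b → ¬ H.Adj a b

/-- no independent subset of `s` has `k` or more elements -/
def NoInd (s : Finset V) (k : ℕ) : Prop := ∀ t ⊆ s, Ind H t → t.card < k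

/-- number of neighbours of `v` inside `t` -/
noncomputable def eIn (t : Finset V) (v : V) : ℕ := (t.filter (H.Adj v)).card

/-- non-neighbours of `v` inside `s` (other than `v`) -/
noncomputable def nn (s : Finset V) (v : V) : Finset V :=
  s.filter (fun w => ¬ H.Adj v w ∧ w ≠ v)

end Basics

variable {H : SimpleGraph V}

lemma tfree (hT : H.CliqueFree 3) {a b c : V} (hab : H.Adj a b) (hac : H.Adj a c)
    (hbc : H.Adj b c) : False :=
  hT {a, b, c} (SimpleGraph.is3Clique_triple_iff.2 ⟨hab, hac, hbc⟩)

lemma NoInd.mono {s s' : Finset V} {k : ℕ} (hss : s ⊆ s') (h : NoInd H s' k) :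
    NoInd H s k := fun t ht hind => h t (ht.trans hss) hind

lemma pair_ind {a b : V} (hab : ¬ H.Adj a b) : Ind H {a, b} := by
  intro x hx y hy hxy
  simp only [mem_insert, mem_singleton] at hx hy
  rcases hx with rfl | rfl <;> rcases hy with rfl | rfl <;>
    first
      | exact absurd rfl hxy
      | exact hab
      | exact fun h => hab h.symm

lemma exists_nonadj (hT : H.CliqueFree 3) {s : Finset V} (h : 3 ≤ s.card) :
    ∃ a ∈ s, ∃ b ∈ s, a ≠ b ∧ ¬ H.Adj a b := by
  obtain ⟨t, hts, ht3⟩ := Finset.exists_subset_card_eq h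
  obtain ⟨a, b, c, hab, hac, hbc, rfl⟩ := Finset.card_eq_three.1 ht3
  by_contra hcon
  push_neg at hcon
  have Hab : H.Adj a b := hcon a (hts (by simp)) b (hts (by simp)) hab
  have Hac : H.Adj a c := hcon a (hts (by simp)) c (hts (by simp)) hac
  have Hbc : H.Adj b c := hcon b (hts (by simp)) c (hts (by simp)) hbc
  exact tfree hT Hab Hac Hbc

lemma R1 (hT : H.CliqueFree 3) {s : Finset V} (h : NoInd H s 2) : s.card ≤ 2 := by
  by_contra hcon
  push_neg at hcon
  obtain ⟨a, ha, b, hb, hab, hnadj⟩ := exists_nonadj hT (s := s) (by omega)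
  have := h {a, b} (by
    intro x hx
    simp only [mem_insert, mem_singleton] at hx
    rcases hx with rfl | rfl <;> assumption) (pair_ind hnadj)
  rw [Finset.card_insert_of_notMem (by simpa using hab), Finset.card_singleton] at this
  omega


lemma ind_nbrs (hT : H.CliqueFree 3) (s : Finset V) (v : V) :
    Ind H (s.filter (H.Adj v)) := by
  intro a ha b hb hab h
  rw [mem_filter] at ha hb
  exact tfree hT ha.2 hb.2 h

lemma nbrs_card_le (hT : H.CliqueFree 3) {s : Finset V} {k : ℕ} (h : NoInd H s (k + 1))
    (v : V) : eIn H s v ≤ k := by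
  have := h (s.filter (H.Adj v)) (filter_subset _ _) (ind_nbrs hT s v)
  unfold eIn
  omega

lemma nn_subset {s : Finset V} {v : V} : nn H s v ⊆ s := filter_subset _ _

lemma NoInd.nonnbrs {s : Finset V} {k : ℕ} (h : NoInd H s (k + 1)) {v : V} (hv : v ∈ s) :
    NoInd H (nn H s v) k := by
  intro t ht hind
  have hvt : v ∉ t := fun hvt => by simpa using (mem_filter.1 (ht hvt)).2.2
  have hsub : insert v t ⊆ s := by
    intro x hx
    rcases mem_insert.1 hx with rfl | hx
    · exact hv
    · exact nn_subset (ht hx)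
  have hindt : Ind H (insert v t) := by
    intro a ha b hb hab hadj
    rcases mem_insert.1 ha with ha1 | ha1 <;> rcases mem_insert.1 hb with hb1 | hb1
    · exact hab (ha1.trans hb1.symm)
    · exact (mem_filter.1 (ht hb1)).2.1 (ha1 ▸ hadj)
    · exact (mem_filter.1 (ht ha1)).2.1 (hb1 ▸ hadj).symm
    · exact hind a ha1 b hb1 hab hadj
  have := h _ hsub hindt
  rw [card_insert_of_notMem hvt] at this
  omega

lemma card_split (s : Finset V) {v : V} (hv : v ∈ s) :
    s.card = 1 + eIn H s v + (nn H s v).card := by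
  classical
  have h1 : s = insert v (s.filter (H.Adj v) ∪ nn H s v) := by
    ext x
    simp only [mem_insert, mem_union, mem_filter, nn, eIn]
    constructor
    · intro hx
      by_cases hxv : x = v
      · exact Or.inl hxv
      · by_cases hadj : H.Adj v x
        · exact Or.inr (Or.inl ⟨hx, hadj⟩)
        · exact Or.inr (Or.inr ⟨hx, hadj, hxv⟩)
    · rintro (rfl | ⟨hx, _⟩ | ⟨hx, _⟩) <;> first | exact hv | exact hx
  have hdisj : Disjoint (s.filter (H.Adj v)) (nn H s v) := by
    rw [disjoint_left]
    intro x hx hx'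
    exact (mem_filter.1 hx').2.1 (mem_filter.1 hx).2
  have hvn : v ∉ s.filter (H.Adj v) ∪ nn H s v := by
    simp only [mem_union, mem_filter, nn]
    rintro (⟨_, h⟩ | ⟨_, _, h⟩)
    · exact H.irrefl h
    · exact h rfl
  conv_lhs => rw [h1]
  rw [card_insert_of_notMem hvn, card_union_of_disjoint hdisj]
  simp only [eIn]
  omega

lemma R2 (hT : H.CliqueFree 3) {s : Finset V} (h : NoInd H s 3) : s.card ≤ 5 := by
  rcases s.eq_empty_or_nonempty with rfl | ⟨v, hv⟩
  · simp
  have hsplit := card_split (H := H) s hv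
  have h1 : eIn H s v ≤ 2 := nbrs_card_le hT h v
  have h2 : (nn H s v).card ≤ 2 := R1 hT (h.nonnbrs hv)
  omega

/-- the set of ordered adjacent pairs inside `s` -/
noncomputable def ELT (H : SimpleGraph V) (s : Finset V) : Finset (V × V) :=
  (s ×ˢ s).filter (fun p => H.Adj p.1 p.2)

lemma ELT_card (s : Finset V) : (ELT H s).card = ∑ v ∈ s, eIn H s v := by
  rw [ELT, card_eq_sum_card_fiberwise (f := Prod.fst)
    (fun p hp => (mem_product.1 (mem_filter.1 hp).1).1)]
  refine Finset.sum_congr rfl (fun v hv => ?_)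
  rw [eIn]
  apply card_bij (fun p _ => p.2)
  · intro p hp
    simp only [ELT, mem_filter, mem_product] at hp
    rw [mem_filter]
    exact ⟨hp.1.1.2, hp.2 ▸ hp.1.2⟩
  · intro p hp q hq hpq
    simp only [mem_filter] at hp hq
    exact Prod.ext (hp.2.trans hq.2.symm) hpq
  · intro b hb
    rw [mem_filter] at hb
    exact ⟨(v, b), by simp [mem_filter, mem_product, hv, hb.1, hb.2], rfl⟩

lemma ELT_even (s : Finset V) : Even (ELT H s).card := by
  classical
  let e := Fintype.equivFin V
  have hsplit : ELT H s =
      (ELT H s).filter (fun p => e p.1 < e p.2) ∪ (ELT H s).filter (fun p => e p.2 < e p.1) := by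
    ext p
    simp only [mem_union, mem_filter]
    constructor
    · intro hp
      have hne : p.1 ≠ p.2 := (mem_filter.1 hp).2.ne
      have : e p.1 ≠ e p.2 := fun h => hne (e.injective h)
      rcases lt_or_gt_of_ne this with h | h
      · exact Or.inl ⟨hp, h⟩
      · exact Or.inr ⟨hp, h⟩
    · rintro (⟨hp, _⟩ | ⟨hp, _⟩) <;> exact hp
  have hdisj : Disjoint ((ELT H s).filter (fun p => e p.1 < e p.2))
      ((ELT H s).filter (fun p => e p.2 < e p.1)) := by
    rw [disjoint_left]
    intro p hp hp'
    exact absurd ((mem_filter.1 hp).2) (not_lt.2 (le_of_lt (mem_filter.1 hp').2))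
  have hcardeq : ((ELT H s).filter (fun p => e p.1 < e p.2)).card =
      ((ELT H s).filter (fun p => e p.2 < e p.1)).card := by
    apply card_bij (fun p _ => Prod.swap p)
    · intro p hp
      simp only [mem_filter, ELT, mem_product] at hp ⊢
      obtain ⟨⟨⟨h1, h2⟩, h3⟩, h4⟩ := hp
      exact ⟨⟨⟨h2, h1⟩, h3.symm⟩, h4⟩
    · intro p hp q hq hpq
      exact Prod.swap_injective hpq
    · intro p hp
      simp only [mem_filter, ELT, mem_product] at hp
      obtain ⟨⟨⟨h1, h2⟩, h3⟩, h4⟩ := hp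
      refine ⟨Prod.swap p, ?_, by simp⟩
      simp only [mem_filter, ELT, mem_product, Prod.fst_swap, Prod.snd_swap]
      exact ⟨⟨⟨h2, h1⟩, h3.symm⟩, h4⟩
  rw [hsplit, card_union_of_disjoint hdisj, ← hcardeq]
  exact ⟨_, rfl⟩

/-- an odd-regular graph piece on an odd number of vertices is impossible -/
lemma no_odd_regular {s : Finset V} {d : ℕ} (hreg : ∀ v ∈ s, eIn H s v = d)
    (hd : ¬ Even (d * s.card)) : False := by
  have h1 := ELT_even (H := H) s
  rw [ELT_card, Finset.sum_congr rfl hreg, Finset.sum_const, smul_eq_mul, mul_comm] at h1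
  exact hd h1

lemma R3 (hT : H.CliqueFree 3) {s : Finset V} (h : NoInd H s 4) : s.card ≤ 8 := by
  by_contra hcon
  push_neg at hcon
  obtain ⟨s₀, hs₀sub, hs₀⟩ := Finset.exists_subset_card_eq (show 9 ≤ s.card by omega)
  have h₀ : NoInd H s₀ 4 := h.mono hs₀sub
  have hreg : ∀ v ∈ s₀, eIn H s₀ v = 3 := by
    intro v hv
    have hle : eIn H s₀ v ≤ 3 := nbrs_card_le hT h₀ v
    have hnn : (nn H s₀ v).card ≤ 5 := R2 hT (h₀.nonnbrs hv)
    have hsplit := card_split (H := H) s₀ hv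
    omega
  exact no_odd_regular hreg (by rw [hs₀]; decide)

lemma R4 (hT : H.CliqueFree 3) {s : Finset V} (h : NoInd H s 5) : s.card ≤ 13 := by
  by_contra hcon
  push_neg at hcon
  obtain ⟨v, hv⟩ : s.Nonempty := card_pos.1 (by omega)
  have hsplit := card_split (H := H) s hv
  have h1 : eIn H s v ≤ 4 := nbrs_card_le hT h v
  have h2 : (nn H s v).card ≤ 8 := R3 hT (h.nonnbrs hv)
  omega

lemma R5 (hT : H.CliqueFree 3) {s : Finset V} (h : NoInd H s 6) : s.card ≤ 18 := by
  by_contra hcon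
  push_neg at hcon
  obtain ⟨s₀, hs₀sub, hs₀⟩ := Finset.exists_subset_card_eq (show 19 ≤ s.card by omega)
  have h₀ : NoInd H s₀ 6 := h.mono hs₀sub
  have hreg : ∀ v ∈ s₀, eIn H s₀ v = 5 := by
    intro v hv
    have hle : eIn H s₀ v ≤ 5 := nbrs_card_le hT h₀ v
    have hnn : (nn H s₀ v).card ≤ 13 := R4 hT (h₀.nonnbrs hv)
    have hsplit := card_split (H := H) s₀ hv
    omega
  exact no_odd_regular hreg (by rw [hs₀]; decide)


lemma s_eq_parts {s : Finset V} {v : V} (hv : v ∈ s) :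
    s = insert v (s.filter (H.Adj v) ∪ nn H s v) := by
  ext x
  simp only [mem_insert, mem_union, mem_filter, nn]
  constructor
  · intro hx
    by_cases hxv : x = v
    · exact Or.inl hxv
    · by_cases hadj : H.Adj v x
      · exact Or.inr (Or.inl ⟨hx, hadj⟩)
      · exact Or.inr (Or.inr ⟨hx, hadj, hxv⟩)
  · rintro (rfl | ⟨hx, _⟩ | ⟨hx, _⟩) <;> first | exact hv | exact hx

lemma v_not_parts {s : Finset V} (v : V) : v ∉ s.filter (H.Adj v) ∪ nn H s v := by
  simp only [mem_union, mem_filter, nn]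
  rintro (⟨_, h⟩ | ⟨_, _, h⟩)
  · exact H.irrefl h
  · exact h rfl

lemma parts_disj {s : Finset V} (v : V) :
    Disjoint (s.filter (H.Adj v)) (nn H s v) := by
  rw [disjoint_left]
  intro x hx hx'
  exact (mem_filter.1 hx').2.1 (mem_filter.1 hx).2

lemma eIn_union {A B : Finset V} (hd : Disjoint A B) (v : V) :
    eIn H (A ∪ B) v = eIn H A v + eIn H B v := by
  unfold eIn
  rw [filter_union, card_union_of_disjoint (disjoint_filter_filter hd)]

lemma eIn_singleton (u v : V) : eIn H {v} u = if H.Adj u v then 1 else 0 := by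
  unfold eIn
  by_cases h : H.Adj u v <;> simp [filter_singleton, h]

lemma eIn_eq_zero {t : Finset V} {u : V} (h : ∀ w ∈ t, ¬ H.Adj u w) : eIn H t u = 0 := by
  unfold eIn
  rw [card_eq_zero, filter_eq_empty_iff]
  exact h

/-- decomposition of neighbour counts along the partition at `v` -/
lemma eIn_parts {s : Finset V} {v : V} (hv : v ∈ s) (u : V) :
    eIn H s u = eIn H {v} u + eIn H (s.filter (H.Adj v)) u + eIn H (nn H s v) u := by
  conv_lhs => rw [s_eq_parts (H := H) hv]
  rw [insert_eq, eIn_union (by simp only [disjoint_singleton_left]; exact v_not_parts v),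
    eIn_union (parts_disj v)]
  omega

noncomputable def EB (H : SimpleGraph V) (A B : Finset V) : Finset (V × V) :=
  (A ×ˢ B).filter (fun p => H.Adj p.1 p.2)

lemma EB_rows (A B : Finset V) : (EB H A B).card = ∑ a ∈ A, eIn H B a := by
  rw [EB, card_eq_sum_card_fiberwise (f := Prod.fst)
    (fun p hp => (mem_product.1 (mem_filter.1 hp).1).1)]
  refine Finset.sum_congr rfl (fun a ha => ?_)
  rw [eIn]
  apply card_bij (fun p _ => p.2)
  · intro p hp
    simp only [mem_filter, mem_product] at hp
    rw [mem_filter]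
    exact ⟨hp.1.1.2, hp.2 ▸ hp.1.2⟩
  · intro p hp q hq hpq
    simp only [mem_filter] at hp hq
    exact Prod.ext (hp.2.trans hq.2.symm) hpq
  · intro b hb
    rw [mem_filter] at hb
    exact ⟨(a, b), by simp [mem_filter, mem_product, ha, hb.1, hb.2], rfl⟩

lemma EB_cols (A B : Finset V) : (EB H A B).card = ∑ b ∈ B, eIn H A b := by
  rw [EB, card_eq_sum_card_fiberwise (f := Prod.snd)
    (fun p hp => (mem_product.1 (mem_filter.1 hp).1).2)]
  refine Finset.sum_congr rfl (fun b hb => ?_)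
  rw [eIn]
  apply card_bij (fun p _ => p.1)
  · intro p hp
    simp only [mem_filter, mem_product] at hp
    rw [mem_filter]
    exact ⟨hp.1.1.1, (hp.2 ▸ hp.1.2 : H.Adj p.1 b).symm⟩
  · intro p hp q hq hpq
    simp only [mem_filter] at hp hq
    exact Prod.ext hpq (hp.2.trans hq.2.symm)
  · intro a ha
    rw [mem_filter] at ha
    exact ⟨(a, b), by simp [mem_filter, mem_product, hb, ha.1, ha.2.symm], rfl⟩

lemma Ind.insert' {t : Finset V} (hind : Ind H t) {v : V}
    (hv : ∀ w ∈ t, ¬ H.Adj v w) : Ind H (insert v t) := by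
  intro a ha b hb hab hadj
  rcases mem_insert.1 ha with ha1 | ha1 <;> rcases mem_insert.1 hb with hb1 | hb1
  · exact hab (ha1.trans hb1.symm)
  · exact hv b hb1 (ha1 ▸ hadj)
  · exact hv a ha1 (hb1 ▸ hadj).symm
  · exact hind a ha1 b hb1 hab hadj


lemma deg18 (hT : H.CliqueFree 3) {s : Finset V} (h : NoInd H s 6) (h18 : s.card = 18)
    {v : V} (hv : v ∈ s) : 4 ≤ eIn H s v ∧ eIn H s v ≤ 5 := by
  have h1 : eIn H s v ≤ 5 := nbrs_card_le hT h v
  have h2 : (nn H s v).card ≤ 13 := R4 hT (h.nonnbrs hv)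
  have := card_split (H := H) s hv
  omega

lemma aux4 (hT : H.CliqueFree 3) {s : Finset V} (h : NoInd H s 6) (h18 : s.card = 18)
    {v : V} (hv : v ∈ s) (h4 : eIn H s v = 4) :
    3 ≤ ((s.filter (H.Adj v)).filter (fun w => eIn H s w = 4)).card ∧
    ((nn H s v).filter (fun w => eIn H s w = 4)).card ≤ 1 := by
  set Nv := s.filter (H.Adj v) with hNvdef
  set s' := nn H s v with hs'def
  have hNvcard : Nv.card = 4 := h4
  have hs'card : s'.card = 13 := by
    have := card_split (H := H) s hv
    simp only [← hNvdef, ← hs'def] at this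
    omega
  have hNoInd' : NoInd H s' 5 := h.nonnbrs hv
  have hmem' : ∀ w ∈ s', w ∈ s ∧ ¬ H.Adj v w ∧ w ≠ v := by
    intro w hw
    have := mem_filter.1 hw
    exact ⟨this.1, this.2⟩
  have hvns' : v ∉ s' := fun hc => (hmem' v hc).2.2 rfl
  -- Step A : each z in s' has exactly 4 neighbours within s'
  have stepA : ∀ z ∈ s', eIn H s' z = 4 := by
    intro z hz
    have hupper : eIn H s' z ≤ 4 := by
      have hindt : Ind H (insert v (s'.filter (H.Adj z))) := by
        refine (ind_nbrs hT s' z).insert' ?_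
        intro w hw
        exact (hmem' w (filter_subset _ _ hw)).2.1
      have hsub : insert v (s'.filter (H.Adj z)) ⊆ s := by
        intro x hx
        rcases mem_insert.1 hx with rfl | hx
        · exact hv
        · exact (hmem' x (filter_subset _ _ hx)).1
      have := h _ hsub hindt
      rw [card_insert_of_notMem (fun hc => hvns' (filter_subset _ _ hc))] at this
      unfold eIn
      omega
    have hlower : 4 ≤ eIn H s' z := by
      have hno : NoInd H (nn H s' z) 4 := by
        intro t ht hind
        have hzt : z ∉ t := fun hc => by simpa using (mem_filter.1 (ht hc)).2.2
        have hvt : v ∉ t := fun hc => hvns' (nn_subset (ht hc))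
        have hvz : v ≠ z := fun hc => hvns' (hc ▸ hz)
        have hind2 : Ind H (insert z t) := by
          refine hind.insert' ?_
          intro w hw
          exact (mem_filter.1 (ht hw)).2.1
        have hind3 : Ind H (insert v (insert z t)) := by
          refine hind2.insert' ?_
          intro w hw
          rcases mem_insert.1 hw with rfl | hw
          · exact (hmem' w hz).2.1
          · exact (hmem' w (nn_subset (ht hw))).2.1
        have hsub : insert v (insert z t) ⊆ s := by
          intro x hx
          rcases mem_insert.1 hx with rfl | hx
          · exact hv
          rcases mem_insert.1 hx with rfl | hx
          · exact (hmem' x hz).1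
          · exact (hmem' x (nn_subset (ht hx))).1
        have := h _ hsub hind3
        rw [card_insert_of_notMem (by simp [hvz, hvt]), card_insert_of_notMem hzt] at this
        omega
      have hcard : (nn H s' z).card ≤ 8 := R3 hT hno
      have := card_split (H := H) s' hz
      omega
    omega
  -- neighbour counts
  have hrows : ∀ u ∈ Nv, eIn H s' u + 1 = eIn H s u ∧ 4 ≤ eIn H s u ∧ eIn H s u ≤ 5 := by
    intro u hu
    have hu' := mem_filter.1 hu
    have hparts := eIn_parts (H := H) hv u
    have h1 : eIn H {v} u = 1 := by
      rw [eIn_singleton, if_pos hu'.2.symm]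
    have h2 : eIn H Nv u = 0 := by
      apply eIn_eq_zero
      intro w hw hadj
      have hw' := mem_filter.1 hw
      exact tfree hT hu'.2 hw'.2 hadj
    have hb := deg18 hT h h18 hu'.1
    rw [← hNvdef, ← hs'def] at hparts
    omega
  have hcols : ∀ w ∈ s', eIn H Nv w + 4 = eIn H s w ∧ 4 ≤ eIn H s w ∧ eIn H s w ≤ 5 := by
    intro w hw
    have hparts := eIn_parts (H := H) hv w
    have h1 : eIn H {v} w = 0 := by
      rw [eIn_singleton, if_neg (fun hc => (hmem' w hw).2.1 hc.symm)]
    have hb := deg18 hT h h18 (hmem' w hw).1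
    rw [← hNvdef, ← hs'def] at hparts
    have := stepA w hw
    omega
  -- double counting
  set m := (Nv.filter (fun w => eIn H s w = 4)).card with hm
  set k := (s'.filter (fun w => eIn H s w = 4)).card with hk
  have hmn : (Nv.filter (fun w => ¬ eIn H s w = 4)).card = 4 - m ∧ m ≤ 4 := by
    have := card_filter_add_card_filter_not (s := Nv) (p := fun w => eIn H s w = 4)
    constructor <;> omega
  have hkn : (s'.filter (fun w => ¬ eIn H s w = 4)).card = 13 - k ∧ k ≤ 13 := by
    have := card_filter_add_card_filter_not (s := s') (p := fun w => eIn H s w = 4)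
    constructor <;> omega
  have hEr : (EB H Nv s').card = 3 * m + 4 * (4 - m) := by
    rw [EB_rows, ← sum_filter_add_sum_filter_not Nv (fun w => eIn H s w = 4)]
    have e1 : ∀ u ∈ Nv.filter (fun w => eIn H s w = 4), eIn H s' u = 3 := by
      intro u hu
      have h1 := hrows u (filter_subset _ _ hu)
      have h2 := (mem_filter.1 hu).2
      omega
    have e2 : ∀ u ∈ Nv.filter (fun w => ¬ eIn H s w = 4), eIn H s' u = 4 := by
      intro u hu
      have h1 := hrows u (filter_subset _ _ hu)
      have h2 := (mem_filter.1 hu).2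
      omega
    rw [Finset.sum_congr rfl e1, Finset.sum_congr rfl e2, sum_const, sum_const,
      smul_eq_mul, smul_eq_mul, hmn.1]
    omega
  have hEc : (EB H Nv s').card = 13 - k ∧ k ≤ 13 := by
    refine ⟨?_, hkn.2⟩
    rw [EB_cols, ← sum_filter_add_sum_filter_not s' (fun w => eIn H s w = 4)]
    have e1 : ∀ w ∈ s'.filter (fun w => eIn H s w = 4), eIn H Nv w = 0 := by
      intro w hw
      have h1 := hcols w (filter_subset _ _ hw)
      have h2 := (mem_filter.1 hw).2
      omega
    have e2 : ∀ w ∈ s'.filter (fun w => ¬ eIn H s w = 4), eIn H Nv w = 1 := by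
      intro w hw
      have h1 := hcols w (filter_subset _ _ hw)
      have h2 := (mem_filter.1 hw).2
      omega
    rw [Finset.sum_congr rfl e1, Finset.sum_congr rfl e2, sum_const, sum_const,
      smul_eq_mul, smul_eq_mul, hkn.1]
    omega
  constructor
  · omega
  · omega

lemma R4' (hT : H.CliqueFree 3) {s : Finset V} (h : NoInd H s 6) (h18 : s.card = 18)
    {v : V} (hv : v ∈ s) : eIn H s v = 5 := by
  have hb := deg18 hT h h18 hv
  by_contra hne
  have h4 : eIn H s v = 4 := by omega
  obtain ⟨h3le, -⟩ := aux4 hT h h18 hv h4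
  obtain ⟨t, hts, ht3⟩ := Finset.exists_subset_card_eq h3le
  obtain ⟨q1, q2, q3, h12, h13, h23, rfl⟩ := Finset.card_eq_three.1 ht3
  have hq : ∀ x ∈ ({q1, q2, q3} : Finset V), x ∈ s ∧ H.Adj v x ∧ eIn H s x = 4 := by
    intro x hx
    have := mem_filter.1 (hts hx)
    have h2 := mem_filter.1 this.1
    exact ⟨h2.1, h2.2, this.2⟩
  obtain ⟨hq1s, hq1a, hq14⟩ := hq q1 (by simp)
  obtain ⟨hq2s, hq2a, hq24⟩ := hq q2 (by simp)
  obtain ⟨hq3s, hq3a, hq34⟩ := hq q3 (by simp)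
  obtain ⟨-, hle1⟩ := aux4 hT h h18 hq1s hq14
  have hsub : ({q2, q3} : Finset V) ⊆ (nn H s q1).filter (fun w => eIn H s w = 4) := by
    intro x hx
    rcases mem_insert.1 hx with rfl | hx
    · refine mem_filter.2 ⟨mem_filter.2 ⟨hq2s, ?_, h12.symm⟩, hq24⟩
      intro hadj
      exact tfree hT hq1a hq2a hadj
    · rw [mem_singleton] at hx
      subst hx
      refine mem_filter.2 ⟨mem_filter.2 ⟨hq3s, ?_, h13.symm⟩, hq34⟩
      intro hadj
      exact tfree hT hq1a hq3a hadj
  have := card_le_card hsub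
  rw [card_insert_of_notMem (by simpa using h23), card_singleton] at this
  omega

lemma R6 (hT : H.CliqueFree 3) {s : Finset V} (h : NoInd H s 7) : s.card ≤ 24 := by
  by_contra hcon
  push_neg at hcon
  obtain ⟨s₀, hs₀sub, hs₀⟩ := Finset.exists_subset_card_eq (show 25 ≤ s.card by omega)
  have h₀ : NoInd H s₀ 7 := h.mono hs₀sub
  have hreg : ∀ v ∈ s₀, eIn H s₀ v = 6 := by
    intro v hv
    have hle : eIn H s₀ v ≤ 6 := nbrs_card_le hT h₀ v
    have hnn : (nn H s₀ v).card ≤ 18 := R5 hT (h₀.nonnbrs hv)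
    have hsplit := card_split (H := H) s₀ hv
    omega
  obtain ⟨v, hv⟩ : s₀.Nonempty := card_pos.1 (by omega)
  set Nv := s₀.filter (H.Adj v) with hNvdef
  set s' := nn H s₀ v with hs'def
  have hNvcard : Nv.card = 6 := hreg v hv
  have hs'card : s'.card = 18 := by
    have := card_split (H := H) s₀ hv
    have h6 := hreg v hv
    simp only [← hNvdef, ← hs'def] at this
    omega
  have hNoInd' : NoInd H s' 6 := h₀.nonnbrs hv
  have hmem' : ∀ w ∈ s', w ∈ s₀ ∧ ¬ H.Adj v w ∧ w ≠ v := by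
    intro w hw
    have := mem_filter.1 hw
    exact ⟨this.1, this.2⟩
  have hrows : ∀ u ∈ Nv, eIn H s' u = 5 := by
    intro u hu
    have hu' := mem_filter.1 hu
    have hparts := eIn_parts (H := H) hv u
    have h1 : eIn H {v} u = 1 := by
      rw [eIn_singleton, if_pos hu'.2.symm]
    have h2 : eIn H Nv u = 0 := by
      apply eIn_eq_zero
      intro w hw hadj
      exact tfree hT hu'.2 (mem_filter.1 hw).2 hadj
    have hd := hreg u hu'.1
    rw [← hNvdef, ← hs'def] at hparts
    omega
  have hcols : ∀ w ∈ s', eIn H Nv w = 1 := by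
    intro w hw
    have hparts := eIn_parts (H := H) hv w
    have h1 : eIn H {v} w = 0 := by
      rw [eIn_singleton, if_neg (fun hc => (hmem' w hw).2.1 hc.symm)]
    have hd := hreg w (hmem' w hw).1
    have h5 : eIn H s' w = 5 := R4' hT hNoInd' hs'card hw
    rw [← hNvdef, ← hs'def] at hparts
    omega
  have hEr : (EB H Nv s').card = 30 := by
    rw [EB_rows, Finset.sum_congr rfl hrows, sum_const, smul_eq_mul, hNvcard]
  have hEc : (EB H Nv s').card = 18 := by
    rw [EB_cols, Finset.sum_congr rfl hcols, sum_const, smul_eq_mul, hs'card, mul_one]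
  omega


/-- matchings encoded as involutions moving only along edges -/
def IsMatch (H : SimpleGraph V) (f : V → V) : Prop :=
  Function.Involutive f ∧ ∀ v, f v ≠ v → H.Adj v (f v)

noncomputable def mset (f : V → V) : Finset V := univ.filter (fun v => f v ≠ v)

lemma mem_mset {f : V → V} {v : V} : v ∈ mset f ↔ f v ≠ v := by simp [mset]

lemma exists_max_matching (H : SimpleGraph V) : ∃ f, IsMatch H f ∧
    ∀ g, IsMatch H g → (mset g).card ≤ (mset f).card := by
  classical
  have hne : (univ.filter (fun f : V → V => IsMatch H f)).Nonempty :=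
    ⟨id, by refine mem_filter.2 ⟨mem_univ _, ?_⟩; exact ⟨fun x => rfl, fun v hv => absurd rfl hv⟩⟩
  obtain ⟨f, hf, hmax⟩ := Finset.exists_max_image _ (fun f => (mset f).card) hne
  exact ⟨f, (mem_filter.1 hf).2, fun g hg => hmax g (mem_filter.2 ⟨mem_univ g, hg⟩)⟩

lemma aug_contra {f g : V → V}
    (hmax : ∀ g, IsMatch H g → (mset g).card ≤ (mset f).card)
    (hg : IsMatch H g) {x y : V} (hxy : x ≠ y)
    (hx : f x = x) (hy : f y = y) (hgx : g x ≠ x) (hgy : g y ≠ y)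
    (hrest : ∀ v, f v ≠ v → g v ≠ v) : False := by
  have hsub : insert x (insert y (mset f)) ⊆ mset g := by
    intro v hv
    rw [mem_mset]
    rcases mem_insert.1 hv with rfl | hv
    · exact hgx
    rcases mem_insert.1 hv with rfl | hv
    · exact hgy
    · exact hrest v (mem_mset.1 hv)
  have hxn : x ∉ insert y (mset f) := by
    simp only [mem_insert, mem_mset]
    rintro (rfl | hc)
    · exact hxy rfl
    · exact hc hx
  have hyn : y ∉ mset f := by
    rw [mem_mset]
    exact fun hc => hc hy
  have h1 := card_le_card hsub
  rw [card_insert_of_notMem hxn, card_insert_of_notMem hyn] at h1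
  have h2 := hmax g hg
  omega

/-- augmenting a single edge between two unmatched vertices -/
lemma aug1 {f : V → V} (hf : IsMatch H f)
    (hmax : ∀ g, IsMatch H g → (mset g).card ≤ (mset f).card)
    {x y : V} (hx : f x = x) (hy : f y = y) (hxy : x ≠ y)
    (hadj : H.Adj x y) : False := by
  classical
  set g := fun w => if w = x then y else if w = y then x else f w with hg
  have hgx : g x = y := by simp [hg]
  have hgy : g y = x := by simp [hg, hxy.symm]
  have hgo : ∀ w, w ≠ x → w ≠ y → g w = f w := by
    intro w h1 h2
    simp [hg, h1, h2]
  have hginv : Function.Involutive g := by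
    intro w
    by_cases h1 : w = x
    · subst h1; rw [hgx, hgy]
    by_cases h2 : w = y
    · subst h2; rw [hgy, hgx]
    have hfx : f w ≠ x := fun hc => h1 (by rw [← hx, ← hc, hf.1 w])
    have hfy : f w ≠ y := fun hc => h2 (by rw [← hy, ← hc, hf.1 w])
    rw [hgo w h1 h2, hgo (f w) hfx hfy, hf.1 w]
  have hgm : IsMatch H g := by
    refine ⟨hginv, fun v hv => ?_⟩
    by_cases h1 : v = x
    · subst h1; rw [hgx]; exact hadj
    by_cases h2 : v = y
    · subst h2; rw [hgy]; exact hadj.symm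
    · rw [hgo v h1 h2] at hv ⊢; exact hf.2 v hv
  refine aug_contra hmax hgm hxy hx hy (by rw [hgx]; exact hxy.symm) (by rw [hgy]; exact hxy)
    (fun v hv => ?_)
  have h1 : v ≠ x := fun hc => hv (by rw [hc, hx])
  have h2 : v ≠ y := fun hc => hv (by rw [hc, hy])
  rw [hgo v h1 h2]
  exact hv

/-- augmenting along a path x - a - f a - y (x, y unmatched) -/
lemma aug2 {f : V → V} (hf : IsMatch H f)
    (hmax : ∀ g, IsMatch H g → (mset g).card ≤ (mset f).card)
    {x y a : V} (hx : f x = x) (hy : f y = y) (hxy : x ≠ y)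
    (ha : f a ≠ a) (hxa : H.Adj x a) (hyb : H.Adj y (f a)) : False := by
  classical
  set b := f a with hb
  have hfb : f b = a := hf.1 a
  have hxa' : x ≠ a := fun hc => H.irrefl (hc ▸ hxa)
  have hyb2 : y ≠ b := fun hc => H.irrefl (hc ▸ hyb)
  have hya' : y ≠ a := fun hc => ha (by rw [hb, ← hc]; exact hy)
  have hxb : x ≠ b := by intro hc; apply hxa'; rw [← hfb, ← hc, hx]
  have hab : a ≠ b := fun hc => ha hc.symm
  set g := fun w => if w = x then a else if w = a then x else if w = y then b
    else if w = b then y else f w with hg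
  have hgx : g x = a := by simp [hg]
  have hga : g a = x := by simp [hg, hxa'.symm]
  have hgy : g y = b := by simp [hg, hxy.symm, hya']
  have hgb : g b = y := by simp [hg, hxb.symm, hab.symm, hyb2.symm]
  have hgo : ∀ w, w ≠ x → w ≠ a → w ≠ y → w ≠ b → g w = f w := by
    intro w h1 h2 h3 h4
    simp [hg, h1, h2, h3, h4]
  have hginv : Function.Involutive g := by
    intro w
    by_cases h1 : w = x
    · subst h1; rw [hgx, hga]
    by_cases h2 : w = a
    · subst h2; rw [hga, hgx]
    by_cases h3 : w = y
    · subst h3; rw [hgy, hgb]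
    by_cases h4 : w = b
    · subst h4; rw [hgb, hgy]
    have k1 : f w ≠ x := fun hc => h1 (by rw [← hx, ← hc, hf.1 w])
    have k2 : f w ≠ a := fun hc => h4 (by rw [← hf.1 w, hc, ← hb])
    have k3 : f w ≠ y := fun hc => h3 (by rw [← hy, ← hc, hf.1 w])
    have k4 : f w ≠ b := fun hc => h2 (by rw [← hf.1 w, hc, hfb])
    rw [hgo w h1 h2 h3 h4, hgo (f w) k1 k2 k3 k4, hf.1 w]
  have hgm : IsMatch H g := by
    refine ⟨hginv, fun v hv => ?_⟩
    by_cases h1 : v = x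
    · subst h1; rw [hgx]; exact hxa
    by_cases h2 : v = a
    · subst h2; rw [hga]; exact hxa.symm
    by_cases h3 : v = y
    · subst h3; rw [hgy]; exact hyb
    by_cases h4 : v = b
    · subst h4; rw [hgb]; exact hyb.symm
    · rw [hgo v h1 h2 h3 h4] at hv ⊢; exact hf.2 v hv
  refine aug_contra hmax hgm hxy hx hy (by rw [hgx]; exact fun hc => hxa' hc.symm)
    (by rw [hgy]; exact fun hc => hyb2 hc.symm) (fun v hv => ?_)
  have h1 : v ≠ x := fun hc => hv (by rw [hc, hx])
  have h3 : v ≠ y := fun hc => hv (by rw [hc, hy])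
  by_cases h2 : v = a
  · subst h2; rw [hga]; exact hxa'
  by_cases h4 : v = b
  · subst h4; rw [hgb]; exact hyb2
  · rw [hgo v h1 h2 h3 h4]; exact hv

/-- augmenting x - a₁ , (f a₁) - (f a₂) , a₂ - y (x, y unmatched, a₁ ≠ a₂ matched) -/
lemma aug3 {f : V → V} (hf : IsMatch H f)
    (hmax : ∀ g, IsMatch H g → (mset g).card ≤ (mset f).card)
    {x y a₁ a₂ : V} (hx : f x = x) (hy : f y = y) (hxy : x ≠ y) (ha12 : a₁ ≠ a₂)
    (ha1 : f a₁ ≠ a₁) (ha2 : f a₂ ≠ a₂)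
    (hxa : H.Adj x a₁) (hya : H.Adj y a₂) (hbb : H.Adj (f a₁) (f a₂)) : False := by
  classical
  by_cases hshare : a₂ = f a₁
  · exact aug2 hf hmax hx hy hxy ha1 hxa (hshare ▸ hya)
  set b₁ := f a₁ with hb1
  set b₂ := f a₂ with hb2
  have hfb1 : f b₁ = a₁ := hf.1 a₁
  have hfb2 : f b₂ = a₂ := hf.1 a₂
  -- distinctness
  have hxa1 : x ≠ a₁ := fun hc => H.irrefl (hc ▸ hxa)
  have hya2 : y ≠ a₂ := fun hc => H.irrefl (hc ▸ hya)
  have hxa2 : x ≠ a₂ := fun hc => ha2 (by rw [hb2, ← hc]; exact hx)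
  have hya1 : y ≠ a₁ := fun hc => ha1 (by rw [hb1, ← hc]; exact hy)
  have hxb1 : x ≠ b₁ := by intro hc; apply hxa1; rw [← hfb1, ← hc, hx]
  have hxb2 : x ≠ b₂ := by intro hc; apply hxa2; rw [← hfb2, ← hc, hx]
  have hyb1 : y ≠ b₁ := by intro hc; apply hya1; rw [← hfb1, ← hc, hy]
  have hyb2 : y ≠ b₂ := by intro hc; apply hya2; rw [← hfb2, ← hc, hy]
  have ha1b1 : a₁ ≠ b₁ := fun hc => ha1 hc.symm
  have ha2b2 : a₂ ≠ b₂ := fun hc => ha2 hc.symm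
  have ha2b1 : a₂ ≠ b₁ := hshare
  have ha1b2 : a₁ ≠ b₂ := by
    intro hc
    apply hshare
    rw [← hfb2, ← hc, ← hb1]
  have hb12 : b₁ ≠ b₂ := fun hc => ha12 (by rw [← hfb1, hc, hfb2])
  set g := fun w => if w = x then a₁ else if w = a₁ then x else if w = y then a₂
    else if w = a₂ then y else if w = b₁ then b₂ else if w = b₂ then b₁ else f w with hg
  have hgx : g x = a₁ := by simp [hg]
  have hga1 : g a₁ = x := by simp [hg, hxa1.symm]
  have hgy : g y = a₂ := by simp [hg, hxy.symm, hya1]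
  have hga2 : g a₂ = y := by simp [hg, hxa2.symm, ha12.symm, hya2.symm]
  have hgb1 : g b₁ = b₂ := by simp [hg, hxb1.symm, ha1b1.symm, hyb1.symm, ha2b1.symm]
  have hgb2 : g b₂ = b₁ := by
    simp [hg, hxb2.symm, ha1b2.symm, hyb2.symm, ha2b2.symm, hb12.symm]
  have hgo : ∀ w, w ≠ x → w ≠ a₁ → w ≠ y → w ≠ a₂ → w ≠ b₁ → w ≠ b₂ → g w = f w := by
    intro w h1 h2 h3 h4 h5 h6
    simp [hg, h1, h2, h3, h4, h5, h6]
  have hginv : Function.Involutive g := by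
    intro w
    by_cases h1 : w = x
    · subst h1; rw [hgx, hga1]
    by_cases h2 : w = a₁
    · subst h2; rw [hga1, hgx]
    by_cases h3 : w = y
    · subst h3; rw [hgy, hga2]
    by_cases h4 : w = a₂
    · subst h4; rw [hga2, hgy]
    by_cases h5 : w = b₁
    · subst h5; rw [hgb1, hgb2]
    by_cases h6 : w = b₂
    · subst h6; rw [hgb2, hgb1]
    have k1 : f w ≠ x := fun hc => h1 (by rw [← hx, ← hc, hf.1 w])
    have k2 : f w ≠ a₁ := fun hc => h5 (by rw [← hf.1 w, hc, ← hb1])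
    have k3 : f w ≠ y := fun hc => h3 (by rw [← hy, ← hc, hf.1 w])
    have k4 : f w ≠ a₂ := fun hc => h6 (by rw [← hf.1 w, hc, ← hb2])
    have k5 : f w ≠ b₁ := fun hc => h2 (by rw [← hf.1 w, hc, hfb1])
    have k6 : f w ≠ b₂ := fun hc => h4 (by rw [← hf.1 w, hc, hfb2])
    rw [hgo w h1 h2 h3 h4 h5 h6, hgo (f w) k1 k2 k3 k4 k5 k6, hf.1 w]
  have hgm : IsMatch H g := by
    refine ⟨hginv, fun v hv => ?_⟩
    by_cases h1 : v = x
    · subst h1; rw [hgx]; exact hxa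
    by_cases h2 : v = a₁
    · subst h2; rw [hga1]; exact hxa.symm
    by_cases h3 : v = y
    · subst h3; rw [hgy]; exact hya
    by_cases h4 : v = a₂
    · subst h4; rw [hga2]; exact hya.symm
    by_cases h5 : v = b₁
    · subst h5; rw [hgb1]; exact hbb
    by_cases h6 : v = b₂
    · subst h6; rw [hgb2]; exact hbb.symm
    · rw [hgo v h1 h2 h3 h4 h5 h6] at hv ⊢; exact hf.2 v hv
  refine aug_contra hmax hgm hxy hx hy (by rw [hgx]; exact fun hc => hxa1 hc.symm)
    (by rw [hgy]; exact fun hc => hya2 hc.symm) (fun v hv => ?_)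
  have h1 : v ≠ x := fun hc => hv (by rw [hc, hx])
  have h3 : v ≠ y := fun hc => hv (by rw [hc, hy])
  by_cases h2 : v = a₁
  · subst h2; rw [hga1]; exact hxa1
  by_cases h4 : v = a₂
  · subst h4; rw [hga2]; exact hya2
  by_cases h5 : v = b₁
  · subst h5; rw [hgb1]; exact hb12.symm
  by_cases h6 : v = b₂
  · subst h6; rw [hgb2]; exact hb12
  · rw [hgo v h1 h2 h3 h4 h5 h6]; exact hv



lemma get3 (hT : H.CliqueFree 3) {t : Finset V} (h : 6 ≤ t.card) :
    ∃ a ∈ t, ∃ b ∈ t, ∃ c ∈ t, a ≠ b ∧ a ≠ c ∧ b ≠ c ∧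
      ¬ H.Adj a b ∧ ¬ H.Adj a c ∧ ¬ H.Adj b c := by
  by_contra hcon
  push_neg at hcon
  have hno : NoInd H t 3 := by
    intro t' ht' hind
    by_contra hc
    push_neg at hc
    obtain ⟨t'', ht''s, ht''⟩ := Finset.exists_subset_card_eq (show 3 ≤ t'.card by omega)
    obtain ⟨a, b, c, hab, hac, hbc, rfl⟩ := Finset.card_eq_three.1 ht''
    have hma : a ∈ t' := ht''s (by simp)
    have hmb : b ∈ t' := ht''s (by simp)
    have hmc : c ∈ t' := ht''s (by simp)
    have h1 : ¬ H.Adj a b := hind a hma b hmb hab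
    have h2 : ¬ H.Adj a c := hind a hma c hmc hac
    have h3 : ¬ H.Adj b c := hind b hmb c hmc hbc
    exact h3 (hcon a (ht' hma) b (ht' hmb) c (ht' hmc) hab hac hbc h1 h2)
  have := R2 hT hno
  omega

lemma Ind_singleton (v : V) : Ind H ({v} : Finset V) := by
  intro a ha b hb hab
  rw [mem_singleton] at ha hb
  exact absurd (ha.trans hb.symm) hab

lemma seven_contra (hI : ∀ t : Finset V, Ind H t → t.card ≤ 6)
    {v1 v2 v3 v4 v5 v6 v7 : V}
    (d12 : v1 ≠ v2) (d13 : v1 ≠ v3) (d14 : v1 ≠ v4) (d15 : v1 ≠ v5) (d16 : v1 ≠ v6)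
    (d17 : v1 ≠ v7)
    (d23 : v2 ≠ v3) (d24 : v2 ≠ v4) (d25 : v2 ≠ v5) (d26 : v2 ≠ v6) (d27 : v2 ≠ v7)
    (d34 : v3 ≠ v4) (d35 : v3 ≠ v5) (d36 : v3 ≠ v6) (d37 : v3 ≠ v7)
    (d45 : v4 ≠ v5) (d46 : v4 ≠ v6) (d47 : v4 ≠ v7)
    (d56 : v5 ≠ v6) (d57 : v5 ≠ v7)
    (d67 : v6 ≠ v7)
    (a12 : ¬ H.Adj v1 v2) (a13 : ¬ H.Adj v1 v3) (a14 : ¬ H.Adj v1 v4) (a15 : ¬ H.Adj v1 v5)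
    (a16 : ¬ H.Adj v1 v6) (a17 : ¬ H.Adj v1 v7)
    (a23 : ¬ H.Adj v2 v3) (a24 : ¬ H.Adj v2 v4) (a25 : ¬ H.Adj v2 v5) (a26 : ¬ H.Adj v2 v6)
    (a27 : ¬ H.Adj v2 v7)
    (a34 : ¬ H.Adj v3 v4) (a35 : ¬ H.Adj v3 v5) (a36 : ¬ H.Adj v3 v6) (a37 : ¬ H.Adj v3 v7)
    (a45 : ¬ H.Adj v4 v5) (a46 : ¬ H.Adj v4 v6) (a47 : ¬ H.Adj v4 v7)
    (a56 : ¬ H.Adj v5 v6) (a57 : ¬ H.Adj v5 v7)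
    (a67 : ¬ H.Adj v6 v7) : False := by
  have i7 : Ind H ({v7} : Finset V) := Ind_singleton v7
  have i6 : Ind H (insert v6 {v7}) := i7.insert' (by
    intro w hw
    rw [mem_singleton] at hw
    subst hw
    exact a67)
  have i5 : Ind H (insert v5 (insert v6 {v7})) := i6.insert' (by
    intro w hw
    simp only [mem_insert, mem_singleton] at hw
    rcases hw with rfl | rfl
    · exact a56
    · exact a57)
  have i4 : Ind H (insert v4 (insert v5 (insert v6 {v7}))) := i5.insert' (by
    intro w hw
    simp only [mem_insert, mem_singleton] at hw
    rcases hw with rfl | rfl | rfl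
    · exact a45
    · exact a46
    · exact a47)
  have i3 : Ind H (insert v3 (insert v4 (insert v5 (insert v6 {v7})))) := i4.insert' (by
    intro w hw
    simp only [mem_insert, mem_singleton] at hw
    rcases hw with rfl | rfl | rfl | rfl
    · exact a34
    · exact a35
    · exact a36
    · exact a37)
  have i2 : Ind H (insert v2 (insert v3 (insert v4 (insert v5 (insert v6 {v7}))))) :=
    i3.insert' (by
    intro w hw
    simp only [mem_insert, mem_singleton] at hw
    rcases hw with rfl | rfl | rfl | rfl | rfl
    · exact a23
    · exact a24
    · exact a25
    · exact a26
    · exact a27)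
  have i1 : Ind H (insert v1 (insert v2 (insert v3 (insert v4 (insert v5 (insert v6 {v7})))))) :=
    i2.insert' (by
    intro w hw
    simp only [mem_insert, mem_singleton] at hw
    rcases hw with rfl | rfl | rfl | rfl | rfl | rfl
    · exact a12
    · exact a13
    · exact a14
    · exact a15
    · exact a16
    · exact a17)
  have hcard : (insert v1 (insert v2 (insert v3 (insert v4 (insert v5 (insert v6
      ({v7} : Finset V))))))).card = 7 := by
    rw [card_insert_of_notMem (by simp [d12, d13, d14, d15, d16, d17]),
        card_insert_of_notMem (by simp [d23, d24, d25, d26, d27]),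
        card_insert_of_notMem (by simp [d34, d35, d36, d37]),
        card_insert_of_notMem (by simp [d45, d46, d47]),
        card_insert_of_notMem (by simp [d56, d57]),
        card_insert_of_notMem (by simp [d67]), card_singleton]
  have := hI _ i1
  omega

lemma big24 (hT : H.CliqueFree 3) (hI : ∀ t : Finset V, Ind H t → t.card ≤ 6)
    {f : V → V} (hf : IsMatch H f)
    (hmax : ∀ g, IsMatch H g → (mset g).card ≤ (mset f).card)
    {x y : V} (hxy : x ≠ y) (hx : f x = x) (hy : f y = y)
    (hUxy : ∀ v : V, f v = v → v = x ∨ v = y)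
    (hn : (univ : Finset V).card = 24) : False := by
  classical
  have hNI : NoInd H univ 7 := by
    intro t _ hind
    have := hI t hind
    omega
  have Fxy : ¬ H.Adj x y := fun h => aug1 hf hmax hx hy hxy h
  have hd6 : ∀ v : V, eIn H univ v ≤ 6 := fun v => hI _ (ind_nbrs hT univ v)
  have hd5 : ∀ v : V, 5 ≤ eIn H univ v := by
    intro v
    have h18 : (nn H univ v).card ≤ 18 := R5 hT (hNI.nonnbrs (mem_univ v))
    have := card_split (H := H) univ (mem_univ v)
    omega
  have hreg : ∀ v : V, eIn H univ v = 6 := by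
    intro v
    by_contra hne
    have h5 : eIn H univ v = 5 := by
      have := hd6 v
      have := hd5 v
      omega
    set s' := nn H univ v with hs'def
    have hs'card : s'.card = 18 := by
      have := card_split (H := H) univ (mem_univ v)
      rw [← hs'def] at this
      omega
    have hno6 : NoInd H s' 6 := hNI.nonnbrs (mem_univ v)
    set Nv := univ.filter (H.Adj v) with hNvdef
    have hNvcard : Nv.card = 5 := h5
    have hrows : ∀ u ∈ Nv, 4 ≤ eIn H s' u := by
      intro u hu
      have hu' := mem_filter.1 hu
      have hparts := eIn_parts (H := H) (mem_univ v) u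
      have h1 : eIn H {v} u = 1 := by rw [eIn_singleton, if_pos hu'.2.symm]
      have h2 : eIn H Nv u = 0 :=
        eIn_eq_zero (fun w hw hadj => tfree hT hu'.2 (mem_filter.1 hw).2 hadj)
      have := hd5 u
      rw [← hNvdef, ← hs'def] at hparts
      omega
    have hcols : ∀ w ∈ s', eIn H Nv w ≤ 1 := by
      intro w hw
      have hw' := mem_filter.1 hw
      have hparts := eIn_parts (H := H) (mem_univ v) w
      have h1 : eIn H {v} w = 0 := by
        rw [eIn_singleton, if_neg (fun hc => hw'.2.1 hc.symm)]
      have h5' : eIn H s' w = 5 := R4' hT hno6 hs'card hw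
      have := hd6 w
      rw [← hNvdef, ← hs'def] at hparts
      omega
    have hlow : 20 ≤ (EB H Nv s').card := by
      rw [EB_rows]
      have : ∑ _u ∈ Nv, 4 ≤ ∑ u ∈ Nv, eIn H s' u := sum_le_sum hrows
      rw [sum_const, hNvcard, smul_eq_mul] at this
      omega
    have hhigh : (EB H Nv s').card ≤ 18 := by
      rw [EB_cols]
      have : ∑ w ∈ s', eIn H Nv w ≤ ∑ _w ∈ s', 1 := sum_le_sum hcols
      rw [sum_const, hs'card, smul_eq_mul] at this
      omega
    omega
  -- neighbourhoods of x and y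
  set Nx := univ.filter (H.Adj x) with hNxdef
  set Ny := univ.filter (H.Adj y) with hNydef
  have hNx6 : Nx.card = 6 := hreg x
  have hNy6 : Ny.card = 6 := hreg y
  have hxNx : x ∉ Nx := fun hc => H.irrefl (mem_filter.1 hc).2
  have hxNy : x ∉ Ny := fun hc => Fxy ((mem_filter.1 hc).2).symm
  have hyNx : y ∉ Nx := fun hc => Fxy (mem_filter.1 hc).2
  have hyNy : y ∉ Ny := fun hc => H.irrefl (mem_filter.1 hc).2
  set Z := univ.filter (fun z => ¬ H.Adj x z ∧ ¬ H.Adj y z ∧ z ≠ x ∧ z ≠ y) with hZdef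
  have hsplitZ : ((({x, y} : Finset V) ∪ (Nx ∪ Ny)) ∪ Z) = univ := by
    ext z
    simp only [mem_union, mem_insert, mem_singleton, mem_filter, hNxdef, hNydef, hZdef,
      mem_univ, true_and, iff_true]
    by_cases h1 : z = x
    · exact Or.inl (Or.inl (Or.inl h1))
    by_cases h2 : z = y
    · exact Or.inl (Or.inl (Or.inr h2))
    by_cases h3 : H.Adj x z
    · exact Or.inl (Or.inr (Or.inl h3))
    by_cases h4 : H.Adj y z
    · exact Or.inl (Or.inr (Or.inr h4))
    · exact Or.inr ⟨h3, h4, h1, h2⟩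
  have hdisj1 : Disjoint ({x, y} : Finset V) (Nx ∪ Ny) := by
    rw [disjoint_left]
    intro z hz hz'
    simp only [mem_insert, mem_singleton] at hz
    rcases mem_union.1 hz' with h | h <;> rcases hz with rfl | rfl
    · exact hxNx h
    · exact hyNx h
    · exact hxNy h
    · exact hyNy h
  have hdisj2 : Disjoint (({x, y} : Finset V) ∪ (Nx ∪ Ny)) Z := by
    rw [disjoint_left]
    intro z hz hz'
    have hz'' := (mem_filter.1 hz').2
    rcases mem_union.1 hz with h | h
    · simp only [mem_insert, mem_singleton] at h
      rcases h with rfl | rfl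
      · exact hz''.2.2.1 rfl
      · exact hz''.2.2.2 rfl
    · rcases mem_union.1 h with h | h
      · exact hz''.1 (mem_filter.1 h).2
      · exact hz''.2.1 (mem_filter.1 h).2
  have hZcard : 2 + (Nx ∪ Ny).card + Z.card = 24 := by
    have h1 : ({x, y} : Finset V).card = 2 := by
      rw [card_insert_of_notMem (by simpa using hxy), card_singleton]
    calc 2 + (Nx ∪ Ny).card + Z.card
        = ({x, y} : Finset V).card + (Nx ∪ Ny).card + Z.card := by rw [h1]
      _ = (({x, y} : Finset V) ∪ (Nx ∪ Ny)).card + Z.card := by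
          rw [card_union_of_disjoint hdisj1]
      _ = ((({x, y} : Finset V) ∪ (Nx ∪ Ny)) ∪ Z).card := by
          rw [card_union_of_disjoint hdisj2]
      _ = 24 := by rw [hsplitZ]; exact hn
  have hinter : (Nx ∪ Ny).card + (Nx ∩ Ny).card = 12 := by
    have := card_union_add_card_inter Nx Ny
    omega
  have hZind : NoInd H Z 5 := by
    intro t ht hind
    have hxt : x ∉ t := fun hc => (mem_filter.1 (ht hc)).2.2.2.1 rfl
    have hyt : y ∉ t := fun hc => (mem_filter.1 (ht hc)).2.2.2.2 rfl
    have hind2 : Ind H (insert y t) := hind.insert' (fun w hw =>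
      (mem_filter.1 (ht hw)).2.2.1)
    have hind3 : Ind H (insert x (insert y t)) := hind2.insert' (by
      intro w hw
      rcases mem_insert.1 hw with rfl | hw
      · exact Fxy
      · exact (mem_filter.1 (ht hw)).2.1)
    have := hI _ hind3
    rw [card_insert_of_notMem (by simp [hxy, hxt]), card_insert_of_notMem hyt] at this
    omega
  have hcxy : (Nx ∩ Ny).card ≤ 3 := by
    have := R4 hT hZind
    omega
  -- matched neighbours and their partners
  have hmatched : ∀ a : V, H.Adj x a ∨ H.Adj y a → f a ≠ a := by
    intro a hor ha
    rcases hUxy a ha with rfl | rfl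
    · rcases hor with h | h
      · exact H.irrefl h
      · exact Fxy h.symm
    · rcases hor with h | h
      · exact Fxy h
      · exact H.irrefl h
  have hc1 : ∀ a : V, H.Adj x a ∨ H.Adj y a → ¬ H.Adj x (f a) ∧ ¬ H.Adj y (f a) := by
    intro a hor
    have ha := hmatched a hor
    have hafa : H.Adj a (f a) := hf.2 a ha
    constructor
    · intro hxf
      rcases hor with h | h
      · exact tfree hT h hxf hafa
      · exact aug2 hf hmax hy hx hxy.symm ha h hxf
    · intro hyf
      rcases hor with h | h
      · exact aug2 hf hmax hx hy hxy ha h hyf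
      · exact tfree hT h hyf hafa
  have hc2 : ∀ a₁ a₂ : V, H.Adj x a₁ → H.Adj y a₂ → a₁ ≠ a₂ → ¬ H.Adj (f a₁) (f a₂) := by
    intro a₁ a₂ h1 h2 h12 hadj
    exact aug3 hf hmax hx hy hxy h12 (hmatched a₁ (Or.inl h1)) (hmatched a₂ (Or.inr h2))
      h1 h2 hadj
  have hfnex : ∀ a : V, H.Adj x a ∨ H.Adj y a → f a ≠ x ∧ f a ≠ y := by
    intro a hor
    constructor
    · intro hc
      have haa : a = x := by rw [← hf.1 a, hc, hx]
      subst haa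
      rcases hor with h | h
      · exact H.irrefl h
      · exact Fxy h.symm
    · intro hc
      have haa : a = y := by rw [← hf.1 a, hc, hy]
      subst haa
      rcases hor with h | h
      · exact Fxy h
      · exact H.irrefl h
  have hfinj : Function.Injective f := hf.1.injective
  by_cases hc0 : (Nx ∩ Ny).card = 0
  · -- no common neighbours
    have hNxNy : ∀ a, a ∈ Nx → a ∉ Ny := by
      intro a ha hay
      have hmem : a ∈ Nx ∩ Ny := mem_inter.2 ⟨ha, hay⟩
      rw [card_eq_zero] at hc0
      rw [hc0] at hmem
      exact absurd hmem (notMem_empty a)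
    have hBx : 6 ≤ (Nx.image f).card := by
      rw [card_image_of_injective Nx hfinj, hNx6]
    obtain ⟨i1, hi1, i2, hi2, i3, hi3, e12, e13, e23, n12, n13, n23⟩ := get3 hT hBx
    have hBy : 3 ≤ (Ny.image f).card := by
      rw [card_image_of_injective Ny hfinj, hNy6]
      omega
    obtain ⟨j1, hj1, j2, hj2, ej, nj⟩ := exists_nonadj hT hBy
    obtain ⟨a1, ha1, rfl⟩ := mem_image.1 hi1
    obtain ⟨a2, ha2, rfl⟩ := mem_image.1 hi2
    obtain ⟨a3, ha3, rfl⟩ := mem_image.1 hi3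
    obtain ⟨b1, hb1, rfl⟩ := mem_image.1 hj1
    obtain ⟨b2, hb2, rfl⟩ := mem_image.1 hj2
    have hxa1 : H.Adj x a1 := (mem_filter.1 ha1).2
    have hxa2 : H.Adj x a2 := (mem_filter.1 ha2).2
    have hxa3 : H.Adj x a3 := (mem_filter.1 ha3).2
    have hyb1 : H.Adj y b1 := (mem_filter.1 hb1).2
    have hyb2 : H.Adj y b2 := (mem_filter.1 hb2).2
    have hab11 : a1 ≠ b1 := fun hc => hNxNy a1 ha1 (hc ▸ hb1)
    have hab12 : a1 ≠ b2 := fun hc => hNxNy a1 ha1 (hc ▸ hb2)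
    have hab21 : a2 ≠ b1 := fun hc => hNxNy a2 ha2 (hc ▸ hb1)
    have hab22 : a2 ≠ b2 := fun hc => hNxNy a2 ha2 (hc ▸ hb2)
    have hab31 : a3 ≠ b1 := fun hc => hNxNy a3 ha3 (hc ▸ hb1)
    have hab32 : a3 ≠ b2 := fun hc => hNxNy a3 ha3 (hc ▸ hb2)
    exact seven_contra hI hxy
      ((hfnex a1 (Or.inl hxa1)).1.symm) ((hfnex a2 (Or.inl hxa2)).1.symm)
      ((hfnex a3 (Or.inl hxa3)).1.symm) ((hfnex b1 (Or.inr hyb1)).1.symm)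
      ((hfnex b2 (Or.inr hyb2)).1.symm)
      ((hfnex a1 (Or.inl hxa1)).2.symm) ((hfnex a2 (Or.inl hxa2)).2.symm)
      ((hfnex a3 (Or.inl hxa3)).2.symm) ((hfnex b1 (Or.inr hyb1)).2.symm)
      ((hfnex b2 (Or.inr hyb2)).2.symm)
      e12 e13 (fun hc => hab11 (hfinj hc)) (fun hc => hab12 (hfinj hc))
      e23 (fun hc => hab21 (hfinj hc)) (fun hc => hab22 (hfinj hc))
      (fun hc => hab31 (hfinj hc)) (fun hc => hab32 (hfinj hc))
      ej
      Fxy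
      ((hc1 a1 (Or.inl hxa1)).1) ((hc1 a2 (Or.inl hxa2)).1) ((hc1 a3 (Or.inl hxa3)).1)
      ((hc1 b1 (Or.inr hyb1)).1) ((hc1 b2 (Or.inr hyb2)).1)
      ((hc1 a1 (Or.inl hxa1)).2) ((hc1 a2 (Or.inl hxa2)).2) ((hc1 a3 (Or.inl hxa3)).2)
      ((hc1 b1 (Or.inr hyb1)).2) ((hc1 b2 (Or.inr hyb2)).2)
      n12 n13 (hc2 a1 b1 hxa1 hyb1 hab11) (hc2 a1 b2 hxa1 hyb2 hab12)
      n23 (hc2 a2 b1 hxa2 hyb1 hab21) (hc2 a2 b2 hxa2 hyb2 hab22)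
      (hc2 a3 b1 hxa3 hyb1 hab31) (hc2 a3 b2 hxa3 hyb2 hab32)
      nj
  · -- at least one common neighbour a0
    obtain ⟨a0, ha0⟩ := card_pos.1 (show 0 < (Nx ∩ Ny).card by omega)
    have ha0x : H.Adj x a0 := (mem_filter.1 (mem_inter.1 ha0).1).2
    have ha0y : H.Adj y a0 := (mem_filter.1 (mem_inter.1 ha0).2).2
    have hsdx : 3 ≤ ((Nx \ Ny).image f).card := by
      rw [card_image_of_injective _ hfinj]
      have := card_sdiff_add_card_inter Nx Ny
      omega
    have hsdy : 3 ≤ ((Ny \ Nx).image f).card := by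
      rw [card_image_of_injective _ hfinj]
      have := card_sdiff_add_card_inter Ny Nx
      rw [inter_comm] at this
      omega
    obtain ⟨i1, hi1, i2, hi2, ei, ni⟩ := exists_nonadj hT hsdx
    obtain ⟨j1, hj1, j2, hj2, ej, nj⟩ := exists_nonadj hT hsdy
    obtain ⟨a1, ha1, rfl⟩ := mem_image.1 hi1
    obtain ⟨a2, ha2, rfl⟩ := mem_image.1 hi2
    obtain ⟨b1, hb1, rfl⟩ := mem_image.1 hj1
    obtain ⟨b2, hb2, rfl⟩ := mem_image.1 hj2
    have ha1' := mem_sdiff.1 ha1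
    have ha2' := mem_sdiff.1 ha2
    have hb1' := mem_sdiff.1 hb1
    have hb2' := mem_sdiff.1 hb2
    have hxa1 : H.Adj x a1 := (mem_filter.1 ha1'.1).2
    have hxa2 : H.Adj x a2 := (mem_filter.1 ha2'.1).2
    have hyb1 : H.Adj y b1 := (mem_filter.1 hb1'.1).2
    have hyb2 : H.Adj y b2 := (mem_filter.1 hb2'.1).2
    have hab11 : a1 ≠ b1 := fun hc => ha1'.2 (hc ▸ hb1'.1)
    have hab12 : a1 ≠ b2 := fun hc => ha1'.2 (hc ▸ hb2'.1)
    have hab21 : a2 ≠ b1 := fun hc => ha2'.2 (hc ▸ hb1'.1)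
    have hab22 : a2 ≠ b2 := fun hc => ha2'.2 (hc ▸ hb2'.1)
    have ha10 : a1 ≠ a0 := fun hc => ha1'.2 (hc ▸ (mem_inter.1 ha0).2)
    have ha20 : a2 ≠ a0 := fun hc => ha2'.2 (hc ▸ (mem_inter.1 ha0).2)
    have hb10 : a0 ≠ b1 := fun hc => hb1'.2 (hc ▸ (mem_inter.1 ha0).1)
    have hb20 : a0 ≠ b2 := fun hc => hb2'.2 (hc ▸ (mem_inter.1 ha0).1)
    exact seven_contra hI hxy
      ((hfnex a1 (Or.inl hxa1)).1.symm) ((hfnex a2 (Or.inl hxa2)).1.symm)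
      ((hfnex b1 (Or.inr hyb1)).1.symm) ((hfnex b2 (Or.inr hyb2)).1.symm)
      ((hfnex a0 (Or.inl ha0x)).1.symm)
      ((hfnex a1 (Or.inl hxa1)).2.symm) ((hfnex a2 (Or.inl hxa2)).2.symm)
      ((hfnex b1 (Or.inr hyb1)).2.symm) ((hfnex b2 (Or.inr hyb2)).2.symm)
      ((hfnex a0 (Or.inl ha0x)).2.symm)
      ei (fun hc => hab11 (hfinj hc)) (fun hc => hab12 (hfinj hc))
      (fun hc => ha10 (hfinj hc))
      (fun hc => hab21 (hfinj hc)) (fun hc => hab22 (hfinj hc))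
      (fun hc => ha20 (hfinj hc))
      ej (fun hc => hb10 (hfinj hc).symm) (fun hc => hb20 (hfinj hc).symm)
      Fxy
      ((hc1 a1 (Or.inl hxa1)).1) ((hc1 a2 (Or.inl hxa2)).1)
      ((hc1 b1 (Or.inr hyb1)).1) ((hc1 b2 (Or.inr hyb2)).1) ((hc1 a0 (Or.inl ha0x)).1)
      ((hc1 a1 (Or.inl hxa1)).2) ((hc1 a2 (Or.inl hxa2)).2)
      ((hc1 b1 (Or.inr hyb1)).2) ((hc1 b2 (Or.inr hyb2)).2) ((hc1 a0 (Or.inl ha0x)).2)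
      ni (hc2 a1 b1 hxa1 hyb1 hab11) (hc2 a1 b2 hxa1 hyb2 hab12)
      (hc2 a1 a0 hxa1 ha0y ha10)
      (hc2 a2 b1 hxa2 hyb1 hab21) (hc2 a2 b2 hxa2 hyb2 hab22)
      (hc2 a2 a0 hxa2 ha0y ha20)
      nj (fun h => hc2 a0 b1 ha0x hyb1 hb10 h.symm)
      (fun h => hc2 a0 b2 ha0x hyb2 hb20 h.symm)

theorem main (G : SimpleGraph V) (h3 : Gᶜ.CliqueFree 3) (h7 : G.CliqueFree 7) :
    G.chromaticNumber ≤ 12 := by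
  classical
  set H : SimpleGraph V := Gᶜ with hH
  have hT : H.CliqueFree 3 := h3
  have hI : ∀ t : Finset V, Ind H t → t.card ≤ 6 := by
    intro t hind
    by_contra hc
    push_neg at hc
    obtain ⟨t', ht's, ht'⟩ := Finset.exists_subset_card_eq (show 7 ≤ t.card by omega)
    refine h7 t' ⟨?_, ht'⟩
    intro a ha b hb hab
    have hna := hind a (ht's ha) b (ht's hb) hab
    by_contra hg
    exact hna ((SimpleGraph.compl_adj G a b).2 ⟨hab, hg⟩)
  have hNI : NoInd H univ 7 := by
    intro t _ hind
    have := hI t hind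
    omega
  have hn24 : (univ : Finset V).card ≤ 24 := R6 hT hNI
  obtain ⟨f, hf, hmax⟩ := exists_max_matching H
  set U : Finset V := univ.filter (fun v => f v = v) with hUdef
  have hmsetU : ∀ v : V, v ∈ mset f ↔ ¬ v ∈ U := by
    intro v
    simp [mset, hUdef]
  have hUD : U.card + (mset f).card = (univ : Finset V).card := by
    classical
    have h := card_filter_add_card_filter_not (s := (univ : Finset V))
      (p := fun v => f v = v)
    have h1 : mset f = univ.filter (fun v => ¬ f v = v) := by
      unfold mset
      apply filter_congr
      intro v _
      exact Iff.rfl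
    have h2 : U = univ.filter (fun v => f v = v) := hUdef
    rw [h1, h2]
    convert h using 2
  -- pairing count
  set e : V ≃ Fin (Fintype.card V) := Fintype.equivFin V with he
  set P : Finset V := (mset f).filter (fun v => e v < e (f v)) with hPdef
  set P' : Finset V := (mset f).filter (fun v => e (f v) < e v) with hP'def
  have hDsplit : mset f = P ∪ P' := by
    ext v
    simp only [hPdef, hP'def, mem_union, mem_filter]
    constructor
    · intro hv
      have hne : e v ≠ e (f v) := fun hc2 => (mem_mset.1 hv) (e.injective hc2).symm
      rcases lt_or_gt_of_ne hne with h | h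
      · exact Or.inl ⟨hv, h⟩
      · exact Or.inr ⟨hv, h⟩
    · rintro (⟨hv, -⟩ | ⟨hv, -⟩) <;> exact hv
  have hPdisj : Disjoint P P' := by
    rw [disjoint_left]
    intro v h1 h2
    have := (mem_filter.1 h1).2
    have := (mem_filter.1 h2).2
    omega
  have hPP' : P.card = P'.card := by
    apply card_bij (fun v _ => f v)
    · intro v hv
      rw [hPdef, mem_filter] at hv
      have hvm := mem_mset.1 hv.1
      rw [hP'def, mem_filter, mem_mset, hf.1 v]
      exact ⟨hvm.symm, hv.2⟩
    · intro v hv w hw hvw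
      exact hf.1.injective hvw
    · intro w hw
      rw [hP'def, mem_filter] at hw
      have hwm := mem_mset.1 hw.1
      refine ⟨f w, ?_, hf.1 w⟩
      rw [hPdef, mem_filter, mem_mset, hf.1 w]
      exact ⟨hwm.symm, hw.2⟩
  have hDcard : (mset f).card = 2 * P.card := by
    rw [hDsplit, card_union_of_disjoint hPdisj, hPP']
    omega
  -- U is independent
  have hUind : Ind H U := by
    intro a ha b hb hab hadj
    exact aug1 hf hmax (mem_filter.1 ha).2 (mem_filter.1 hb).2 hab hadj
  have hu6 : U.card ≤ 6 := hI U hUind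
  -- the coloring
  set c : V → Sym2 V := fun v => s(v, f v) with hcdef
  set T : Finset (Sym2 V) := univ.image c with hTdef
  have hcol : G.Colorable T.card := by
    have C : G.Coloring {z // z ∈ T} := SimpleGraph.Coloring.mk
      (fun v => ⟨c v, mem_image_of_mem c (mem_univ v)⟩)
      (by
        intro v w hvw hcc
        rw [Subtype.mk.injEq] at hcc
        have hcc' : s(v, f v) = s(w, f w) := hcc
        rcases Sym2.eq_iff.1 hcc' with ⟨h1, -⟩ | ⟨h1, h2⟩
        · exact G.irrefl (h1 ▸ hvw)
        · by_cases hww : f w = w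
          · rw [hww] at h1
            exact G.irrefl (h1 ▸ hvw)
          · have hadj : H.Adj w (f w) := hf.2 w hww
            rw [← h1] at hadj
            exact ((SimpleGraph.compl_adj G w v).1 hadj).2 hvw.symm)
    have := C.colorable
    rwa [Fintype.card_coe] at this
  have hTcard : T.card ≤ U.card + P.card := by
    have hTsub : T ⊆ U.image c ∪ P.image c := by
      intro z hz
      obtain ⟨v, -, rfl⟩ := mem_image.1 hz
      by_cases hvU : f v = v
      · exact mem_union_left _ (mem_image_of_mem c (mem_filter.2 ⟨mem_univ v, hvU⟩))
      · have hvD : v ∈ mset f := mem_mset.2 hvU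
        have hvPP : v ∈ P ∪ P' := hDsplit ▸ hvD
        rcases mem_union.1 hvPP with hvP | hvP'
        · exact mem_union_right _ (mem_image_of_mem c hvP)
        · have hfvP : f v ∈ P := by
            rw [hPdef, mem_filter, mem_mset, hf.1 v]
            exact ⟨fun hc => hvU hc.symm, (mem_filter.1 hvP').2⟩
          have hceq : c v = c (f v) := by
            show s(v, f v) = s(f v, f (f v))
            rw [hf.1 v, Sym2.eq_swap]
          exact mem_union_right _ (hceq ▸ mem_image_of_mem c hfvP)
    calc T.card ≤ (U.image c ∪ P.image c).card := card_le_card hTsub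
      _ ≤ (U.image c).card + (P.image c).card := card_union_le _ _
      _ ≤ U.card + P.card := Nat.add_le_add (card_image_le) (card_image_le)
  -- B : unmatched-avoiding endpoints
  set B : Finset V := (mset f).filter (fun b => ∀ z, f z = z → ¬ H.Adj z b) with hBdef
  have hPB : P.card ≤ B.card := by
    apply card_le_card_of_injOn (fun v => if v ∈ B then v else f v)
    · intro v hv
      by_cases hvB : v ∈ B
      · simpa [hvB]
      · simp only [hvB, if_false]
        have hvD : v ∈ mset f := (mem_filter.1 hv).1
        have hvm : f v ≠ v := mem_mset.1 hvD
        rw [hBdef, mem_filter] at hvB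
        push_neg at hvB
        obtain ⟨z, hz, hzadj⟩ := hvB hvD
        rw [hBdef, mem_coe, mem_filter, mem_mset, hf.1 v]
        refine ⟨fun hc => hvm hc.symm, ?_⟩
        intro z' hz' hadj
        by_cases hzz : z' = z
        · subst hzz
          exact tfree hT hzadj hadj (hf.2 v hvm)
        · exact aug2 hf hmax hz hz' (fun hc => hzz hc.symm) hvm hzadj hadj
    · intro v1 h1 v2 h2 heq
      by_cases hb1 : v1 ∈ B <;> by_cases hb2 : v2 ∈ B <;>
        simp only [hb1, hb2, if_true, if_false] at heq
      · exact heq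
      · exfalso
        have k1 := (mem_filter.1 h1).2
        have k2 := (mem_filter.1 h2).2
        rw [heq] at k1
        rw [hf.1 v2] at k1
        omega
      · exfalso
        have k1 := (mem_filter.1 h1).2
        have k2 := (mem_filter.1 h2).2
        rw [← heq] at k2
        rw [hf.1 v1] at k2
        omega
      · exact hf.1.injective heq
  have hBind : ∀ t ⊆ B, Ind H t → t.card + U.card ≤ 6 := by
    intro t ht hind
    have hdisj : Disjoint t U := by
      rw [disjoint_left]
      intro a hat haU
      have h1 := mem_mset.1 (mem_of_mem_filter a (ht hat))
      exact h1 (mem_filter.1 haU).2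
    have hindU : Ind H (t ∪ U) := by
      intro a ha b hb hab hadj
      rcases mem_union.1 ha with ha1 | ha1 <;> rcases mem_union.1 hb with hb1 | hb1
      · exact hind a ha1 b hb1 hab hadj
      · exact (mem_filter.1 (ht ha1)).2 b (mem_filter.1 hb1).2 hadj.symm
      · exact (mem_filter.1 (ht hb1)).2 a (mem_filter.1 ha1).2 hadj
      · exact hUind a ha1 b hb1 hab hadj
    have := hI (t ∪ U) hindU
    rw [card_union_of_disjoint hdisj] at this
    omega
  -- arithmetic case analysis
  have hs3 : U.card ≠ 3 ∨ B.card ≤ 8 := by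
    by_cases h : U.card = 3
    · refine Or.inr (R3 hT ?_)
      intro t ht hind
      have := hBind t ht hind
      omega
    · exact Or.inl h
  have hs4 : U.card ≠ 4 ∨ B.card ≤ 5 := by
    by_cases h : U.card = 4
    · refine Or.inr (R2 hT ?_)
      intro t ht hind
      have := hBind t ht hind
      omega
    · exact Or.inl h
  have hs5 : U.card ≠ 5 ∨ B.card ≤ 2 := by
    by_cases h : U.card = 5
    · refine Or.inr (R1 hT ?_)
      intro t ht hind
      have := hBind t ht hind
      omega
    · exact Or.inl h
  have hs6 : U.card ≠ 6 ∨ B.card = 0 := by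
    by_cases h : U.card = 6
    · refine Or.inr ?_
      rw [card_eq_zero]
      by_contra hne
      obtain ⟨b, hb⟩ := nonempty_iff_ne_empty.2 hne
      have hsing : Ind H {b} := by
        intro a ha b' hb' hab
        simp only [mem_singleton] at ha hb'
        exact absurd (ha.trans hb'.symm) hab
      have := hBind {b} (by simpa using hb) hsing
      simp at this
      omega
    · exact Or.inl h
  have hs2 : U.card ≠ 2 ∨ (univ : Finset V).card ≠ 24 := by
    by_cases h : U.card = 2
    · refine Or.inr ?_
      intro h24
      obtain ⟨xx, yy, hxxyy, hUeq⟩ := Finset.card_eq_two.1 h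
      have hxU : xx ∈ U := by rw [hUeq]; simp
      have hyU : yy ∈ U := by rw [hUeq]; simp
      refine big24 hT hI hf hmax hxxyy (mem_filter.1 hxU).2 (mem_filter.1 hyU).2 ?_ h24
      intro v hv
      have : v ∈ U := mem_filter.2 ⟨mem_univ v, hv⟩
      rw [hUeq] at this
      simpa using this
    · exact Or.inl h
  have hfinal : T.card ≤ 12 := by omega
  have hcol12 : G.Colorable 12 := hcol.mono hfinal
  have := hcol12.chromaticNumber_le
  exact_mod_cast this

end ChromK7


/-- If `G` is a finite simple graph that is `3K₁`-free (no independent set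
of size 3, i.e. its complement is triangle-free) and `K_7`-free, then
`χ(G) ≤ 12`. -/
theorem chromatic_bound_K7 (V : Type*) [Fintype V] (G : SimpleGraph V)
    (h3K1 : Gᶜ.CliqueFree 3) (hKfree : G.CliqueFree 7) :
    G.chromaticNumber ≤ 12 :=
  ChromK7.main G h3K1 hKfree
end
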